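/- arXiv:1711.07524 — 9 statements merged into one kernel-verified Lean document; each statement's English description precedes it below -/
import Mathlib

section
/- Let n ≥ 2. The maximum number of Hamiltonian paths of the complete graph K_n such that the union of every two distinct paths in the family contains a cycle of odd length equals the number of balanced bipartitions of the vertex set; that is, this maximum equals binom(n, (n−1)/2) when n is odd, and equals (1/2)·binom(n, n/2) when n is even. -/
open SimpleGraph

/-- `G` is (the edge graph of) a Hamiltonian path of the complete graph on `Fin n`:
it is the image of the path graph under a relabelling of the vertices. -/
def IsHamPathGraph {n : ℕ} (G : SimpleGraph (Fin n)) : Prop :=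
  ∃ σ : Fin n ≃ Fin n, G = (pathGraph n).map σ.toEmbedding

open SimpleGraph Walk

variable {V : Type*} {G : SimpleGraph V}

lemma path_length_one_of_edge_mem {x v : V} (p : G.Walk x v) (hp : p.IsPath)
    (he : s(v, x) ∈ p.edges) : p.length = 1 := by
  induction p with
  | nil => simp at he
  | @cons x y v h q ih =>
    rw [Walk.edges_cons, List.mem_cons] at he
    rcases he with he | he
    · have hvy : v = y := by
        rw [Sym2.eq_iff] at he
        rcases he with ⟨h1, h2⟩ | ⟨h1, h2⟩
        · exact h1.trans h2
        · exact h1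
      subst hvy
      have : q = Walk.nil := Walk.isPath_iff_eq_nil.mp hp.of_cons
      simp [this]
    · exfalso
      have hx : x ∈ q.support := Walk.snd_mem_support_of_mem_edges q he
      exact (Walk.cons_isPath_iff h q |>.mp hp).2 hx

lemma exists_odd_cycle_aux :
    ∀ n : ℕ, ∀ {v : V} (w : G.Walk v v), w.length ≤ n → Odd w.length →
    ∃ (u : V) (c : G.Walk u u), c.IsCycle ∧ Odd c.length := by
  intro n
  induction n with
  | zero => intro v w hl ho; rw [Nat.le_zero.mp hl] at ho; simp [Nat.odd_iff] at ho
  | succ n ih =>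
    intro v w hl ho
    classical
    cases w with
    | nil => simp [Nat.odd_iff] at ho
    | @cons _ x _ h p =>
      by_cases hnodup : p.support.Nodup
      · have hp : p.IsPath := Walk.IsPath.mk' hnodup
        by_cases he : s(v, x) ∈ p.edges
        · have := path_length_one_of_edge_mem p hp he
          rw [Walk.length_cons, this] at ho
          simp [Nat.odd_iff] at ho
        · exact ⟨v, Walk.cons h p, (Walk.cons_isCycle_iff p h).mpr ⟨hp, he⟩, ho⟩
      · obtain ⟨u, hu⟩ := List.exists_duplicate_iff_not_nodup.mpr hnodup
        have hcount : 2 ≤ p.support.count u := List.duplicate_iff_two_le_count.mp hu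
        have humem : u ∈ p.support := hu.mem
        have hmem2 : u ∈ (p.dropUntil u humem).support.tail := by
          by_contra hcon
          have hsupp : p.support
              = (p.takeUntil u humem).support ++ (p.dropUntil u humem).support.tail := by
            conv_lhs => rw [← p.take_spec humem]
            exact Walk.support_append _ _
          have hcount1 : (p.takeUntil u humem).support.count u = 1 :=
            p.count_support_takeUntil_eq_one humem
          rw [hsupp, List.count_append, hcount1, List.count_eq_zero_of_not_mem hcon] at hcount
          omega
        have hlen12 : (p.takeUntil u humem).length + (p.dropUntil u humem).length = p.length := by
          have h12 := congrArg Walk.length (p.take_spec humem)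
          rwa [Walk.length_append] at h12
        generalize hq2 : p.dropUntil u humem = q2 at hmem2 hlen12
        cases q2 with
        | nil => simp at hmem2
        | @cons _ y _ h3 q3 =>
          have hmem3 : u ∈ q3.support := by simpa using hmem2
          have hlen3 : (q3.takeUntil u hmem3).length + (q3.dropUntil u hmem3).length
              = q3.length := by
            have h12 := congrArg Walk.length (q3.take_spec hmem3)
            rwa [Walk.length_append] at h12
          refine ?_
          set a := (p.takeUntil u humem).length with ha
          set b := (q3.takeUntil u hmem3).length with hb
          set c := (q3.dropUntil u hmem3).length with hc
          have hlenl : (Walk.cons h3 (q3.takeUntil u hmem3)).length = 1 + b := by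
            rw [Walk.length_cons]; omega
          have hlenw' :
              (Walk.cons h ((p.takeUntil u humem).append (q3.dropUntil u hmem3))).length
              = 1 + (a + c) := by
            rw [Walk.length_cons, Walk.length_append]; omega
          have hwl : (Walk.cons h p).length = 1 + p.length := by rw [Walk.length_cons]; omega
          have hq2l : (Walk.cons h3 q3).length = 1 + q3.length := by
            rw [Walk.length_cons]; omega
          by_cases hol : Odd (1 + b)
          · refine ih (Walk.cons h3 (q3.takeUntil u hmem3)) ?_ (by rw [hlenl]; exact hol)
            rw [hlenl]; omega
          · refine ih (Walk.cons h ((p.takeUntil u humem).append (q3.dropUntil u hmem3)))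
              ?_ ?_
            · rw [hlenw']; omega
            · rw [hlenw']
              rw [Nat.odd_iff] at ho hol ⊢
              rw [hwl] at ho
              omega

lemma exists_odd_cycle {v : V} (w : G.Walk v v) (ho : Odd w.length) :
    ∃ (u : V) (c : G.Walk u u), c.IsCycle ∧ Odd c.length :=
  exists_odd_cycle_aux w.length w le_rfl ho
open SimpleGraph Walk Finset

variable {n : ℕ}

lemma range_even_card : ∀ m : ℕ, ((Finset.range m).filter (fun i => i % 2 = 0)).card = (m+1)/2 := by
  intro m
  induction m with
  | zero => simp
  | succ k ih =>
    rw [Finset.range_add_one, Finset.filter_insert]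
    by_cases hk : k % 2 = 0
    · rw [if_pos hk, Finset.card_insert_of_notMem (by simp), ih]; omega
    · rw [if_neg hk, ih]; omega

lemma fin_even_card (n : ℕ) :
    ((Finset.univ : Finset (Fin n)).filter (fun i => i.val % 2 = 0)).card = (n+1)/2 := by
  rw [← range_even_card n]
  apply Finset.card_bij (fun (i : Fin n) _ => i.val)
  · intro a ha
    simp only [Finset.mem_filter, Finset.mem_univ, true_and] at ha
    simp only [Finset.mem_filter, Finset.mem_range]
    exact ⟨a.isLt, ha⟩
  · intro a _ b _ hab; exact Fin.ext hab
  · intro b hb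
    simp only [Finset.mem_filter, Finset.mem_range] at hb
    exact ⟨⟨b, hb.1⟩, by simp only [Finset.mem_filter, Finset.mem_univ, true_and]; exact hb.2, rfl⟩

/-- the even class of a relabelled path -/
def Eclass (σ : Fin n ≃ Fin n) : Finset (Fin n) :=
  Finset.univ.filter (fun v => (σ.symm v).val % 2 = 0)

lemma mem_Eclass {σ : Fin n ≃ Fin n} {v : Fin n} :
    v ∈ Eclass σ ↔ (σ.symm v).val % 2 = 0 := by simp [Eclass]

lemma Eclass_card (σ : Fin n ≃ Fin n) : (Eclass σ).card = (n+1)/2 := by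
  rw [← fin_even_card n]
  apply Finset.card_bij (fun v _ => σ.symm v)
  · intro a ha
    simp only [Finset.mem_filter, Finset.mem_univ, true_and]
    exact mem_Eclass.mp ha
  · intro a _ b _ hab; exact σ.symm.injective hab
  · intro b hb
    simp only [Finset.mem_filter, Finset.mem_univ, true_and] at hb
    exact ⟨σ b, mem_Eclass.mpr (by simpa using hb), by simp⟩

lemma mapPath_adj {σ : Fin n ≃ Fin n} {u v : Fin n}
    (h : ((pathGraph n).map σ.toEmbedding).Adj u v) :
    (σ.symm u).val + 1 = (σ.symm v).val ∨ (σ.symm v).val + 1 = (σ.symm u).val := by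
  obtain ⟨-, a, b, hab, ha, hb⟩ := h
  subst ha; subst hb
  simpa [pathGraph_adj] using hab

lemma Eclass_valid {σ : Fin n ≃ Fin n} {u v : Fin n}
    (h : ((pathGraph n).map σ.toEmbedding).Adj u v) : (u ∈ Eclass σ ↔ v ∉ Eclass σ) := by
  rw [mem_Eclass, mem_Eclass]
  rcases mapPath_adj h with h' | h' <;> omega

lemma color_parity (h0 : 0 < n) (σ : Fin n ≃ Fin n)
    (c : Coloring ((pathGraph n).map σ.toEmbedding) Bool) :
    ∀ k (hk : k < n), (c (σ ⟨k, hk⟩) = c (σ ⟨0, h0⟩)) ↔ k % 2 = 0 := by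
  intro k
  induction k with
  | zero => intro hk; simp
  | succ m ihm =>
    intro hk
    have hm : m < n := by omega
    have hadj : ((pathGraph n).map σ.toEmbedding).Adj (σ ⟨m, hm⟩) (σ ⟨m+1, hk⟩) := by
      refine ⟨by simp [Fin.ext_iff], ⟨m, hm⟩, ⟨m+1, hk⟩, ?_, rfl, rfl⟩
      rw [pathGraph_adj]; left; rfl
    have h1 : c (σ ⟨m, hm⟩) ≠ c (σ ⟨m+1, hk⟩) := c.valid hadj
    have h2 := ihm hm
    rcases Bool.eq_false_or_eq_true (c (σ ⟨m+1, hk⟩)) with hb | hb <;>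
      rcases Bool.eq_false_or_eq_true (c (σ ⟨m, hm⟩)) with hb' | hb' <;>
      rcases Bool.eq_false_or_eq_true (c (σ ⟨0, h0⟩)) with hb0 | hb0 <;>
      simp_all <;> omega

lemma coloring_classes (h0 : 0 < n) (σ : Fin n ≃ Fin n)
    (c : Coloring ((pathGraph n).map σ.toEmbedding) Bool) :
    (Finset.univ.filter (fun v => c v = true)) = Eclass σ ∨
    (Finset.univ.filter (fun v => c v = true)) = (Eclass σ)ᶜ := by
  have key : ∀ v : Fin n, (c v = c (σ ⟨0, h0⟩)) ↔ v ∈ Eclass σ := by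
    intro v
    have := color_parity h0 σ c (σ.symm v).val (σ.symm v).isLt
    rw [Fin.eta, Equiv.apply_symm_apply] at this
    rw [this, mem_Eclass]
  rcases Bool.eq_false_or_eq_true (c (σ ⟨0, h0⟩)) with hb | hb
  · left
    ext v
    have hk := key v
    rw [hb] at hk
    simp only [Finset.mem_filter, Finset.mem_univ, true_and]
    exact hk
  · right
    ext v
    have hk := key v
    rw [hb] at hk
    simp only [Finset.mem_filter, Finset.mem_univ, true_and, Finset.mem_compl]
    rw [← hk]
    rcases Bool.eq_false_or_eq_true (c v) with hv | hv <;> simp [hv]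

lemma card_mem_subtype (A : Finset (Fin n)) : Fintype.card {v : Fin n // v ∈ A} = A.card := by
  simp [Fintype.card_subtype]

lemma card_even_subtype (A : Finset (Fin n)) (hA : A.card = (n+1)/2) :
    Fintype.card {i : Fin n // i.val % 2 = 0} = Fintype.card {v : Fin n // v ∈ A} := by
  rw [Fintype.card_subtype, fin_even_card, card_mem_subtype, hA]

lemma card_odd_subtype (A : Finset (Fin n)) (hA : A.card = (n+1)/2) :
    Fintype.card {i : Fin n // ¬ i.val % 2 = 0} = Fintype.card {v : Fin n // v ∉ A} := by
  rw [Fintype.card_subtype_compl, Fintype.card_subtype_compl,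
    card_even_subtype A hA]

/-- build a relabelling realizing a given even class -/
noncomputable def sigmaA (A : Finset (Fin n)) (hA : A.card = (n+1)/2) : Fin n ≃ Fin n :=
  ((Equiv.sumCompl (fun i : Fin n => i.val % 2 = 0)).symm.trans
    ((Fintype.equivOfCardEq (card_even_subtype A hA)).sumCongr
      (Fintype.equivOfCardEq (card_odd_subtype A hA)))).trans
    (Equiv.sumCompl (fun v : Fin n => v ∈ A))

lemma sigmaA_mem (A : Finset (Fin n)) (hA : A.card = (n+1)/2) (i : Fin n) :
    sigmaA A hA i ∈ A ↔ i.val % 2 = 0 := by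
  by_cases hi : i.val % 2 = 0
  · simp only [sigmaA, Equiv.trans_apply, Equiv.sumCongr_apply]
    rw [show (Equiv.sumCompl fun i : Fin n => i.val % 2 = 0).symm i = Sum.inl ⟨i, hi⟩ from
      Equiv.sumCompl_symm_apply_of_pos (p := fun i : Fin n => i.val % 2 = 0) hi]
    rw [Sum.map_inl, Equiv.sumCompl_apply_inl]
    exact iff_of_true ((Fintype.equivOfCardEq (card_even_subtype A hA)) ⟨i, hi⟩).2 hi
  · simp only [sigmaA, Equiv.trans_apply, Equiv.sumCongr_apply]
    rw [show (Equiv.sumCompl fun i : Fin n => i.val % 2 = 0).symm i = Sum.inr ⟨i, hi⟩ from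
      Equiv.sumCompl_symm_apply_of_neg (p := fun i : Fin n => i.val % 2 = 0) hi]
    rw [Sum.map_inr, Equiv.sumCompl_apply_inr]
    exact iff_of_false ((Fintype.equivOfCardEq (card_odd_subtype A hA)) ⟨i, hi⟩).2 hi

lemma Eclass_sigmaA (A : Finset (Fin n)) (hA : A.card = (n+1)/2) :
    Eclass (sigmaA A hA) = A := by
  ext v
  rw [mem_Eclass]
  have := sigmaA_mem A hA ((sigmaA A hA).symm v)
  rw [Equiv.apply_symm_apply] at this
  exact this.symm
variable {n : ℕ}
open SimpleGraph Walk Finset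

/-- hom from path graph into its relabelled copy -/
def pathHom (σ : Fin n ≃ Fin n) : pathGraph n →g (pathGraph n).map σ.toEmbedding :=
  ⟨fun a => σ a, fun {a b} h => ⟨fun e => h.ne (σ.injective e), a, b, h, rfl, rfl⟩⟩

lemma exists_walk (σ : Fin n ≃ Fin n) (u v : Fin n) :
    Nonempty (((pathGraph n).map σ.toEmbedding).Walk u v) := by
  have hn : 0 < n := Fin.pos u
  obtain ⟨m, rfl⟩ : ∃ m, n = m + 1 := ⟨n - 1, by omega⟩
  obtain ⟨w0⟩ := (pathGraph_connected m).preconnected (σ.symm u) (σ.symm v)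
  exact ⟨(w0.map (pathHom σ)).copy (by exact σ.apply_symm_apply u) (by exact σ.apply_symm_apply v)⟩

lemma mono_edge (h0 : 0 < n) (τ : Fin n ≃ Fin n) (A : Finset (Fin n))
    (h1 : A ≠ Eclass τ) (h2 : A ≠ (Eclass τ)ᶜ) :
    ∃ u v, ((pathGraph n).map τ.toEmbedding).Adj u v ∧ ((u ∈ A) ↔ (v ∈ A)) := by
  by_contra hcon
  push_neg at hcon
  have hvalid : ∀ {u v : Fin n}, ((pathGraph n).map τ.toEmbedding).Adj u v →
      (fun w => decide (w ∈ A)) u ≠ (fun w => decide (w ∈ A)) v := by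
    intro u v hadj
    have := hcon u v hadj
    simp only [ne_eq, decide_eq_decide]
    tauto
  have := coloring_classes h0 τ (Coloring.mk _ hvalid)
  have hfA : (Finset.univ.filter (fun v =>
      (Coloring.mk (fun w => decide (w ∈ A)) hvalid) v = true)) = A := by
    ext v
    simp only [Finset.mem_filter, Finset.mem_univ, true_and]
    show decide (v ∈ A) = true ↔ v ∈ A
    simp
  rw [hfA] at this
  tauto

lemma odd_cycle_of_diff (h0 : 0 < n) (σ τ : Fin n ≃ Fin n)
    (hne1 : Eclass σ ≠ Eclass τ) (hne2 : Eclass σ ≠ (Eclass τ)ᶜ) :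
    ∃ (v : Fin n) (c : (((pathGraph n).map σ.toEmbedding) ⊔
      ((pathGraph n).map τ.toEmbedding)).Walk v v), c.IsCycle ∧ Odd c.length := by
  obtain ⟨u, v, hadj, hmono⟩ := mono_edge h0 τ (Eclass σ) hne1 hne2
  have hvalid : ∀ {a b : Fin n}, ((pathGraph n).map σ.toEmbedding).Adj a b →
      (fun w => decide (w ∈ Eclass σ)) a ≠ (fun w => decide (w ∈ Eclass σ)) b := by
    intro a b hab
    have := Eclass_valid hab
    simp only [ne_eq, decide_eq_decide]
    tauto
  set c : Coloring ((pathGraph n).map σ.toEmbedding) Bool := Coloring.mk _ hvalid with hc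
  obtain ⟨p⟩ := exists_walk σ u v
  have heven : Even p.length := by
    rw [c.even_length_iff_congr p]
    show decide (u ∈ Eclass σ) = true ↔ decide (v ∈ Eclass σ) = true
    simpa using hmono
  have hsupadj : (((pathGraph n).map σ.toEmbedding) ⊔
      ((pathGraph n).map τ.toEmbedding)).Adj v u := Or.inr hadj.symm
  refine exists_odd_cycle
    ((p.mapLe (le_sup_left : ((pathGraph n).map σ.toEmbedding) ≤ _)).concat hsupadj) ?_
  rw [Walk.length_concat, Walk.length_map]
  exact heven.add_one
variable {n : ℕ}

lemma no_odd_cycle_of_eq (σ τ : Fin n ≃ Fin n)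
    (h : Eclass σ = Eclass τ ∨ Eclass σ = (Eclass τ)ᶜ) :
    ¬ ∃ (v : Fin n) (c : (((pathGraph n).map σ.toEmbedding) ⊔
      ((pathGraph n).map τ.toEmbedding)).Walk v v), c.IsCycle ∧ Odd c.length := by
  rintro ⟨v, w, hc, hodd⟩
  have hvalid : ∀ {a b : Fin n}, (((pathGraph n).map σ.toEmbedding) ⊔
      ((pathGraph n).map τ.toEmbedding)).Adj a b →
      (fun w => decide (w ∈ Eclass σ)) a ≠ (fun w => decide (w ∈ Eclass σ)) b := by
    intro a b hab
    simp only [ne_eq, decide_eq_decide]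
    rcases hab with hab | hab
    · have := Eclass_valid hab; tauto
    · have := Eclass_valid hab
      rcases h with h | h
      · rw [h]; tauto
      · rw [h]
        simp only [Finset.mem_compl]
        tauto
  have := ((Coloring.mk _ hvalid).odd_length_iff_not_congr w).mp hodd
  tauto

/-- the canonical Hamiltonian path graph with even class `A` -/
noncomputable def GA (n : ℕ) (A : Finset (Fin n)) : SimpleGraph (Fin n) :=
  if h : A.card = (n+1)/2 then (pathGraph n).map (sigmaA A h).toEmbedding else ⊥

lemma GA_eq {n : ℕ} (A : Finset (Fin n)) (h : A.card = (n+1)/2) :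
    GA n A = (pathGraph n).map (sigmaA A h).toEmbedding := dif_pos h

lemma S_card (n : ℕ) (h0 : 0 < n) :
    (((Finset.univ : Finset (Fin n)).powersetCard ((n+1)/2)).filter
      (fun A => Odd n ∨ (⟨0, h0⟩ : Fin n) ∈ A)).card
    = if Odd n then n.choose ((n - 1) / 2) else n.choose (n / 2) / 2 := by
  classical
  by_cases hodd : Odd n
  · rw [if_pos hodd]
    have hfil : ((Finset.univ : Finset (Fin n)).powersetCard ((n+1)/2)).filter
        (fun A => Odd n ∨ (⟨0, h0⟩ : Fin n) ∈ A)
        = (Finset.univ : Finset (Fin n)).powersetCard ((n+1)/2) :=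
      Finset.filter_true_of_mem (fun A _ => Or.inl hodd)
    rw [hfil, Finset.card_powersetCard, Finset.card_univ, Fintype.card_fin]
    have h1 : (n+1)/2 ≤ n := by omega
    have h2 : n - (n+1)/2 = (n-1)/2 := by
      rw [Nat.odd_iff] at hodd; omega
    rw [← h2, Nat.choose_symm h1]
  · rw [if_neg hodd]
    have hev : n % 2 = 0 := by
      rw [Nat.odd_iff] at hodd; omega
    set T := (Finset.univ : Finset (Fin n)).powersetCard ((n+1)/2) with hT
    have hsplit := Finset.card_filter_add_card_filter_not
      (s := T) (p := fun A => (⟨0, h0⟩ : Fin n) ∈ A)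
    have hbij : (T.filter (fun A => (⟨0, h0⟩ : Fin n) ∈ A)).card
        = (T.filter (fun A => ¬ (⟨0, h0⟩ : Fin n) ∈ A)).card := by
      apply Finset.card_bij (fun A _ => Aᶜ)
      · intro A hA
        simp only [hT, Finset.mem_filter, Finset.mem_powersetCard_univ] at hA ⊢
        refine ⟨?_, by simp [hA.2]⟩
        rw [Finset.card_compl, Fintype.card_fin, hA.1]; omega
      · intro A _ B _ h; exact compl_injective h
      · intro B hB
        simp only [hT, Finset.mem_filter, Finset.mem_powersetCard_univ] at hB
        refine ⟨Bᶜ, ?_, compl_compl B⟩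
        simp only [hT, Finset.mem_filter, Finset.mem_powersetCard_univ]
        refine ⟨?_, by simp [hB.2]⟩
        rw [Finset.card_compl, Fintype.card_fin, hB.1]; omega
    have hTcard : T.card = n.choose (n/2) := by
      rw [hT, Finset.card_powersetCard, Finset.card_univ, Fintype.card_fin]
      congr 1; omega
    have hfil : T.filter (fun A => Odd n ∨ (⟨0, h0⟩ : Fin n) ∈ A)
        = T.filter (fun A => (⟨0, h0⟩ : Fin n) ∈ A) := by
      apply Finset.filter_congr; intro A _; simp [hodd]
    rw [hfil]
    omega

/-- normalized bipartition class of a Hamiltonian path graph -/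
noncomputable def normClass (n : ℕ) (h0 : 0 < n) (G : SimpleGraph (Fin n)) : Finset (Fin n) :=
  @dite _ (IsHamPathGraph G) (Classical.propDecidable _) (fun h =>
    if Odd n ∨ (⟨0, h0⟩ : Fin n) ∈ Eclass h.choose then Eclass h.choose
    else (Eclass h.choose)ᶜ) (fun _ => ∅)

lemma normClass_eq {n : ℕ} (h0 : 0 < n) {G : SimpleGraph (Fin n)} (h : IsHamPathGraph G) :
    normClass n h0 G =
      (if Odd n ∨ (⟨0, h0⟩ : Fin n) ∈ Eclass h.choose then Eclass h.choose
       else (Eclass h.choose)ᶜ) := by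
  unfold normClass
  rw [dif_pos h]

theorem max_odd_cycle_separated_ham_paths (n : ℕ) (hn : 2 ≤ n) :
    IsGreatest {m : ℕ | ∃ F : Finset (SimpleGraph (Fin n)),
        (∀ G ∈ F, IsHamPathGraph G) ∧
        (F : Set (SimpleGraph (Fin n))).Pairwise (fun G H =>
          ∃ (v : Fin n) (c : (G ⊔ H).Walk v v), c.IsCycle ∧ Odd c.length) ∧
        F.card = m}
      (if Odd n then n.choose ((n - 1) / 2) else n.choose (n / 2) / 2) := by
  classical
  have h0 : 0 < n := by omega
  set S : Finset (Finset (Fin n)) :=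
    ((Finset.univ : Finset (Fin n)).powersetCard ((n+1)/2)).filter
      (fun A => Odd n ∨ (⟨0, h0⟩ : Fin n) ∈ A) with hS
  have hmemS : ∀ {A : Finset (Fin n)}, A ∈ S ↔
      (A.card = (n+1)/2 ∧ (Odd n ∨ (⟨0, h0⟩ : Fin n) ∈ A)) := by
    intro A
    rw [hS, Finset.mem_filter, Finset.mem_powersetCard_univ]
  -- key: distinct members of S have distinct non-complementary classes
  have hkey : ∀ (A : Finset (Fin n)) (hA : A ∈ S) (B : Finset (Fin n)) (hB : B ∈ S), A ≠ B →
      Eclass (sigmaA A (hmemS.mp hA).1) ≠ Eclass (sigmaA B (hmemS.mp hB).1) ∧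
      Eclass (sigmaA A (hmemS.mp hA).1) ≠ (Eclass (sigmaA B (hmemS.mp hB).1))ᶜ := by
    intro A hA B hB hAB
    rw [Eclass_sigmaA, Eclass_sigmaA]
    refine ⟨hAB, ?_⟩
    intro hcon
    by_cases hodd : Odd n
    · have hcards := congrArg Finset.card hcon
      rw [(hmemS.mp hA).1, Finset.card_compl, Fintype.card_fin, (hmemS.mp hB).1] at hcards
      rw [Nat.odd_iff] at hodd
      omega
    · have hA0 : (⟨0, h0⟩ : Fin n) ∈ A := ((hmemS.mp hA).2).resolve_left hodd
      have hB0 : (⟨0, h0⟩ : Fin n) ∈ B := ((hmemS.mp hB).2).resolve_left hodd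
      rw [hcon, Finset.mem_compl] at hA0
      exact hA0 hB0
  constructor
  · -- membership: construct the family
    refine ⟨S.image (fun A => GA n A), ?_, ?_, ?_⟩
    · intro G hG
      obtain ⟨A, hA, rfl⟩ := Finset.mem_image.mp hG
      rw [GA_eq A (hmemS.mp hA).1]
      exact ⟨_, rfl⟩
    · intro G hG H hH hne
      simp only [Finset.coe_image, Set.mem_image, Finset.mem_coe] at hG hH
      obtain ⟨A, hA, rfl⟩ := hG
      obtain ⟨B, hB, rfl⟩ := hH
      have hAB : A ≠ B := by rintro rfl; exact hne rfl
      obtain ⟨hne1, hne2⟩ := hkey A hA B hB hAB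
      rw [GA_eq A (hmemS.mp hA).1, GA_eq B (hmemS.mp hB).1]
      exact odd_cycle_of_diff h0 _ _ hne1 hne2
    · rw [Finset.card_image_of_injOn, hS, S_card n h0]
      intro A hA B hB hGAB
      by_contra hAB
      obtain ⟨hne1, hne2⟩ := hkey A (by simpa using hA) B (by simpa using hB) hAB
      have hc := odd_cycle_of_diff h0 _ _ hne1 hne2
      have hGA := GA_eq A (hmemS.mp (by simpa using hA : A ∈ S)).1
      have hGB := GA_eq B (hmemS.mp (by simpa using hB : B ∈ S)).1
      have hGAB' : GA n A = GA n B := hGAB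
      rw [← hGA, ← hGB, hGAB', hGB] at hc
      exact no_odd_cycle_of_eq _ _ (Or.inl rfl) hc
  · -- upper bound
    rintro m ⟨F, hHam, hPair, rfl⟩
    rw [← S_card n h0, ← hS]
    apply Finset.card_le_card_of_injOn (normClass n h0)
    · intro G hG
      have h := hHam G hG
      rw [Finset.mem_coe, hmemS, normClass_eq h0 h]
      split_ifs with hcond
      · refine ⟨Eclass_card _, ?_⟩
        by_cases hodd : Odd n
        · exact Or.inl hodd
        · exact Or.inr (hcond.resolve_left hodd)
      · push_neg at hcond
        refine ⟨?_, Or.inr (Finset.mem_compl.mpr hcond.2)⟩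
        rw [Finset.card_compl, Fintype.card_fin, Eclass_card]
        have : ¬ Odd n := hcond.1
        rw [Nat.odd_iff] at this
        omega
    · intro G hG H hH hfGH
      by_contra hne
      have hex := hPair hG hH hne
      have hG' := hHam G (by simpa using hG)
      have hH' := hHam H (by simpa using hH)
      have hGσ : G = (pathGraph n).map hG'.choose.toEmbedding := hG'.choose_spec
      have hHτ : H = (pathGraph n).map hH'.choose.toEmbedding := hH'.choose_spec
      have hEq : Eclass hG'.choose = Eclass hH'.choose ∨
          Eclass hG'.choose = (Eclass hH'.choose)ᶜ := by
        rw [normClass_eq h0 hG', normClass_eq h0 hH'] at hfGH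
        split_ifs at hfGH
        · exact Or.inl hfGH
        · exact Or.inr hfGH
        · exact Or.inr (by rw [← hfGH, compl_compl])
        · exact Or.inl (compl_injective hfGH)
      rw [hGσ, hHτ] at hex
      exact no_odd_cycle_of_eq _ _ hEq hex
end

section
/- For every even integer n ≥ 2, the edge set of the complete graph K_n can be decomposed into n/2 pairwise edge-disjoint Hamiltonian paths. -/
open SimpleGraph

namespace HamPathAux

open Fin.CommRing

variable {n : ℕ} [NeZero n]

/-- The zigzag relabelling `0, n-1, 1, n-2, 2, ...`. -/
def zig (n : ℕ) [NeZero n] (i : Fin n) : Fin n :=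
  if i.val % 2 = 0 then ((i.val / 2 : ℕ) : Fin n) else ((n - 1 - i.val / 2 : ℕ) : Fin n)

lemma npos : 0 < n := Nat.pos_of_ne_zero (NeZero.ne n)

lemma zig_val (i : Fin n) :
    (zig n i).val = if i.val % 2 = 0 then i.val / 2 else n - 1 - i.val / 2 := by
  have hn := npos (n := n)
  have hi := i.isLt
  unfold zig
  split <;> rw [Fin.val_natCast] <;> exact Nat.mod_eq_of_lt (by omega)

lemma zig_inj : Function.Injective (zig n) := by
  intro i j h
  have hi := i.isLt
  have hj := j.isLt
  have h' := congrArg Fin.val h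
  rw [zig_val, zig_val] at h'
  apply Fin.ext
  split at h' <;> split at h' <;> omega

noncomputable def sigma (k : Fin n) : Fin n ≃ Fin n :=
  (Equiv.ofBijective (zig n) (Finite.injective_iff_bijective.mp zig_inj)).trans
    (Equiv.addLeft k)

lemma sigma_apply (k : Fin n) (i : Fin n) : sigma k i = k + zig n i := rfl

/-- The `k`-th Hamiltonian path graph. -/
noncomputable def Gk (k : Fin n) : SimpleGraph (Fin n) :=
  (pathGraph n).map (sigma k).toEmbedding

lemma Gk_isHamPath (k : Fin n) : IsHamPathGraph (Gk k) := ⟨sigma k, rfl⟩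

lemma cast_rev (t : ℕ) (ht : t < n) : ((n - 1 - t : ℕ) : Fin n) = -1 - (t : Fin n) := by
  have hn := npos (n := n)
  have h1 : (n - 1 - t : ℕ) = n - (1 + t) := by omega
  rw [h1, Nat.cast_sub (by omega), Nat.cast_add, Nat.cast_one, Fin.natCast_self]
  ring

lemma cast_n_sub_one : ((n - 1 : ℕ) : Fin n) = -1 := by
  have := cast_rev (n := n) 0 npos
  simpa using this

lemma val_neg_one (hn2 : 2 ≤ n) : ((-1 : Fin n)).val = n - 1 := by
  rw [← cast_n_sub_one, Fin.val_natCast, Nat.mod_eq_of_lt (by omega)]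

lemma add_val_cases (x y : Fin n) :
    x.val + y.val = (x + y).val ∨ x.val + y.val = n + (x + y).val := by
  have hx := x.isLt
  have hy := y.isLt
  have h : (x + y).val = (x.val + y.val) % n := Fin.val_add x y
  rcases Nat.lt_or_ge (x.val + y.val) n with h' | h'
  · left; rw [h, Nat.mod_eq_of_lt h']
  · right; rw [h, Nat.mod_eq_sub_mod h', Nat.mod_eq_of_lt (by omega)]; omega

lemma zig_pair {u v : Fin n} (h : u.val + 1 = v.val) :
    zig n u + zig n v = -1 ∨ zig n u + zig n v = 0 := by
  have hu := u.isLt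
  have hv := v.isLt
  rcases Nat.even_or_odd u.val with he | ho
  · left
    have h2 : u.val % 2 = 0 := Nat.even_iff.mp he
    have h3 : ¬ v.val % 2 = 0 := by omega
    have h4 : v.val / 2 = u.val / 2 := by omega
    unfold zig
    rw [if_pos h2, if_neg h3, h4, cast_rev (u.val / 2) (by omega)]
    ring
  · right
    have h2 : ¬ u.val % 2 = 0 := Nat.odd_iff.mp ho ▸ by omega
    have h3 : v.val % 2 = 0 := by omega
    have h4 : v.val / 2 = u.val / 2 + 1 := by omega
    unfold zig
    rw [if_neg h2, if_pos h3, h4, cast_rev (u.val / 2) (by omega), Nat.cast_add,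
      Nat.cast_one]
    ring

lemma sum_of_adj {k a b : Fin n} (h : (Gk k).Adj a b) :
    a + b = 2 * k - 1 ∨ a + b = 2 * k := by
  rw [Gk, map_adj] at h
  obtain ⟨u, v, huv, hu, hv⟩ := h
  rw [pathGraph_adj] at huv
  have key : a + b = 2 * k + (zig n u + zig n v) := by
    rw [← hu, ← hv]
    show (k + zig n u) + (k + zig n v) = _
    ring
  have hz : zig n u + zig n v = -1 ∨ zig n u + zig n v = 0 := by
    rcases huv with h' | h'
    · exact zig_pair h'
    · rcases zig_pair h' with h'' | h''
      · left; rw [← h'']; ring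
      · right; rw [← h'']; ring
  rcases hz with h' | h' <;> rw [h'] at key
  · left; rw [key]; ring
  · right; rw [key]; ring

lemma adj_of_sum_odd_half {m : ℕ} (hm : n = m + m) {k a b : Fin n}
    (hs : a + b = 2 * k - 1) (ht : (a - k).val < m) : (Gk k).Adj a b := by
  have htn := (a - k).isLt
  set t := (a - k).val with htdef
  refine (map_adj _ _ _ _).mpr ⟨⟨2 * t, by omega⟩, ⟨2 * t + 1, by omega⟩,
    pathGraph_adj.mpr (Or.inl rfl), ?_, ?_⟩
  · show k + zig n _ = a
    have h1 : zig n (⟨2 * t, by omega⟩ : Fin n) = a - k := by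
      unfold zig
      rw [if_pos (show (2 * t) % 2 = 0 by omega)]
      show (((2 * t) / 2 : ℕ) : Fin n) = a - k
      rw [show (2 * t) / 2 = t by omega, htdef, Fin.cast_val_eq_self]
    rw [h1]; ring
  · show k + zig n _ = b
    have h1 : zig n (⟨2 * t + 1, by omega⟩ : Fin n) = -1 - (a - k) := by
      unfold zig
      rw [if_neg (show ¬ (2 * t + 1) % 2 = 0 by omega)]
      show ((n - 1 - (2 * t + 1) / 2 : ℕ) : Fin n) = -1 - (a - k)
      rw [show (2 * t + 1) / 2 = t by omega, cast_rev t (by omega), htdef,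
        Fin.cast_val_eq_self]
    rw [h1]; linear_combination -hs

lemma adj_of_sum_odd {m : ℕ} (hm : n = m + m) {k a b : Fin n}
    (hs : a + b = 2 * k - 1) : (Gk k).Adj a b := by
  have hn2 : 2 ≤ n := by
    have := npos (n := n); omega
  have hx : (a - k) + (b - k) = -1 := by linear_combination hs
  have hval : (a - k).val + (b - k).val = n - 1 := by
    rcases add_val_cases (a - k) (b - k) with h | h <;> rw [hx, val_neg_one hn2] at h <;>
      [exact h; skip]
    have := (a - k).isLt
    have := (b - k).isLt
    omega
  rcases Nat.lt_or_ge (a - k).val m with h | h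
  · exact adj_of_sum_odd_half hm hs h
  · have h' : (b - k).val < m := by omega
    exact (adj_of_sum_odd_half hm (by linear_combination hs) h').symm

lemma adj_of_sum_even_half {m : ℕ} (hm : n = m + m) {k a b : Fin n}
    (hs : a + b = 2 * k) (ht : m < (a - k).val) : (Gk k).Adj a b := by
  have htn := (a - k).isLt
  set t := (a - k).val with htdef
  have hj : 2 * (n - 1 - t) + 2 < n := by omega
  refine (map_adj _ _ _ _).mpr ⟨⟨2 * (n - 1 - t) + 1, by omega⟩, ⟨2 * (n - 1 - t) + 2, by omega⟩,
    pathGraph_adj.mpr (Or.inl rfl), ?_, ?_⟩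
  · show k + zig n _ = a
    have h1 : zig n (⟨2 * (n - 1 - t) + 1, by omega⟩ : Fin n) = a - k := by
      unfold zig
      rw [if_neg (show ¬ (2 * (n - 1 - t) + 1) % 2 = 0 by omega)]
      show ((n - 1 - (2 * (n - 1 - t) + 1) / 2 : ℕ) : Fin n) = a - k
      rw [show n - 1 - (2 * (n - 1 - t) + 1) / 2 = t by omega, htdef, Fin.cast_val_eq_self]
    rw [h1]; ring
  · show k + zig n _ = b
    have h1 : zig n (⟨2 * (n - 1 - t) + 2, by omega⟩ : Fin n) = -(a - k) := by
      unfold zig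
      rw [if_pos (show (2 * (n - 1 - t) + 2) % 2 = 0 by omega)]
      show (((2 * (n - 1 - t) + 2) / 2 : ℕ) : Fin n) = -(a - k)
      rw [show (2 * (n - 1 - t) + 2) / 2 = n - t by omega, Nat.cast_sub (by omega),
        Fin.natCast_self, htdef, Fin.cast_val_eq_self]
      ring
    rw [h1]; linear_combination -hs

lemma adj_of_sum_even {m : ℕ} (hm : n = m + m) {k a b : Fin n} (hab : a ≠ b)
    (hs : a + b = 2 * k) : (Gk k).Adj a b := by
  have hx : (a - k) + (b - k) = 0 := by linear_combination hs
  have hta := (a - k).isLt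
  have htb := (b - k).isLt
  have hval : (a - k).val + (b - k).val = 0 ∨ (a - k).val + (b - k).val = n := by
    rcases add_val_cases (a - k) (b - k) with h | h <;> rw [hx] at h <;> simp only [Fin.val_zero] at h <;> omega
  rcases hval with h0 | hn0
  · exfalso
    have ha : a - k = 0 := Fin.ext (by simpa using (by omega : (a - k).val = 0))
    have hb : b - k = 0 := Fin.ext (by simpa using (by omega : (b - k).val = 0))
    exact hab (by linear_combination ha - hb)
  · have hne' : (a - k).val ≠ m := by
      intro hcontra
      have : (a - k).val = (b - k).val := by omega
      exact hab (by linear_combination Fin.ext this)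
    rcases Nat.lt_or_ge m (a - k).val with h | h
    · exact adj_of_sum_even_half hm hs h
    · have h' : m < (b - k).val := by omega
      exact (adj_of_sum_even_half hm (by linear_combination hs) h').symm

lemma val_two_cast {m : ℕ} (hm : n = m + m) {i : ℕ} (hi : i < m) :
    (2 * (i : Fin n) : Fin n).val = 2 * i := by
  have h : (2 * (i : Fin n) : Fin n) = ((2 * i : ℕ) : Fin n) := by push_cast; ring
  rw [h, Fin.val_natCast, Nat.mod_eq_of_lt (by omega)]

lemma val_two_sub_one {m : ℕ} (hm : n = m + m) {i : ℕ} (hi : i < m) :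
    (2 * (i : Fin n) - 1 : Fin n).val = if i = 0 then n - 1 else 2 * i - 1 := by
  have hn2 : 2 ≤ n := by omega
  have h : (2 * (i : Fin n) - 1 : Fin n) = ((2 * i + (n - 1) : ℕ) : Fin n) := by
    rw [Nat.cast_add, cast_n_sub_one]
    push_cast
    ring
  rw [h, Fin.val_natCast]
  split
  · next h0 =>
    subst h0
    simp only [Nat.mul_zero, Nat.zero_add]
    exact Nat.mod_eq_of_lt (by omega)
  · next h0 =>
    rw [Nat.mod_eq_sub_mod (by omega), Nat.mod_eq_of_lt (by omega)]
    omega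

lemma class_inj {m : ℕ} (hm : n = m + m) {i i' : ℕ} (hi : i < m) (hi' : i' < m) {s : Fin n}
    (h1 : s = 2 * (i : Fin n) - 1 ∨ s = 2 * (i : Fin n))
    (h2 : s = 2 * (i' : Fin n) - 1 ∨ s = 2 * (i' : Fin n)) : i = i' := by
  have w1 : s.val = (if i = 0 then n - 1 else 2 * i - 1) ∨ s.val = 2 * i := by
    rcases h1 with h | h
    · left; rw [h, val_two_sub_one hm hi]
    · right; rw [h, val_two_cast hm hi]
  have w2 : s.val = (if i' = 0 then n - 1 else 2 * i' - 1) ∨ s.val = 2 * i' := by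
    rcases h2 with h | h
    · left; rw [h, val_two_sub_one hm hi']
    · right; rw [h, val_two_cast hm hi']
  split_ifs at w1 w2 <;> omega

lemma exists_class {m : ℕ} (hm : n = m + m) (hn2 : 2 ≤ n) (s : Fin n) :
    ∃ i < m, s = 2 * (i : Fin n) - 1 ∨ s = 2 * (i : Fin n) := by
  have hs := s.isLt
  rcases Nat.even_or_odd s.val with he | ho
  · have h2 : s.val % 2 = 0 := Nat.even_iff.mp he
    refine ⟨s.val / 2, by omega, Or.inr (Fin.ext ?_).symm⟩
    rw [val_two_cast hm (by omega)]
    omega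
  · have h2 : s.val % 2 = 1 := Nat.odd_iff.mp ho
    by_cases h0 : s.val = n - 1
    · refine ⟨0, by omega, Or.inl (Fin.ext ?_).symm⟩
      rw [val_two_sub_one hm (by omega), if_pos rfl]
      omega
    · refine ⟨(s.val + 1) / 2, by omega, Or.inl (Fin.ext ?_).symm⟩
      rw [val_two_sub_one hm (by omega), if_neg (by omega)]
      omega

end HamPathAux

open HamPathAux Fin.CommRing in
theorem complete_graph_decomposes_into_ham_paths (n : ℕ) (hn : 2 ≤ n) (hne : Even n) :
    ∃ F : Finset (SimpleGraph (Fin n)),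
      F.card = n / 2 ∧
      (∀ G ∈ F, IsHamPathGraph G) ∧
      (F : Set (SimpleGraph (Fin n))).Pairwise
        (fun G H => Disjoint G.edgeSet H.edgeSet) ∧
      ∀ e ∈ (⊤ : SimpleGraph (Fin n)).edgeSet, ∃ G ∈ F, e ∈ G.edgeSet := by
  haveI : NeZero n := ⟨by omega⟩
  haveI := Classical.decEq (SimpleGraph (Fin n))
  obtain ⟨m, hm⟩ := hne
  have hmn : m = n / 2 := by omega
  refine ⟨(Finset.range m).image (fun i => Gk ((i : ℕ) : Fin n)), ?_, ?_, ?_, ?_⟩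
  · -- cardinality
    rw [Finset.card_image_of_injOn, Finset.card_range, hmn]
    intro i hi i' hi' hGG
    simp only [Finset.coe_range, Set.mem_Iio] at hi hi'
    have hGG' : Gk ((i : ℕ) : Fin n) = Gk ((i' : ℕ) : Fin n) := hGG
    have hadj : (Gk ((i : ℕ) : Fin n)).Adj (sigma ((i : ℕ) : Fin n) ⟨0, by omega⟩)
        (sigma ((i : ℕ) : Fin n) ⟨1, by omega⟩) := by
      refine (map_adj _ _ _ _).mpr ⟨⟨0, by omega⟩, ⟨1, by omega⟩, ?_, rfl, rfl⟩
      exact pathGraph_adj.mpr (Or.inl rfl)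
    have h1 := sum_of_adj hadj
    rw [hGG'] at hadj
    have h2 := sum_of_adj hadj
    exact class_inj hm hi hi' h1 h2
  · -- Ham paths
    intro G hG
    simp only [Finset.mem_image] at hG
    obtain ⟨i, _, rfl⟩ := hG
    exact Gk_isHamPath _
  · -- pairwise disjoint
    intro G hG H hH hGH
    simp only [Finset.coe_image, Finset.coe_range, Set.mem_image, Set.mem_Iio] at hG hH
    obtain ⟨i, hi, rfl⟩ := hG
    obtain ⟨i', hi', rfl⟩ := hH
    rw [Set.disjoint_left]
    intro e heG heH
    induction e using Sym2.ind with
    | _ a b =>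
      rw [SimpleGraph.mem_edgeSet] at heG heH
      have h1 := sum_of_adj heG
      have h2 := sum_of_adj heH
      have hii : i = i' := class_inj hm hi hi' h1 h2
      subst hii
      exact hGH rfl
  · -- coverage
    intro e he
    induction e using Sym2.ind with
    | _ a b =>
      rw [SimpleGraph.mem_edgeSet, SimpleGraph.top_adj] at he
      obtain ⟨i, hi, hclass⟩ := exists_class hm hn (a + b)
      refine ⟨Gk ((i : ℕ) : Fin n), Finset.mem_image_of_mem _ (Finset.mem_range.mpr hi), ?_⟩
      rw [SimpleGraph.mem_edgeSet]
      rcases hclass with h | h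
      · exact adj_of_sum_odd hm h
      · exact adj_of_sum_even hm he h
end

section
/- For every fixed integer k ≥ 3 and every n ≥ 1, P(n,k) ≤ 2^{H((k−2)/(2k−2), (k−2)/(2k−2), 2/(2k−2)) · n}, where H(x₁,x₂,x₃) = −x₁log₂x₁ − x₂log₂x₂ − x₃log₂x₃ is the ternary entropy function. -/
namespace PermSepAux

/-- Color of a pattern position: period `2k-2`, colors `A=0` on `[0,k-3]`,
`B=1` on `{k-2, 2k-3}`, `C=2` on `[k-1,2k-4]`. -/
def colS (k s : ℕ) : Fin 3 :=
  if s % (2*k-2) < k-2 then 0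
  else if s % (2*k-2) = k-2 ∨ s % (2*k-2) = 2*k-3 then 1
  else 2

lemma colS_adj (k : ℕ) (hk : 3 ≤ k) (u : ℕ) :
    ¬(colS k u = 1 ∧ colS k (u+1) = 1) ∧ ¬(colS k u = 0 ∧ colS k (u+1) = 2) ∧
      ¬(colS k u = 2 ∧ colS k (u+1) = 0) := by
  have hrlt : u % (2*k-2) < 2*k-2 := Nat.mod_lt _ (by omega)
  set r := u % (2*k-2) with hrdef
  have hcu : colS k u = if r < k-2 then 0 else if r = k-2 ∨ r = 2*k-3 then 1 else 2 := rfl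
  have h1 : (u+1) % (2*k-2) = (r+1) % (2*k-2) := by
    rw [Nat.add_mod, Nat.mod_eq_of_lt (show 1 < 2*k-2 by omega)]
  rcases (show r+4 ≤ k ∨ r+3 = k ∨ r+2 = k ∨ (k ≤ r+1 ∧ r+5 ≤ 2*k) ∨ r+4 = 2*k ∨ r+3 = 2*k
      by omega) with h|h|h|h|h|h
  · have c1 : colS k u = 0 := by rw [hcu, if_pos (by omega)]
    have h1' : (u+1) % (2*k-2) = r+1 := by rw [h1, Nat.mod_eq_of_lt (by omega)]
    have c2 : colS k (u+1) = 0 := by simp only [colS, h1']; rw [if_pos (by omega)]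
    rw [c1, c2]; decide
  · have c1 : colS k u = 0 := by rw [hcu, if_pos (by omega)]
    have h1' : (u+1) % (2*k-2) = r+1 := by rw [h1, Nat.mod_eq_of_lt (by omega)]
    have c2 : colS k (u+1) = 1 := by
      simp only [colS, h1']; rw [if_neg (by omega), if_pos (by omega)]
    rw [c1, c2]; decide
  · have c1 : colS k u = 1 := by rw [hcu, if_neg (by omega), if_pos (by omega)]
    have h1' : (u+1) % (2*k-2) = r+1 := by rw [h1, Nat.mod_eq_of_lt (by omega)]
    have c2 : colS k (u+1) = 2 := by
      simp only [colS, h1']; rw [if_neg (by omega), if_neg (by omega)]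
    rw [c1, c2]; decide
  · have c1 : colS k u = 2 := by rw [hcu, if_neg (by omega), if_neg (by omega)]
    have h1' : (u+1) % (2*k-2) = r+1 := by rw [h1, Nat.mod_eq_of_lt (by omega)]
    have c2 : colS k (u+1) = 2 := by
      simp only [colS, h1']; rw [if_neg (by omega), if_neg (by omega)]
    rw [c1, c2]; decide
  · have c1 : colS k u = 2 := by rw [hcu, if_neg (by omega), if_neg (by omega)]
    have h1' : (u+1) % (2*k-2) = r+1 := by rw [h1, Nat.mod_eq_of_lt (by omega)]
    have c2 : colS k (u+1) = 1 := by
      simp only [colS, h1']; rw [if_neg (by omega), if_pos (by omega)]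
    rw [c1, c2]; decide
  · have c1 : colS k u = 1 := by rw [hcu, if_neg (by omega), if_pos (by omega)]
    have h1' : (u+1) % (2*k-2) = 0 := by
      rw [h1, show r + 1 = 2*k-2 by omega, Nat.mod_self]
    have c2 : colS k (u+1) = 0 := by simp only [colS, h1']; rw [if_pos (by omega)]
    rw [c1, c2]; decide

lemma colS_dist (k : ℕ) (hk : 3 ≤ k) (u : ℕ) :
    (colS k u = 1 ∧ colS k (u+(k-1)) = 1) ∨ (colS k u = 0 ∧ colS k (u+(k-1)) = 2) ∨
      (colS k u = 2 ∧ colS k (u+(k-1)) = 0) := by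
  have hrlt : u % (2*k-2) < 2*k-2 := Nat.mod_lt _ (by omega)
  set r := u % (2*k-2) with hrdef
  have hcu : colS k u = if r < k-2 then 0 else if r = k-2 ∨ r = 2*k-3 then 1 else 2 := rfl
  have h1 : (u+(k-1)) % (2*k-2) = (r+(k-1)) % (2*k-2) := by
    rw [Nat.add_mod, Nat.mod_eq_of_lt (show k-1 < 2*k-2 by omega)]
  rcases (show r+3 ≤ k ∨ r+2 = k ∨ (k ≤ r+1 ∧ r+4 ≤ 2*k) ∨ r+3 = 2*k by omega) with h|h|h|h
  · have c1 : colS k u = 0 := by rw [hcu, if_pos (by omega)]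
    have h1' : (u+(k-1)) % (2*k-2) = r+(k-1) := by rw [h1, Nat.mod_eq_of_lt (by omega)]
    have c2 : colS k (u+(k-1)) = 2 := by
      simp only [colS, h1']; rw [if_neg (by omega), if_neg (by omega)]
    exact Or.inr (Or.inl ⟨c1, c2⟩)
  · have c1 : colS k u = 1 := by rw [hcu, if_neg (by omega), if_pos (by omega)]
    have h1' : (u+(k-1)) % (2*k-2) = r+(k-1) := by rw [h1, Nat.mod_eq_of_lt (by omega)]
    have c2 : colS k (u+(k-1)) = 1 := by
      simp only [colS, h1']; rw [if_neg (by omega), if_pos (by omega)]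
    exact Or.inl ⟨c1, c2⟩
  · have c1 : colS k u = 2 := by rw [hcu, if_neg (by omega), if_neg (by omega)]
    have h1' : (u+(k-1)) % (2*k-2) = r+(k-1)-(2*k-2) := by
      rw [h1, Nat.mod_eq_sub_mod (by omega), Nat.mod_eq_of_lt (by omega)]
    have c2 : colS k (u+(k-1)) = 0 := by simp only [colS, h1']; rw [if_pos (by omega)]
    exact Or.inr (Or.inr ⟨c1, c2⟩)
  · have c1 : colS k u = 1 := by rw [hcu, if_neg (by omega), if_pos (by omega)]
    have h1' : (u+(k-1)) % (2*k-2) = r+(k-1)-(2*k-2) := by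
      rw [h1, Nat.mod_eq_sub_mod (by omega), Nat.mod_eq_of_lt (by omega)]
    have c2 : colS k (u+(k-1)) = 1 := by
      simp only [colS, h1']; rw [if_neg (by omega), if_pos (by omega)]
    exact Or.inl ⟨c1, c2⟩

/-- Shift of the coloring pattern; `1` for `k = 3`, `0` otherwise. -/
def shiftK (k : ℕ) : ℕ := if k = 3 then 1 else 0

/-- Color of a position. -/
def colP (k p : ℕ) : Fin 3 := colS k (p + shiftK k)

lemma colP_adj (k : ℕ) (hk : 3 ≤ k) (u : ℕ) :
    ¬(colP k u = 1 ∧ colP k (u+1) = 1) ∧ ¬(colP k u = 0 ∧ colP k (u+1) = 2) ∧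
      ¬(colP k u = 2 ∧ colP k (u+1) = 0) := by
  have := colS_adj k hk (u + shiftK k)
  rwa [show u + shiftK k + 1 = u + 1 + shiftK k by omega] at this

lemma colP_dist (k : ℕ) (hk : 3 ≤ k) (u : ℕ) :
    (colP k u = 1 ∧ colP k (u+(k-1)) = 1) ∨ (colP k u = 0 ∧ colP k (u+(k-1)) = 2) ∨
      (colP k u = 2 ∧ colP k (u+(k-1)) = 0) := by
  have := colS_dist k hk (u + shiftK k)
  rwa [show u + shiftK k + (k-1) = u + (k-1) + shiftK k by omega] at this

/-- The key combinatorial fact: a pair adjacent in one permutation cannot have the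
same colors as a pair at distance `k-1` in the other. -/
lemma no_both (k : ℕ) (hk : 3 ≤ k) (p q p' q' : ℕ)
    (h1 : q = p + 1 ∨ p = q + 1) (h2 : q' = p' + (k-1) ∨ p' = q' + (k-1))
    (e1 : colP k p = colP k p') (e2 : colP k q = colP k q') : False := by
  rcases h1 with h1 | h1 <;> subst h1 <;> rcases h2 with h2 | h2 <;> subst h2
  · obtain ⟨a1, a2, a3⟩ := colP_adj k hk p
    rcases colP_dist k hk p' with ⟨d1, d2⟩ | ⟨d1, d2⟩ | ⟨d1, d2⟩
    · exact a1 ⟨e1.trans d1, e2.trans d2⟩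
    · exact a2 ⟨e1.trans d1, e2.trans d2⟩
    · exact a3 ⟨e1.trans d1, e2.trans d2⟩
  · obtain ⟨a1, a2, a3⟩ := colP_adj k hk p
    rcases colP_dist k hk q' with ⟨d1, d2⟩ | ⟨d1, d2⟩ | ⟨d1, d2⟩
    · exact a1 ⟨e1.trans d2, e2.trans d1⟩
    · exact a3 ⟨e1.trans d2, e2.trans d1⟩
    · exact a2 ⟨e1.trans d2, e2.trans d1⟩
  · obtain ⟨a1, a2, a3⟩ := colP_adj k hk q
    rcases colP_dist k hk p' with ⟨d1, d2⟩ | ⟨d1, d2⟩ | ⟨d1, d2⟩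
    · exact a1 ⟨e2.trans d2, e1.trans d1⟩
    · exact a3 ⟨e2.trans d2, e1.trans d1⟩
    · exact a2 ⟨e2.trans d2, e1.trans d1⟩
  · obtain ⟨a1, a2, a3⟩ := colP_adj k hk q
    rcases colP_dist k hk q' with ⟨d1, d2⟩ | ⟨d1, d2⟩ | ⟨d1, d2⟩
    · exact a1 ⟨e2.trans d1, e1.trans d2⟩
    · exact a2 ⟨e2.trans d1, e1.trans d2⟩
    · exact a3 ⟨e2.trans d1, e1.trans d2⟩

lemma colS_eq_one_iff (k : ℕ) (hk : 3 ≤ k) (s : ℕ) :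
    colS k s = 1 ↔ (k-1) ∣ (s+1) := by
  have hrlt : s % (2*k-2) < 2*k-2 := Nat.mod_lt _ (by omega)
  set r := s % (2*k-2) with hrdef
  have hcu : colS k s = if r < k-2 then 0 else if r = k-2 ∨ r = 2*k-3 then 1 else 2 := rfl
  have hmm : s % (k-1) = r % (k-1) := (Nat.mod_mod_of_dvd s ⟨2, by omega⟩).symm
  have hc : colS k s = 1 ↔ (r = k-2 ∨ r = 2*k-3) := by
    rw [hcu]
    constructor
    · intro h
      split_ifs at h with h1 h2
      · exact absurd h (by decide)
      · exact h2
      · exact absurd h (by decide)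
    · intro h; rw [if_neg (by omega), if_pos h]
  have hmid : (r = k-2 ∨ r = 2*k-3) ↔ s % (k-1) = k-2 := by
    rw [hmm]
    constructor
    · rintro (h | h)
      · rw [h]; exact Nat.mod_eq_of_lt (by omega)
      · rw [h, Nat.mod_eq_sub_mod (by omega), show 2*k-3-(k-1) = k-2 by omega,
          Nat.mod_eq_of_lt (by omega)]
    · intro h
      rcases Nat.lt_or_ge r (k-1) with hlt | hge
      · left; rw [Nat.mod_eq_of_lt hlt] at h; exact h
      · right
        rw [Nat.mod_eq_sub_mod hge, Nat.mod_eq_of_lt (by omega)] at h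
        omega
  have hdvd : s % (k-1) = k-2 ↔ (k-1) ∣ (s+1) := by
    rw [Nat.dvd_iff_mod_eq_zero]
    have hsm : s % (k-1) < k-1 := Nat.mod_lt _ (by omega)
    rw [Nat.add_mod, Nat.mod_eq_of_lt (show 1 < k-1 by omega)]
    constructor
    · intro h; rw [h, show k-2+1 = k-1 by omega, Nat.mod_self]
    · intro h
      rcases Nat.lt_or_ge (s % (k-1) + 1) (k-1) with hlt | hge
      · rw [Nat.mod_eq_of_lt hlt] at h; omega
      · omega
  rw [hc, hmid, hdvd]

lemma colP_eq_one_iff (k : ℕ) (hk : 3 ≤ k) (p : ℕ) :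
    colP k p = 1 ↔ (k-1) ∣ (p + shiftK k + 1) := colS_eq_one_iff k hk _

/-- Count of B positions, `k ≥ 4` case. -/
lemma countB_le (k n : ℕ) (hk : 4 ≤ k) :
    ((Finset.range n).filter (fun p => colP k p = 1)).card * (k-1) ≤ n := by
  have hsh : shiftK k = 0 := by unfold shiftK; rw [if_neg (by omega)]
  have : ((Finset.range n).filter (fun p => colP k p = 1))
      = ((Finset.range n).filter (fun p => (k-1) ∣ (p+1))) := by
    apply Finset.filter_congr
    intro p _
    rw [colP_eq_one_iff k (by omega) p, hsh]
  rw [this, Nat.card_multiples]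
  exact Nat.div_mul_le_self n (k-1)

/-- Count of B positions, `k = 3` case. -/
lemma countB_ge (n : ℕ) :
    n ≤ 2 * ((Finset.range n).filter (fun p => colP 3 p = 1)).card := by
  have hsh : shiftK 3 = 1 := rfl
  have h1 : ((Finset.range n).filter (fun p => colP 3 p = 1))
      = ((Finset.range n).filter (fun p => ¬ (2 ∣ (p+1)))) := by
    apply Finset.filter_congr
    intro p _
    rw [colP_eq_one_iff 3 (by omega) p, hsh]
    constructor <;> intro h <;> omega
  have h1' : (Finset.range n).filter (fun p => ¬ (2 ∣ (p+1)))
      = Finset.range n \ (Finset.range n).filter (fun p => 2 ∣ (p+1)) :=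
    Finset.filter_not _ _
  rw [h1, h1', Finset.card_sdiff_of_subset (Finset.filter_subset _ _), Nat.card_multiples,
    Finset.card_range]
  omega

end PermSepAux


/-- Two permutations of `[n]` (written as sequences `π 0, π 1, …, π (n-1)`) are
`k`-neighbor separated: there are two elements occupying adjacent positions in one of
them whose positions in the other differ by exactly `k - 1`. -/
def NeighborSep (n k : ℕ) (π σ : Equiv.Perm (Fin n)) : Prop :=
  ∃ x y : Fin n,
    (((π.symm x : ℤ) - (π.symm y : ℤ)).natAbs = 1 ∧
      ((σ.symm x : ℤ) - (σ.symm y : ℤ)).natAbs = k - 1) ∨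
    (((σ.symm x : ℤ) - (σ.symm y : ℤ)).natAbs = 1 ∧
      ((π.symm x : ℤ) - (π.symm y : ℤ)).natAbs = k - 1)

/-- `permP n k`: the maximum size of a family of permutations of `[n]` that are
pairwise `k`-neighbor separated. -/
noncomputable def permP (n k : ℕ) : ℕ :=
  sSup {m : ℕ | ∃ F : Finset (Equiv.Perm (Fin n)),
    (F : Set (Equiv.Perm (Fin n))).Pairwise (NeighborSep n k) ∧ F.card = m}

/-- The ternary entropy function (logarithms in base 2). -/
noncomputable def ternaryEntropy (x₁ x₂ x₃ : ℝ) : ℝ :=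
  -(x₁ * Real.logb 2 x₁) - x₂ * Real.logb 2 x₂ - x₃ * Real.logb 2 x₃

theorem permP_entropy_upper_bound (k : ℕ) (hk : 3 ≤ k) (n : ℕ) (hn : 1 ≤ n) :
    (permP n k : ℝ) ≤
      2 ^ (ternaryEntropy ((k - 2) / (2 * k - 2)) ((k - 2) / (2 * k - 2))
            (2 / (2 * k - 2)) * n) := by
  classical
  set xr : ℝ := ((k : ℝ) - 2) / (2 * (k : ℝ) - 2) with hxr
  set yr : ℝ := 2 / (2 * (k : ℝ) - 2) with hyr
  set H : ℝ := ternaryEntropy xr xr yr with hHdef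
  have hK3 : (3 : ℝ) ≤ (k : ℝ) := by exact_mod_cast hk
  have hden : (0 : ℝ) < 2 * (k : ℝ) - 2 := by linarith
  have hxpos : 0 < xr := div_pos (by linarith) hden
  have hypos : 0 < yr := div_pos (by norm_num) hden
  have hxy : 2 * xr + yr = 1 := by
    rw [hxr, hyr]
    field_simp
    have h1 : ((k:ℝ) - 1) ≠ 0 := by intro h; linarith
    rw [div_eq_one_iff_eq h1]
    ring
  clear_value xr yr H
  have main : ∀ F : Finset (Equiv.Perm (Fin n)),
      (↑F : Set (Equiv.Perm (Fin n))).Pairwise (NeighborSep n k) →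
      (F.card : ℝ) ≤ 2 ^ (H * n) := by
    intro F hF
    set wtf : Fin 3 → ℝ := fun j => if j = 1 then yr else xr with hwtf
    have hwtpos : ∀ j, 0 < wtf j := by
      intro j
      rw [hwtf]
      dsimp only
      split
      · exact hypos
      · exact hxpos
    have hwts : ∑ j : Fin 3, wtf j = 1 := by
      rw [Fin.sum_univ_three, hwtf]
      dsimp only
      rw [if_neg (by decide), if_pos rfl, if_neg (by decide)]
      linarith
    set Φ : Equiv.Perm (Fin n) → (Fin n → Fin 3) :=
      fun π => fun q : Fin n => PermSepAux.colP k ((π.symm q : Fin n) : ℕ) with hΦ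
    have hinj : Set.InjOn Φ ↑F := by
      intro π hπ σ hσ h
      by_contra hne
      obtain ⟨a, b, hab⟩ := hF hπ hσ hne
      have key : ∀ z : Fin n, PermSepAux.colP k ((π.symm z : Fin n) : ℕ)
          = PermSepAux.colP k ((σ.symm z : Fin n) : ℕ) := fun z => congrFun h z
      rcases hab with ⟨h1, h2⟩ | ⟨h1, h2⟩
      · exact PermSepAux.no_both k hk ((π.symm a : Fin n) : ℕ) ((π.symm b : Fin n) : ℕ)
          ((σ.symm a : Fin n) : ℕ) ((σ.symm b : Fin n) : ℕ)
          (by omega) (by omega) (key a) (key b)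
      · exact PermSepAux.no_both k hk ((σ.symm a : Fin n) : ℕ) ((σ.symm b : Fin n) : ℕ)
          ((π.symm a : Fin n) : ℕ) ((π.symm b : Fin n) : ℕ)
          (by omega) (by omega) (key a).symm (key b).symm
    set P : Fin n → Prop := fun q => PermSepAux.colP k (q : ℕ) = 1 with hP
    set bU : ℕ := (Finset.univ.filter P).card with hbU
    set W : ℝ := ∏ q : Fin n, wtf (PermSepAux.colP k (q : ℕ)) with hW
    have hWpos : 0 < W := Finset.prod_pos (fun q _ => hwtpos _)
    have hcardW : (F.card : ℝ) * W ≤ 1 := by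
      calc (F.card : ℝ) * W = ∑ _π ∈ F, W := by rw [Finset.sum_const, nsmul_eq_mul]
        _ = ∑ π ∈ F, ∏ i : Fin n, wtf (Φ π i) := by
            refine Finset.sum_congr rfl (fun π _ => ?_)
            exact (Equiv.prod_comp π.symm
              (fun q : Fin n => wtf (PermSepAux.colP k (q : ℕ)))).symm
        _ = ∑ g ∈ F.image Φ, ∏ i : Fin n, wtf (g i) := by
            rw [Finset.sum_image (fun x hx y hy hxy => hinj hx hy hxy)]
        _ ≤ ∑ g : Fin n → Fin 3, ∏ i : Fin n, wtf (g i) :=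
            Finset.sum_le_sum_of_subset_of_nonneg (Finset.subset_univ _)
              (fun g _ _ => Finset.prod_nonneg (fun i _ => (hwtpos _).le))
        _ = (∑ j : Fin 3, wtf j) ^ n := (Fintype.sum_pow wtf n).symm
        _ = 1 := by rw [hwts, one_pow]
    have hble : bU ≤ n := by
      rw [hbU]
      calc (Finset.univ.filter P).card ≤ (Finset.univ : Finset (Fin n)).card :=
            Finset.card_filter_le _ _
        _ = n := by rw [Finset.card_univ, Fintype.card_fin]
    have hcnot : (Finset.univ.filter (fun q => ¬ P q)).card = n - bU := by
      rw [Finset.filter_not, Finset.card_sdiff_of_subset (Finset.filter_subset _ _),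
        Finset.card_univ, Fintype.card_fin, hbU]
    have e1 : ∏ q ∈ Finset.univ.filter P, wtf (PermSepAux.colP k (q : ℕ)) = yr ^ bU := by
      rw [hbU]
      apply Finset.prod_eq_pow_card
      intro q hq
      have hq' : P q := (Finset.mem_filter.mp hq).2
      simp only [hwtf]
      exact if_pos hq'
    have e2 : ∏ q ∈ Finset.univ.filter (fun q => ¬ P q),
        wtf (PermSepAux.colP k (q : ℕ)) = xr ^ (n - bU) := by
      rw [← hcnot]
      apply Finset.prod_eq_pow_card
      intro q hq
      have hq' : ¬ P q := (Finset.mem_filter.mp hq).2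
      simp only [hwtf]
      exact if_neg hq'
    have hWeq : W = yr ^ bU * xr ^ (n - bU) := by
      rw [hW, ← Finset.prod_filter_mul_prod_filter_not Finset.univ P
        (fun q : Fin n => wtf (PermSepAux.colP k (q : ℕ))), e1, e2]
    have hbr : bU = ((Finset.range n).filter (fun p => PermSepAux.colP k p = 1)).card := by
      rw [hbU]
      refine Finset.card_bij (fun a _ => (a : ℕ)) ?_ ?_ ?_
      · intro a ha
        simp only [Finset.mem_filter, Finset.mem_univ, true_and, hP] at ha
        simp only [Finset.mem_filter, Finset.mem_range]
        exact ⟨a.isLt, ha⟩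
      · intro a _ b _ hab
        exact Fin.ext hab
      · intro b hb
        simp only [Finset.mem_filter, Finset.mem_range] at hb
        refine ⟨⟨b, hb.1⟩, ?_, rfl⟩
        simp only [Finset.mem_filter, Finset.mem_univ, true_and, hP]
        exact hb.2
    clear_value bU W Φ wtf
    have hWlog : Real.log W = (bU : ℝ) * Real.log yr + ((n : ℝ) - bU) * Real.log xr := by
      rw [hWeq, Real.log_mul (pow_ne_zero _ (ne_of_gt hypos)) (pow_ne_zero _ (ne_of_gt hxpos)),
        Real.log_pow, Real.log_pow, Nat.cast_sub hble]
    have hprod : 0 ≤ ((bU : ℝ) - yr * n) * (Real.log yr - Real.log xr) := by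
      rcases eq_or_lt_of_le hk with hk3 | hk4
      · have hxv : xr = 1 / 4 := by rw [hxr, ← hk3]; norm_num
        have hyv : yr = 1 / 2 := by rw [hyr, ← hk3]; norm_num
        have hcount : n ≤ 2 * ((Finset.range n).filter
            (fun p => PermSepAux.colP k p = 1)).card := by
          rw [← hk3]
          exact PermSepAux.countB_ge n
        rw [← hbr] at hcount
        have hBc : (n : ℝ) ≤ 2 * (bU : ℝ) := by exact_mod_cast hcount
        have hlog : Real.log xr ≤ Real.log yr :=
          Real.log_le_log hxpos (by rw [hxv, hyv]; norm_num)
        apply mul_nonneg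
        · rw [hyv]; linarith
        · linarith
      · have hk4' : 4 ≤ k := hk4
        have hK4 : (4 : ℝ) ≤ (k : ℝ) := by exact_mod_cast hk4'
        have hcount := PermSepAux.countB_le k n hk4'
        rw [← hbr] at hcount
        have hBc : (bU : ℝ) * ((k : ℝ) - 1) ≤ (n : ℝ) := by
          have h2 := (Nat.cast_le (α := ℝ)).mpr hcount
          push_cast [Nat.cast_sub (show 1 ≤ k by omega)] at h2
          convert h2 using 2
        have hBy : (bU : ℝ) ≤ yr * n := by
          rw [hyr, div_mul_eq_mul_div, le_div_iff₀ hden]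
          nlinarith
        have hyx : yr ≤ xr := by
          rw [hxr, hyr, div_le_div_iff₀ hden hden]
          nlinarith
        have hlog : Real.log yr ≤ Real.log xr := Real.log_le_log hypos hyx
        have h := mul_nonneg (sub_nonneg.mpr hBy) (sub_nonneg.mpr hlog)
        nlinarith [h]
    have hl2 : Real.log 2 ≠ 0 := ne_of_gt (Real.log_pos one_lt_two)
    have hH2 : H * Real.log 2 = -(2 * xr * Real.log xr + yr * Real.log yr) := by
      rw [hHdef]
      simp only [ternaryEntropy, Real.logb]
      field_simp
      ring
    have key : (bU : ℝ) * Real.log yr + ((n : ℝ) - bU) * Real.log xr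
        = (n : ℝ) * (2 * xr * Real.log xr + yr * Real.log yr)
          + ((bU : ℝ) - yr * n) * (Real.log yr - Real.log xr) := by
      linear_combination (-((n : ℝ) * Real.log xr)) * hxy
    have hlogW : -(H * n) * Real.log 2 ≤ Real.log W := by
      rw [hWlog]
      have hrw : -(H * (n : ℝ)) * Real.log 2
          = (n : ℝ) * (2 * xr * Real.log xr + yr * Real.log yr) := by
        have : -(H * (n : ℝ)) * Real.log 2 = -((H * Real.log 2) * n) := by ring
        rw [this, hH2]; ring
      rw [hrw]
      linarith only [key, hprod]
    have hW2 : (2 : ℝ) ^ (-(H * (n : ℝ))) ≤ W := by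
      rw [← Real.log_le_log_iff (Real.rpow_pos_of_pos two_pos _) hWpos,
        Real.log_rpow two_pos]
      exact hlogW
    have h2pos : (0 : ℝ) < 2 ^ (H * (n : ℝ)) := Real.rpow_pos_of_pos two_pos _
    rw [← div_le_one h2pos, div_eq_mul_inv, ← Real.rpow_neg (by norm_num : (0:ℝ) ≤ 2)]
    calc (F.card : ℝ) * 2 ^ (-(H * (n : ℝ))) ≤ (F.card : ℝ) * W :=
          mul_le_mul_of_nonneg_left hW2 (Nat.cast_nonneg _)
      _ ≤ 1 := hcardW
  have hne : {m : ℕ | ∃ F : Finset (Equiv.Perm (Fin n)),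
      (↑F : Set (Equiv.Perm (Fin n))).Pairwise (NeighborSep n k) ∧ F.card = m}.Nonempty :=
    ⟨0, ∅, by simp, by simp⟩
  have hbdd : BddAbove {m : ℕ | ∃ F : Finset (Equiv.Perm (Fin n)),
      (↑F : Set (Equiv.Perm (Fin n))).Pairwise (NeighborSep n k) ∧ F.card = m} := by
    refine ⟨Fintype.card (Equiv.Perm (Fin n)), ?_⟩
    rintro m ⟨F, -, rfl⟩
    exact le_trans (Finset.card_le_univ F) (le_of_eq Finset.card_univ)
  obtain ⟨F, hF, hFcard⟩ := Nat.sSup_mem hne hbdd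
  have hp : permP n k = F.card := hFcard.symm
  rw [hp]
  exact main F hF
end

section
/- For every ε > 0 there exists an integer K such that for every k ≥ K and every n ≥ 1, P(n,k) ≤ (2+ε)^n. In other words, limsup_{k→∞} limsup_{n→∞} P(n,k)^{1/n} ≤ 2. -/
section Aux

private lemma flip_far (c : ℤ) (hc : 1 ≤ c) (a : ℤ) :
    ((a + c) % (2*c) < c) ↔ ¬ (a % (2*c) < c) := by
  have h2c : 0 < 2*c := by linarith
  have hr0 : 0 ≤ a % (2*c) := Int.emod_nonneg a (by omega)
  have hr1 : a % (2*c) < 2*c := Int.emod_lt_of_pos a h2c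
  have key : (a + c) % (2*c) = (a % (2*c) + c) % (2*c) := by
    conv_lhs => rw [Int.add_emod, Int.emod_eq_of_lt (by linarith) (by linarith : c < 2*c)]
  set r := a % (2*c) with hr
  rw [key]
  rcases lt_or_ge r c with h | h
  · have : (r + c) % (2*c) = r + c := Int.emod_eq_of_lt (by linarith) (by linarith)
    rw [this]
    constructor
    · intro h'; linarith
    · intro h'; exact absurd h h'
  · have h1 : (r + c) % (2*c) = (r - c) % (2*c) := by
      have : r + c = (r - c) + (2*c)*1 := by ring
      rw [this]; simp [Int.add_mul_emod_self_left]
    have h2 : (r - c) % (2*c) = r - c := Int.emod_eq_of_lt (by linarith) (by linarith)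
    rw [h1, h2]
    constructor
    · intro _ h'; linarith
    · intro _; linarith

private lemma flip_adj (c : ℤ) (hc : 1 ≤ c) (a : ℤ)
    (h : ¬ ((a % (2*c) < c) ↔ ((a+1) % (2*c) < c))) : a % c = c - 1 := by
  have h2c : 0 < 2*c := by linarith
  have hr0 : 0 ≤ a % (2*c) := Int.emod_nonneg a (by omega)
  have hr1 : a % (2*c) < 2*c := Int.emod_lt_of_pos a h2c
  have key : (a + 1) % (2*c) = (a % (2*c) + 1) % (2*c) := by
    conv_lhs => rw [Int.add_emod, Int.emod_eq_of_lt (by linarith) (by linarith : (1:ℤ) < 2*c)]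
  have hdvd : c ∣ 2*c := ⟨2, by ring⟩
  have hmm : a % (2*c) % c = a % c := Int.emod_emod_of_dvd a hdvd
  set r := a % (2*c) with hr
  rw [key] at h
  rcases lt_or_ge (r + 1) (2*c) with h' | h'
  · have : (r + 1) % (2*c) = r + 1 := Int.emod_eq_of_lt (by linarith) h'
    rw [this] at h
    have hrc : r = c - 1 := by
      by_contra hne
      exact h (by constructor <;> intro <;> omega)
    rw [← hmm, hrc]
    exact Int.emod_eq_of_lt (by linarith) (by linarith)
  · have hrv : r = 2*c - 1 := by omega
    rw [← hmm, hrv]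
    have : (2*c - 1) % c = (c - 1 + c * 1) % c := by ring_nf
    rw [this, Int.add_mul_emod_self_left]
    exact Int.emod_eq_of_lt (by linarith) (by linarith)

/-- auxiliary coloring -/
private def gfun (n : ℕ) (c s : ℤ) (π : Equiv.Perm (Fin n)) (x : Fin n) : Bool :=
  decide ((((π.symm x : ℤ)) - s) % (2*c) < c)

private lemma gfun_adj (n : ℕ) (c : ℤ) (hc : 2 ≤ c) (π : Equiv.Perm (Fin n)) (x y : Fin n)
    (h1 : ((π.symm x : ℤ) - (π.symm y : ℤ)).natAbs = 1) :
    gfun n c 0 π x = gfun n c 0 π y ∨ gfun n c 1 π x = gfun n c 1 π y := by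
  by_contra hcon
  push_neg at hcon
  obtain ⟨h0, h1'⟩ := hcon
  set p : ℤ := (π.symm x : ℤ) with hp
  set q : ℤ := (π.symm y : ℤ) with hq
  have key : ∀ m : ℤ, ∀ s : ℤ, ({p, q} : Set ℤ) = {m, m+1} →
      gfun n c s π x ≠ gfun n c s π y → (m - s) % c = c - 1 := by
    intro m s hm hne
    have hne' : ¬ (((p - s) % (2*c) < c) ↔ ((q - s) % (2*c) < c)) := by
      simpa [gfun, decide_eq_decide] using hne
    apply flip_adj c (by linarith) (m - s)
    have hpair : (p = m ∧ q = m + 1) ∨ (p = m + 1 ∧ q = m) := by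
      have h1 : p ∈ ({m, m+1} : Set ℤ) := hm ▸ (by simp)
      have h2 : q ∈ ({m, m+1} : Set ℤ) := hm ▸ (by simp)
      have h3 : m ∈ ({p, q} : Set ℤ) := hm ▸ (by simp)
      have h4 : m + 1 ∈ ({p, q} : Set ℤ) := hm ▸ (by simp)
      simp only [Set.mem_insert_iff, Set.mem_singleton_iff] at h1 h2 h3 h4
      omega
    have harg : m - s + 1 = m + 1 - s := by ring
    rw [harg]
    rcases hpair with ⟨e1, e2⟩ | ⟨e1, e2⟩
    · rw [e1, e2] at hne'; exact hne'
    · rw [e1, e2] at hne'; exact fun h => hne' h.symm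
  have hm : ∃ m : ℤ, ({p, q} : Set ℤ) = {m, m+1} := by
    rcases (by omega : q = p + 1 ∨ p = q + 1) with h | h
    · exact ⟨p, by rw [h]⟩
    · exact ⟨q, by rw [h, Set.pair_comm]⟩
  obtain ⟨m, hm⟩ := hm
  have k0 := key m 0 hm h0
  have k1 := key m 1 hm h1'
  simp only [sub_zero] at k0
  have hdiff : (m - (m-1)) % c = ((m % c) - ((m-1) % c)) % c := Int.sub_emod m (m-1) c
  rw [k0, k1] at hdiff
  simp only [sub_sub_cancel, sub_self] at hdiff
  rw [Int.emod_eq_of_lt (by linarith) (by linarith)] at hdiff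
  simp at hdiff

private lemma gfun_far (n : ℕ) (c : ℤ) (hc : 2 ≤ c) (σ : Equiv.Perm (Fin n)) (x y : Fin n) (s : ℤ)
    (h2 : ((σ.symm x : ℤ) - (σ.symm y : ℤ)).natAbs = c.natAbs) :
    gfun n c s σ x ≠ gfun n c s σ y := by
  set u : ℤ := (σ.symm x : ℤ) with hu
  set v : ℤ := (σ.symm y : ℤ) with hv
  simp only [gfun, ne_eq, decide_eq_decide]
  rw [← hu, ← hv]
  have hcase : v = u + c ∨ u = v + c := by omega
  rcases hcase with h | h
  · rw [h]
    have := flip_far c (by linarith) (u - s)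
    intro hiff
    rw [(by ring : u + c - s = (u - s) + c)] at hiff
    rw [this] at hiff
    tauto
  · rw [h]
    have := flip_far c (by linarith) (v - s)
    intro hiff
    rw [(by ring : v + c - s = (v - s) + c)] at hiff
    rw [this] at hiff
    tauto

private lemma gfun_diff_dvd (n : ℕ) (c : ℤ) (hc : 2 ≤ c) (π : Equiv.Perm (Fin n)) (x : Fin n)
    (h : gfun n c 0 π x ≠ gfun n c 1 π x) : c ∣ (π.symm x : ℤ) := by
  set p : ℤ := (π.symm x : ℤ) with hp
  have hne' : ¬ (((p - 1) % (2*c) < c) ↔ (p % (2*c) < c)) := by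
    have : ¬ ((p % (2*c) < c) ↔ ((p - 1) % (2*c) < c)) := by
      simpa [gfun, decide_eq_decide, sub_zero] using h
    exact fun hh => this hh.symm
  have := flip_adj c (by linarith) (p - 1) (by
    rw [(by ring : p - 1 + 1 = p)]; exact hne')
  have hdm := Int.mul_ediv_add_emod (p-1) c
  rw [this] at hdm
  exact ⟨(p-1)/c + 1, by linarith⟩

end Aux

theorem permP_limsup_le_two :
    ∀ ε : ℝ, 0 < ε → ∃ K : ℕ, ∀ k : ℕ, K ≤ k → ∀ n : ℕ, 1 ≤ n →
      (permP n k : ℝ) ≤ (2 + ε) ^ n := by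
  intro ε hε
  set δ : ℝ := min ε 1 with hδdef
  have hδ0 : 0 < δ := lt_min hε one_pos
  have hδ1 : δ ≤ 1 := min_le_right _ _
  have hδε : δ ≤ ε := min_le_left _ _
  set β : ℝ := δ/10 with hβdef
  have hβ0 : 0 < β := by positivity
  have hβ1 : β ≤ 1 := by rw [hβdef]; linarith
  set L : ℝ := Real.log (1/β) with hLdef
  have hL0 : 0 < L := Real.log_pos (by rw [lt_div_iff₀ hβ0]; linarith)
  set M : ℝ := Real.log (1 + δ/4) with hMdef
  have hM0 : 0 < M := Real.log_pos (by linarith)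
  refine ⟨max 3 (⌈2*L/M⌉₊ + 1), ?_⟩
  intro k hk n hn
  have hk3 : 3 ≤ k := le_trans (le_max_left _ _) hk
  have hkc : (⌈2*L/M⌉₊ + 1) ≤ k := le_trans (le_max_right _ _) hk
  have h2ε : (1:ℝ) ≤ 2 + ε := by linarith
  -- extract an extremal family
  have hmem : permP n k ∈ {m : ℕ | ∃ F : Finset (Equiv.Perm (Fin n)),
      (F : Set (Equiv.Perm (Fin n))).Pairwise (NeighborSep n k) ∧ F.card = m} := by
    apply Nat.sSup_mem
    · exact ⟨0, ∅, by simp, by simp⟩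
    · exact ⟨(Finset.univ : Finset (Equiv.Perm (Fin n))).card,
        by rintro m ⟨F, -, rfl⟩; exact Finset.card_le_univ F⟩
  obtain ⟨F, hF, hFcard⟩ := hmem
  rw [← hFcard]
  by_cases hnk : n < k
  · -- trivial case: no two permutations can be separated
    have hcard1 : F.card ≤ 1 := by
      rw [Finset.card_le_one]
      intro a ha b hb
      by_contra hne
      obtain ⟨x, y, hxy⟩ := hF (Finset.mem_coe.mpr ha) (Finset.mem_coe.mpr hb) hne
      have e1 : ((a.symm x : ℕ)) < n := (a.symm x).is_lt
      have e2 : ((a.symm y : ℕ)) < n := (a.symm y).is_lt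
      have e3 : ((b.symm x : ℕ)) < n := (b.symm x).is_lt
      have e4 : ((b.symm y : ℕ)) < n := (b.symm y).is_lt
      rcases hxy with ⟨-, h2⟩ | ⟨-, h2⟩ <;> omega
    calc (F.card : ℝ) ≤ 1 := by exact_mod_cast hcard1
      _ = 1^n := (one_pow n).symm
      _ ≤ (2+ε)^n := pow_le_pow_left₀ (by norm_num) h2ε n
  · push_neg at hnk
    set c : ℤ := (k : ℤ) - 1 with hcdef
    have hc2 : 2 ≤ c := by omega
    set t : ℕ := n/(k-1) + 1 with htdef
    have htn : t ≤ n := by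
      have h1 : n/(k-1) ≤ n/2 := Nat.div_le_div_left (by omega) (by omega)
      omega
    -- the difference set
    set D : Equiv.Perm (Fin n) → Finset (Fin n) :=
      fun π => Finset.univ.filter (fun x => gfun n c 0 π x ≠ gfun n c 1 π x) with hDdef
    have hDcard : ∀ π, (D π).card ≤ t := by
      intro π
      have h := Finset.card_le_card_of_injOn (s := D π) (t := Finset.range t)
        (fun x => ((π.symm x : ℕ))/(k-1)) ?_ ?_
      · simpa using h
      · intro x hx
        rw [Finset.mem_coe, Finset.mem_range]
        show ((π.symm x : ℕ))/(k-1) < t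
        have h1 : ((π.symm x : ℕ)) < n := (π.symm x).is_lt
        have h2 : ((π.symm x : ℕ))/(k-1) ≤ n/(k-1) := Nat.div_le_div_right (by omega)
        omega
      · intro x hx y hy hxy
        have hdx : c ∣ ((π.symm x : ℕ) : ℤ) := gfun_diff_dvd n c hc2 π x (by
          simpa [hDdef, Finset.mem_filter] using hx)
        have hdy : c ∣ ((π.symm y : ℕ) : ℤ) := gfun_diff_dvd n c hc2 π y (by
          simpa [hDdef, Finset.mem_filter] using hy)
        have hdx' : (k-1) ∣ ((π.symm x : ℕ)) := by
          have : ((k-1 : ℕ) : ℤ) ∣ ((π.symm x : ℕ) : ℤ) := by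
            convert hdx using 1; omega
          exact_mod_cast this
        have hdy' : (k-1) ∣ ((π.symm y : ℕ)) := by
          have : ((k-1 : ℕ) : ℤ) ∣ ((π.symm y : ℕ) : ℤ) := by
            convert hdy using 1; omega
          exact_mod_cast this
        have heq : ((π.symm x : ℕ)) = ((π.symm y : ℕ)) := by
          have h1 := Nat.div_mul_cancel hdx'
          have h2 := Nat.div_mul_cancel hdy'
          simp only at hxy
          rw [← h1, ← h2, hxy]
        have : π.symm x = π.symm y := Fin.ext heq
        exact π.symm.injective this
    set T : Finset (Finset (Fin n)) :=
      (Finset.range (t+1)).biUnion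
        (fun j => Finset.powersetCard j (Finset.univ : Finset (Fin n))) with hTdef
    -- main injectivity
    have hinj : F.card ≤ ((Finset.univ : Finset (Fin n → Bool)) ×ˢ T).card := by
      apply Finset.card_le_card_of_injOn (fun π => (gfun n c 0 π, D π))
      · intro π hπ
        rw [Finset.mem_coe, Finset.mem_product]
        constructor
        · exact Finset.mem_univ _
        · rw [hTdef, Finset.mem_biUnion]
          exact ⟨(D π).card, Finset.mem_range.mpr (Nat.lt_succ_of_le (hDcard π)),
            Finset.mem_powersetCard.mpr ⟨Finset.subset_univ _, rfl⟩⟩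
      · intro π hπ σ hσ heq
        simp only [Prod.mk.injEq] at heq
        obtain ⟨hg0, hDeq⟩ := heq
        -- derive equality of the second coloring
        have hg1 : gfun n c 1 π = gfun n c 1 σ := by
          funext z
          by_cases hz : z ∈ D π
          · have hz' : z ∈ D σ := hDeq ▸ hz
            have a1 : gfun n c 0 π z ≠ gfun n c 1 π z := by
              simpa [hDdef, Finset.mem_filter] using hz
            have a2 : gfun n c 0 σ z ≠ gfun n c 1 σ z := by
              simpa [hDdef, Finset.mem_filter] using hz'
            have e0 : gfun n c 0 π z = gfun n c 0 σ z := congrFun hg0 z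
            revert a1 a2 e0
            cases gfun n c 1 π z <;> cases gfun n c 1 σ z <;>
              cases gfun n c 0 π z <;> cases gfun n c 0 σ z <;> simp
          · have hz' : z ∉ D σ := hDeq ▸ hz
            have a1 : gfun n c 0 π z = gfun n c 1 π z := by
              by_contra hcon
              exact hz (by simp [hDdef, Finset.mem_filter, hcon])
            have a2 : gfun n c 0 σ z = gfun n c 1 σ z := by
              by_contra hcon
              exact hz' (by simp [hDdef, Finset.mem_filter, hcon])
            rw [← a1, ← a2]
            exact congrFun hg0 z
        by_contra hne
        have hmain : ∀ π' σ' : Equiv.Perm (Fin n),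
            gfun n c 0 π' = gfun n c 0 σ' → gfun n c 1 π' = gfun n c 1 σ' →
            ∀ x y : Fin n,
            ¬ (((π'.symm x : ℤ) - (π'.symm y : ℤ)).natAbs = 1 ∧
               ((σ'.symm x : ℤ) - (σ'.symm y : ℤ)).natAbs = k - 1) := by
          intro π' σ' e0 e1 x y ⟨hadj, hfar⟩
          have hfar' : ((σ'.symm x : ℤ) - (σ'.symm y : ℤ)).natAbs = c.natAbs := by omega
          rcases gfun_adj n c hc2 π' x y hadj with h | h
          · exact gfun_far n c hc2 σ' x y 0 hfar'
              (by rw [← congrFun e0 x, ← congrFun e0 y]; exact h)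
          · exact gfun_far n c hc2 σ' x y 1 hfar'
              (by rw [← congrFun e1 x, ← congrFun e1 y]; exact h)
        obtain ⟨x, y, hxy⟩ := hF (Finset.mem_coe.mpr hπ) (Finset.mem_coe.mpr hσ) hne
        rcases hxy with hxy | hxy
        · exact hmain π σ hg0 hg1 x y hxy
        · exact hmain σ π hg0.symm hg1.symm x y hxy
    -- counting
    have hcount : F.card ≤ 2^n * ∑ j ∈ Finset.range (t+1), n.choose j := by
      refine hinj.trans ?_
      rw [Finset.card_product]
      apply Nat.mul_le_mul
      · apply le_of_eq
        rw [Finset.card_univ]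
        simp
      · rw [hTdef]
        refine (Finset.card_biUnion_le).trans ?_
        apply Finset.sum_le_sum
        intro j _
        rw [Finset.card_powersetCard]
        simp
    -- now the real-number estimates
    have hreal : (F.card : ℝ) ≤ 2^n * ∑ j ∈ Finset.range (t+1), (n.choose j : ℝ) := by
      have := hcount
      exact_mod_cast this
    have hsum : (∑ j ∈ Finset.range (t+1), (n.choose j : ℝ)) ≤ (1+β)^n * (β⁻¹)^t := by
      have h1 : (∑ j ∈ Finset.range (t+1), (n.choose j : ℝ)) * β^t
          ≤ ∑ j ∈ Finset.range (t+1), (n.choose j : ℝ) * β^j := by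
        rw [Finset.sum_mul]
        apply Finset.sum_le_sum
        intro j hj
        have hjt : j ≤ t := Nat.lt_succ_iff.mp (Finset.mem_range.mp hj)
        exact mul_le_mul_of_nonneg_left (pow_le_pow_of_le_one hβ0.le hβ1 hjt)
          (by positivity)
      have h2 : ∑ j ∈ Finset.range (t+1), (n.choose j : ℝ) * β^j
          ≤ ∑ j ∈ Finset.range (n+1), (n.choose j : ℝ) * β^j := by
        apply Finset.sum_le_sum_of_subset_of_nonneg
        · exact Finset.range_subset_range.mpr (by omega)
        · intro j _ _; positivity
      have h3 : (1+β)^n = ∑ j ∈ Finset.range (n+1), (n.choose j : ℝ) * β^j := by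
        rw [add_comm (1:ℝ) β, add_pow]
        apply Finset.sum_congr rfl
        intro j _
        rw [one_pow]
        ring
      have h4 : (∑ j ∈ Finset.range (t+1), (n.choose j : ℝ)) * β^t ≤ (1+β)^n := by
        calc _ ≤ _ := h1
          _ ≤ _ := h2
          _ = _ := h3.symm
      have hβt : (0:ℝ) < β^t := pow_pos hβ0 t
      calc (∑ j ∈ Finset.range (t+1), (n.choose j : ℝ))
          = (∑ j ∈ Finset.range (t+1), (n.choose j : ℝ)) * β^t * (β⁻¹)^t := by
            rw [mul_assoc, ← mul_pow]
            simp [mul_inv_cancel₀ (ne_of_gt hβ0)]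
        _ ≤ (1+β)^n * (β⁻¹)^t := by
            apply mul_le_mul_of_nonneg_right h4 (by positivity)
    have hβpow : (β⁻¹)^t ≤ (1 + δ/4)^n := by
      have e1 : β⁻¹ = Real.exp L := by
        rw [hLdef, Real.exp_log (by positivity), one_div]
      have e2 : (1 + δ/4) = Real.exp M := (Real.exp_log (by linarith)).symm
      rw [e1, e2, ← Real.exp_nat_mul, ← Real.exp_nat_mul]
      apply Real.exp_le_exp.mpr
      -- t * L ≤ n * M
      have hkpos : (0:ℝ) < (k:ℝ) - 1 := by
        have : (3:ℝ) ≤ (k:ℝ) := by exact_mod_cast hk3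
        linarith
      have ht2 : (t:ℝ) * ((k:ℝ)-1) ≤ 2*n := by
        have hcast : ((n/(k-1) : ℕ) : ℝ) ≤ (n:ℝ) / (((k-1:ℕ)):ℝ) := Nat.cast_div_le
        have hk1 : (((k-1:ℕ)):ℝ) = (k:ℝ) - 1 := by
          have : (1:ℕ) ≤ k := by omega
          push_cast [Nat.cast_sub this]
          ring
        rw [hk1] at hcast
        have h5 : (t:ℝ) = ((n/(k-1) : ℕ) : ℝ) + 1 := by
          rw [htdef]; push_cast; ring
        have h6 : ((n/(k-1) : ℕ) : ℝ) * ((k:ℝ)-1) ≤ n := by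
          rw [← le_div_iff₀ hkpos] at *
          exact hcast
        have h7 : (k:ℝ) - 1 ≤ n := by
          have : (k:ℝ) ≤ (n:ℝ) := by exact_mod_cast hnk
          linarith
        rw [h5]
        nlinarith
      have hkM : 2*L ≤ M * ((k:ℝ)-1) := by
        have h8 : (2*L/M) ≤ ((⌈2*L/M⌉₊ : ℕ) : ℝ) := Nat.le_ceil _
        have h9 : ((⌈2*L/M⌉₊ : ℕ) : ℝ) ≤ (k:ℝ) - 1 := by
          have : ⌈2*L/M⌉₊ + 1 ≤ k := hkc
          have h10 : ((⌈2*L/M⌉₊ : ℕ) : ℝ) + 1 ≤ (k:ℝ) := by exact_mod_cast this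
          linarith
        have h11 : 2*L/M ≤ (k:ℝ) - 1 := h8.trans h9
        rw [div_le_iff₀ hM0] at h11
        linarith [mul_comm M ((k:ℝ)-1)]
      have hkpos' : (0:ℝ) < (k:ℝ) - 1 := hkpos
      have hn0 : (0:ℝ) ≤ (n:ℝ) := Nat.cast_nonneg n
      have ht0 : (0:ℝ) ≤ (t:ℝ) := Nat.cast_nonneg t
      have a1 : (t:ℝ)*((k:ℝ)-1)*L ≤ 2*(n:ℝ)*L := by
        have := mul_le_mul_of_nonneg_right ht2 hL0.le
        linarith [this]
      have a2 : (n:ℝ)*(2*L) ≤ (n:ℝ)*(M*((k:ℝ)-1)) := mul_le_mul_of_nonneg_left hkM hn0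
      have hstep : (t:ℝ)*L*((k:ℝ)-1) ≤ (n:ℝ)*M*((k:ℝ)-1) := by
        ring_nf at a1 a2 ⊢
        linarith
      exact le_of_mul_le_mul_right hstep hkpos
    -- combine
    have hfinal : (F.card : ℝ) ≤ (2 * (1+β) * (1+δ/4))^n := by
      calc (F.card : ℝ) ≤ 2^n * ∑ j ∈ Finset.range (t+1), (n.choose j : ℝ) := hreal
        _ ≤ 2^n * ((1+β)^n * (β⁻¹)^t) := by
            apply mul_le_mul_of_nonneg_left hsum (by positivity)
        _ ≤ 2^n * ((1+β)^n * (1+δ/4)^n) := by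
            apply mul_le_mul_of_nonneg_left
              (mul_le_mul_of_nonneg_left hβpow (by positivity)) (by positivity)
        _ = (2 * (1+β) * (1+δ/4))^n := by
            rw [← mul_pow, ← mul_pow]
            ring_nf
    have hbase : 2 * (1+β) * (1+δ/4) ≤ 2 + ε := by
      rw [hβdef]
      nlinarith
    calc (F.card : ℝ) ≤ (2 * (1+β) * (1+δ/4))^n := hfinal
      _ ≤ (2+ε)^n := pow_le_pow_left₀ (by positivity) hbase n
end

section
/- For every even integer n ≥ 4, there exist three perfect matchings M₁, M₂, M₃ of the complete graph K_n on n vertices such that each of the three pairwise unions M₁ ∪ M₂, M₁ ∪ M₃ and M₂ ∪ M₃ is a Hamiltonian cycle of K_n. -/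
open SimpleGraph

/-- A simple graph on `Fin n` is a perfect matching if every vertex has a unique neighbor. -/
def IsPerfectMatchingGraph {n : ℕ} (M : SimpleGraph (Fin n)) : Prop :=
  ∀ v : Fin n, ∃! w : Fin n, M.Adj v w

/-- `G` is (the edge graph of) a Hamiltonian cycle of the complete graph on `Fin n`:
it is the image of the cycle graph under a relabelling of the vertices. -/
def IsHamCycleGraph {n : ℕ} (G : SimpleGraph (Fin n)) : Prop :=
  ∃ σ : Fin n ≃ Fin n, G = (cycleGraph n).map σ.toEmbedding

namespace TMHC

/-! ### Generic matchings from involutions -/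

/-- The matching graph of a function `f`. -/
def matchG {n : ℕ} (f : Fin n → Fin n) : SimpleGraph (Fin n) :=
  SimpleGraph.fromRel (fun u v => v = f u)

lemma matchG_adj {n : ℕ} {f : Fin n → Fin n} (hinv : Function.Involutive f)
    (hfp : ∀ x, f x ≠ x) {u v : Fin n} : (matchG f).Adj u v ↔ v = f u := by
  rw [matchG, fromRel_adj]
  constructor
  · rintro ⟨hne, h | h⟩
    · exact h
    · rw [h]; exact (hinv v).symm
  · intro h
    refine ⟨fun he => hfp u ?_, Or.inl h⟩
    rw [← he] at h; exact h.symm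
  
lemma matchG_pm {n : ℕ} {f : Fin n → Fin n} (hinv : Function.Involutive f)
    (hfp : ∀ x, f x ≠ x) : IsPerfectMatchingGraph (matchG f) := by
  intro v
  exact ⟨f v, (matchG_adj hinv hfp).2 rfl, fun w hw => (matchG_adj hinv hfp).1 hw⟩

lemma cg_adj {n : ℕ} [NeZero n] (hn : 2 ≤ n) {p r : Fin n} :
    (cycleGraph n).Adj p r ↔ r = p + 1 ∨ p = r + 1 := by
  rw [cycleGraph_adj']
  have h1 : (1 : Fin n).val = 1 := by
    rw [Fin.val_one']; exact Nat.mod_eq_of_lt (by omega)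
  have key : ∀ a b : Fin n, (a - b).val = 1 ↔ a = b + 1 := by
    intro a b
    rw [← h1, Fin.val_eq_val, sub_eq_iff_eq_add, add_comm]
  rw [key, key]
  tauto

/-- The main abstract lemma: if `σ` enumerates a cycle alternating between `f`-edges and
`g`-edges, then the union of the two matchings is the relabelled cycle graph. -/
lemma union_eq_map {n : ℕ} [NeZero n] (hn : 2 ≤ n) (f g : Fin n → Fin n)
    (hfi : Function.Involutive f) (hgi : Function.Involutive g)
    (hff : ∀ x, f x ≠ x) (hgf : ∀ x, g x ≠ x)
    (σ : Fin n ≃ Fin n)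
    (h1 : ∀ p : Fin n, p.val % 2 = 0 → f (σ p) = σ (p + 1))
    (h2 : ∀ p : Fin n, p.val % 2 = 1 → f (σ p) = σ (p - 1))
    (h3 : ∀ p : Fin n, p.val % 2 = 0 → g (σ p) = σ (p - 1))
    (h4 : ∀ p : Fin n, p.val % 2 = 1 → g (σ p) = σ (p + 1)) :
    matchG f ⊔ matchG g = (cycleGraph n).map σ.toEmbedding := by
  ext u v
  rw [sup_adj, matchG_adj hfi hff, matchG_adj hgi hgf, SimpleGraph.map_adj]
  simp only [Equiv.coe_toEmbedding]
  constructor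
  · rintro (rfl | rfl)
    · -- v = f u
      rcases Nat.mod_two_eq_zero_or_one (σ.symm u).val with hp | hp
      · refine ⟨σ.symm u, σ.symm u + 1, (cg_adj hn).2 (Or.inl rfl), σ.apply_symm_apply u, ?_⟩
        rw [← h1 _ hp, σ.apply_symm_apply]
      · refine ⟨σ.symm u, σ.symm u - 1, (cg_adj hn).2 (Or.inr (by rw [sub_add_cancel])),
          σ.apply_symm_apply u, ?_⟩
        rw [← h2 _ hp, σ.apply_symm_apply]
    · -- v = g u
      rcases Nat.mod_two_eq_zero_or_one (σ.symm u).val with hp | hp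
      · refine ⟨σ.symm u, σ.symm u - 1, (cg_adj hn).2 (Or.inr (by rw [sub_add_cancel])),
          σ.apply_symm_apply u, ?_⟩
        rw [← h3 _ hp, σ.apply_symm_apply]
      · refine ⟨σ.symm u, σ.symm u + 1, (cg_adj hn).2 (Or.inl rfl), σ.apply_symm_apply u, ?_⟩
        rw [← h4 _ hp, σ.apply_symm_apply]
  · rintro ⟨a, b, hab, rfl, rfl⟩
    rcases (cg_adj hn).1 hab with hb | hb
    · -- b = a + 1
      rcases Nat.mod_two_eq_zero_or_one a.val with hp | hp
      · left; rw [hb, ← h1 _ hp]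
      · right; rw [hb, ← h4 _ hp]
    · -- a = b + 1, i.e. b = a - 1
      have hb' : b = a - 1 := by rw [hb, add_sub_cancel_right]
      rcases Nat.mod_two_eq_zero_or_one a.val with hp | hp
      · right; rw [hb', ← h3 _ hp]
      · left; rw [hb', ← h2 _ hp]

/-! ### Arithmetic helpers -/

lemma dvd_small {q t : ℕ} (h : q ∣ t) (ht : t < 2 * q) : t = 0 ∨ t = q := by
  obtain ⟨c, rfl⟩ := h
  match c with
  | 0 => left; simp
  | 1 => right; simp
  | (c+2) =>
    exfalso
    have : q * (c + 2) = q * c + 2 * q := by ring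
    omega

lemma meq {q a b : ℕ} (hq : 0 < q) (h : a ≡ b [MOD q]) (hab : a ≤ b) (hb : b - a < q) :
    a = b := by
  have hdv := (Nat.modEq_iff_dvd' hab).1 h
  rcases Nat.eq_zero_or_pos (b - a) with h0 | h0
  · omega
  · have := Nat.le_of_dvd h0 hdv; omega

/-! ### The round-robin construction -/

/-- The involution of the `r`-th round of the round-robin tournament on `Z_q ∪ {∞}`:
`∞ ↔ r` and `y ↔ 2r - y`. -/
def rcF (q : ℕ) (r : ZMod q) : Option (ZMod q) → Option (ZMod q)
  | none => some r
  | some y => if y = r then none else some (2*r - y)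

lemma rcF_inv (q : ℕ) (r : ZMod q) : Function.Involutive (rcF q r) := by
  rintro (_ | y)
  · simp [rcF]
  · by_cases h : y = r
    · simp [rcF, h]
    · have h2 : ¬ (2*r - y = r) := by
        intro he
        exact h (by linear_combination -he)
      simp only [rcF, if_neg h, if_neg h2]
      congr 1; ring

lemma rcF_fpf (q : ℕ) (h2 : IsUnit (2 : ZMod q)) (r : ZMod q) : ∀ x, rcF q r x ≠ x := by
  rintro (_ | y)
  · simp [rcF]
  · by_cases h : y = r
    · simp [rcF, h]
    · simp only [rcF, if_neg h]
      intro he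
      apply h
      have he' := Option.some.inj he
      have h3 : 2 * y = 2 * r := by linear_combination -he'
      exact h2.mul_right_inj.mp h3

/-- The exponent function: position `p` in the Hamiltonian cycle sits at `r + ee p * d`. -/
def ee (q : ℕ) (j : ℕ) : ZMod q := if j % 2 = 0 then (j : ZMod q) else 1 - (j : ZMod q)

/-- The enumeration of the Hamiltonian cycle `∞, r, r+2d, r-2d, r+4d, …, r+d`. -/
def tau (q : ℕ) (r d : ZMod q) (p : Fin (q+1)) : Option (ZMod q) :=
  if p.val = 0 then none else some (r + ee q p.val * d)

/-- The explicit equivalence `Option (ZMod q) ≃ Fin (q+1)`, sending `none` to the last element. -/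
def eqv (q : ℕ) [NeZero q] : Option (ZMod q) ≃ Fin (q+1) where
  toFun x := match x with
    | none => Fin.last q
    | some y => ⟨y.val, by have := ZMod.val_lt y; omega⟩
  invFun p := if h : p.val < q then some ((p.val : ℕ) : ZMod q) else none
  left_inv := by
    rintro (_ | y)
    · simp [Fin.last]
    · have hy := ZMod.val_lt y
      simp only [hy, dif_pos]
      rw [ZMod.natCast_rightInverse y]
  right_inv := by
    intro p
    have hp := p.isLt
    by_cases h : p.val < q
    · simp only [dif_pos h]
      exact Fin.ext (ZMod.val_cast_of_lt h)
    · simp only [dif_neg h]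
      exact Fin.ext (by show q = p.val; omega)


section

variable {q : ℕ} [NeZero q] (hq3 : 3 ≤ q) (hodd : q % 2 = 1)

lemma val_add_one (p : Fin (q+1)) : (p+1).val = if p.val = q then 0 else p.val + 1 := by
  have hq0 : 0 < q := Nat.pos_of_ne_zero (NeZero.ne q)
  rw [Fin.add_def]
  show (p.val + (1 : Fin (q+1)).val) % (q+1) = _
  rw [Fin.val_one']
  have hp := p.isLt
  have h1 : 1 % (q+1) = 1 := Nat.mod_eq_of_lt (by omega)
  rw [h1]
  rcases eq_or_ne p.val q with he|he
  · rw [if_pos he, he, Nat.mod_self]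
  · rw [if_neg he]; exact Nat.mod_eq_of_lt (by omega)

lemma val_sub_one (p : Fin (q+1)) : (p-1).val = if p.val = 0 then q else p.val - 1 := by
  have := Fin.coe_sub_one p
  rcases eq_or_ne p.val 0 with he|he
  · have hp0 : p = 0 := by exact Fin.ext he
    rw [if_pos he, this, if_pos hp0]
  · have hp0 : p ≠ 0 := fun h => he (by rw [h]; rfl)
    rw [if_neg he, this, if_neg hp0]

lemma cast_ne_zero {j : ℕ} (h1 : 0 < j) (h2 : j < q) : (j : ZMod q) ≠ 0 := by
  intro h
  have := (ZMod.natCast_eq_zero_iff j q).mp h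
  have := Nat.le_of_dvd h1 this
  omega

lemma cast_ne_cast {i j : ℕ} (hij : i < j) (h2 : j - i < q) : (i : ZMod q) ≠ (j : ZMod q) := by
  intro h
  have := meq (by omega) ((ZMod.natCast_eq_natCast_iff i j q).mp h) (by omega) h2
  omega

variable {d : ZMod q} (hd : IsUnit d)

include hodd hd in
lemma tau_inj (r : ZMod q) : Function.Injective (tau q r d) := by
  intro p p' h
  have hp := p.isLt
  have hp' := p'.isLt
  unfold tau at h
  by_cases h0 : p.val = 0 <;> by_cases h0' : p'.val = 0
  · exact Fin.ext (by omega)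
  · rw [if_pos h0, if_neg h0'] at h; exact absurd h (by simp)
  · rw [if_neg h0, if_pos h0'] at h; exact absurd h (by simp)
  · rw [if_neg h0, if_neg h0'] at h
    have h' : ee q p.val = ee q p'.val := by
      have := Option.some.inj h
      have h2 : ee q p.val * d = ee q p'.val * d := by
        have := congrArg (fun z => z - r) this
        simpa using this
      exact hd.mul_left_inj.mp h2
    apply Fin.ext
    unfold ee at h'
    have hmeq : ∀ a b : ℕ, (a : ZMod q) = (b : ZMod q) → a ≡ b [MOD q] := by
      intro a b hab; exact (ZMod.natCast_eq_natCast_iff a b q).mp hab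
    rcases Nat.mod_two_eq_zero_or_one p.val with hpar | hpar <;>
      rcases Nat.mod_two_eq_zero_or_one p'.val with hpar' | hpar'
    · -- both even, both ≤ q - 1
      rw [if_pos hpar, if_pos hpar'] at h'
      have := hmeq _ _ h'
      rcases Nat.le_total p.val p'.val with hle | hle
      · exact meq (by omega) this hle (by omega)
      · exact (meq (by omega) this.symm hle (by omega)).symm
    · -- p even, p' odd
      exfalso
      rw [if_pos hpar, if_neg (by omega)] at h'
      have hsum : ((p.val + p'.val : ℕ) : ZMod q) = ((1 : ℕ) : ZMod q) := by
        push_cast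
        rw [h']; ring
      have := (Nat.modEq_iff_dvd' (by omega)).1 (hmeq _ _ hsum).symm
      rcases dvd_small this (by omega) with h | h <;> omega
    · -- p odd, p' even
      exfalso
      rw [if_neg (by omega), if_pos hpar'] at h'
      have hsum : ((p'.val + p.val : ℕ) : ZMod q) = ((1 : ℕ) : ZMod q) := by
        push_cast
        rw [← h']; ring
      have := (Nat.modEq_iff_dvd' (by omega)).1 (hmeq _ _ hsum).symm
      rcases dvd_small this (by omega) with h | h <;> omega
    · -- both odd, both ≤ q
      rw [if_neg (by omega), if_neg (by omega)] at h'
      have hc : (p.val : ZMod q) = (p'.val : ZMod q) := by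
        have := congrArg (fun z => 1 - z) h'
        simpa using this
      have := hmeq _ _ hc
      rcases Nat.le_total p.val p'.val with hle | hle
      · exact meq (by omega) this hle (by omega)
      · exact (meq (by omega) this.symm hle (by omega)).symm

include hq3 hodd hd in
lemma key1 (r : ZMod q) (p : Fin (q+1)) (hp : p.val % 2 = 0) :
    rcF q r (tau q r d p) = tau q r d (p+1) := by
  have hlt := p.isLt
  have hv1 := val_add_one p
  by_cases h0 : p.val = 0
  · rw [if_neg (by omega)] at hv1
    rw [tau, if_pos h0]
    show some r = _
    rw [tau, hv1, if_neg (by omega), ee, if_neg (by omega)]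
    congr 1
    rw [h0]
    push_cast
    ring
  · -- p even, 2 ≤ p.val ≤ q - 1
    rw [if_neg (by omega)] at hv1
    rw [tau, if_neg h0, ee, if_pos hp]
    have hne : ¬ (r + ((p.val : ℕ) : ZMod q) * d = r) := by
      intro h
      have h2 : ((p.val : ℕ) : ZMod q) * d = 0 * d := by linear_combination h
      exact cast_ne_zero (by omega) (by omega) (hd.mul_left_inj.mp h2)
    rw [rcF, if_neg hne]
    rw [tau, hv1, if_neg (by omega), ee, if_neg (by omega)]
    congr 1
    push_cast
    ring

include hq3 hodd hd in
lemma key2 (r : ZMod q) (p : Fin (q+1)) (hp : p.val % 2 = 1) :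
    rcF q r (tau q r d p) = tau q r d (p-1) := by
  have hlt := p.isLt
  have hv1 := val_sub_one p
  rw [if_neg (by omega)] at hv1
  by_cases h1 : p.val = 1
  · rw [tau, if_neg (by omega), ee, if_neg (by omega)]
    have he : r + (1 - ((p.val : ℕ) : ZMod q)) * d = r := by
      rw [h1]; push_cast; ring
    rw [rcF, if_pos he, tau, if_pos (by omega)]
  · -- p odd, 3 ≤ p.val ≤ q
    rw [tau, if_neg (by omega), ee, if_neg (by omega)]
    have hne : ¬ (r + (1 - ((p.val : ℕ) : ZMod q)) * d = r) := by
      intro h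
      have h2 : (1 - ((p.val : ℕ) : ZMod q)) * d = 0 * d := by linear_combination h
      have h3 := hd.mul_left_inj.mp h2
      have h4 : ((1:ℕ) : ZMod q) = ((p.val : ℕ) : ZMod q) := by
        push_cast
        linear_combination h3
      exact cast_ne_cast (by omega) (by omega) h4
    rw [rcF, if_neg hne]
    rw [tau, hv1, if_neg (by omega), ee, if_pos (by omega)]
    congr 1
    have hc : ((p.val - 1 : ℕ) : ZMod q) = ((p.val : ℕ) : ZMod q) - 1 := by
      have h14 : (1:ℕ) ≤ p.val := by omega
      push_cast [Nat.cast_sub h14]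
      ring
    rw [hc]
    ring

include hq3 hodd hd in
lemma key3 (r : ZMod q) (p : Fin (q+1)) (hp : p.val % 2 = 0) :
    rcF q (r + d) (tau q r d p) = tau q r d (p-1) := by
  have hlt := p.isLt
  have hv1 := val_sub_one p
  by_cases h0 : p.val = 0
  · rw [if_pos h0] at hv1
    rw [tau, if_pos h0]
    show some (r + d) = _
    rw [tau, hv1, if_neg (by omega), ee, if_neg (by omega), ZMod.natCast_self]
    congr 1
    ring
  · -- p even, 2 ≤ p.val ≤ q-1
    rw [if_neg h0] at hv1
    rw [tau, if_neg h0, ee, if_pos hp]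
    have hne : ¬ (r + ((p.val : ℕ) : ZMod q) * d = r + d) := by
      intro h
      have h2 : ((p.val : ℕ) : ZMod q) * d = 1 * d := by linear_combination h
      have h3 := hd.mul_left_inj.mp h2
      have h5 : (1:ℕ) < p.val := by omega
      have h6 : p.val - 1 < q := by omega
      exact cast_ne_cast h5 h6 (by rw [h3, Nat.cast_one])
    rw [rcF, if_neg hne]
    rw [tau, hv1, if_neg (by omega), ee, if_neg (by omega)]
    congr 1
    have hc : ((p.val - 1 : ℕ) : ZMod q) = ((p.val : ℕ) : ZMod q) - 1 := by
      have h14 : (1:ℕ) ≤ p.val := by omega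
      push_cast [Nat.cast_sub h14]
      ring
    rw [hc]
    ring

include hq3 hodd hd in
lemma key4 (r : ZMod q) (p : Fin (q+1)) (hp : p.val % 2 = 1) :
    rcF q (r + d) (tau q r d p) = tau q r d (p+1) := by
  have hlt := p.isLt
  have hv1 := val_add_one p
  by_cases hq : p.val = q
  · rw [if_pos hq] at hv1
    rw [tau, if_neg (by omega), ee, if_neg (by omega)]
    have he : r + (1 - ((p.val : ℕ) : ZMod q)) * d = r + d := by
      rw [hq, ZMod.natCast_self]; ring
    rw [rcF, if_pos he, tau, if_pos (by omega)]
  · -- p odd, 1 ≤ p.val ≤ q - 2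
    rw [if_neg hq] at hv1
    rw [tau, if_neg (by omega), ee, if_neg (by omega)]
    have hne : ¬ (r + (1 - ((p.val : ℕ) : ZMod q)) * d = r + d) := by
      intro h
      have h2 : (1 - ((p.val : ℕ) : ZMod q)) * d = 1 * d := by linear_combination h
      have h3 := hd.mul_left_inj.mp h2
      have h4 : ((p.val : ℕ) : ZMod q) = 0 := by linear_combination -h3
      exact cast_ne_zero (by omega) (by omega) h4
    rw [rcF, if_neg hne]
    rw [tau, hv1, if_neg (by omega), ee, if_pos (by omega)]
    congr 1
    push_cast
    ring


end

end TMHC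

open TMHC in
theorem three_matchings_pairwise_ham_cycles (n : ℕ) (hn : 4 ≤ n) (hne : Even n) :
    ∃ M₁ M₂ M₃ : SimpleGraph (Fin n),
      IsPerfectMatchingGraph M₁ ∧ IsPerfectMatchingGraph M₂ ∧ IsPerfectMatchingGraph M₃ ∧
      IsHamCycleGraph (M₁ ⊔ M₂) ∧ IsHamCycleGraph (M₁ ⊔ M₃) ∧ IsHamCycleGraph (M₂ ⊔ M₃) := by
  obtain ⟨q, rfl⟩ : ∃ q, n = q + 1 := ⟨n - 1, by omega⟩
  haveI : NeZero q := ⟨by omega⟩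
  have hq3 : 3 ≤ q := by omega
  have hodd : q % 2 = 1 := by
    rcases hne with ⟨k, hk⟩; omega
  have h2u : IsUnit (2 : ZMod q) := by
    have : ((2:ℕ) : ZMod q) = (2 : ZMod q) := by push_cast; ring
    rw [← this, ZMod.isUnit_iff_coprime]
    rw [Nat.coprime_two_left]
    exact Nat.odd_iff.2 hodd
  have h1u : IsUnit (1 : ZMod q) := isUnit_one
  set E := eqv q with hE
  -- the three involutions on `Fin (q+1)`
  have mk : ∀ r : ZMod q, ∃ f : Fin (q+1) → Fin (q+1),
      (∀ x, f x = E (rcF q r (E.symm x))) ∧ Function.Involutive f ∧ (∀ x, f x ≠ x) := by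
    intro r
    refine ⟨fun x => E (rcF q r (E.symm x)), fun _ => rfl, ?_, ?_⟩
    · intro x
      simp only [Equiv.symm_apply_apply]
      rw [rcF_inv q r (E.symm x), Equiv.apply_symm_apply]
    · intro x h
      have : rcF q r (E.symm x) = E.symm x := by
        have := congrArg E.symm h
        simpa using this
      exact rcF_fpf q h2u r (E.symm x) this
  obtain ⟨f₀, hf₀, hf₀i, hf₀p⟩ := mk 0
  obtain ⟨f₁, hf₁, hf₁i, hf₁p⟩ := mk 1
  obtain ⟨f₂, hf₂, hf₂i, hf₂p⟩ := mk 2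
  refine ⟨matchG f₀, matchG f₁, matchG f₂,
    matchG_pm hf₀i hf₀p, matchG_pm hf₁i hf₁p, matchG_pm hf₂i hf₂p, ?_, ?_, ?_⟩
  · -- M₁ ⊔ M₂ : r = 0, d = 1
    have h21 : (1 : ZMod q) = 0 + 1 := by ring
    obtain ⟨σ, hσ⟩ : ∃ σ : Fin (q+1) ≃ Fin (q+1), ∀ p, σ p = E (tau q 0 1 p) :=
      ⟨Equiv.ofBijective (fun p => E (tau q 0 1 p))
        (Finite.injective_iff_bijective.mp (E.injective.comp (tau_inj hodd h1u 0))), fun _ => rfl⟩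
    refine ⟨σ, (union_eq_map (by omega) f₀ f₁ hf₀i hf₁i hf₀p hf₁p σ ?_ ?_ ?_ ?_)⟩
    · intro p hp; rw [hσ, hσ, hf₀, Equiv.symm_apply_apply]
      exact congrArg E (key1 hq3 hodd h1u (r := 0) p hp)
    · intro p hp; rw [hσ, hσ, hf₀, Equiv.symm_apply_apply]
      exact congrArg E (key2 hq3 hodd h1u (r := 0) p hp)
    · intro p hp; rw [hσ, hσ, hf₁, Equiv.symm_apply_apply]
      have hk := key3 hq3 hodd h1u (r := 0) p hp
      rw [← h21] at hk
      exact congrArg E hk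
    · intro p hp; rw [hσ, hσ, hf₁, Equiv.symm_apply_apply]
      have hk := key4 hq3 hodd h1u (r := 0) p hp
      rw [← h21] at hk
      exact congrArg E hk
  · -- M₁ ⊔ M₃ : r = 0, d = 2
    have h21 : (2 : ZMod q) = 0 + 2 := by ring
    obtain ⟨σ, hσ⟩ : ∃ σ : Fin (q+1) ≃ Fin (q+1), ∀ p, σ p = E (tau q 0 2 p) :=
      ⟨Equiv.ofBijective (fun p => E (tau q 0 2 p))
        (Finite.injective_iff_bijective.mp (E.injective.comp (tau_inj hodd h2u 0))), fun _ => rfl⟩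
    refine ⟨σ, (union_eq_map (by omega) f₀ f₂ hf₀i hf₂i hf₀p hf₂p σ ?_ ?_ ?_ ?_)⟩
    · intro p hp; rw [hσ, hσ, hf₀, Equiv.symm_apply_apply]
      exact congrArg E (key1 hq3 hodd h2u (r := 0) p hp)
    · intro p hp; rw [hσ, hσ, hf₀, Equiv.symm_apply_apply]
      exact congrArg E (key2 hq3 hodd h2u (r := 0) p hp)
    · intro p hp; rw [hσ, hσ, hf₂, Equiv.symm_apply_apply]
      have hk := key3 hq3 hodd h2u (r := 0) p hp
      rw [← h21] at hk
      exact congrArg E hk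
    · intro p hp; rw [hσ, hσ, hf₂, Equiv.symm_apply_apply]
      have hk := key4 hq3 hodd h2u (r := 0) p hp
      rw [← h21] at hk
      exact congrArg E hk
  · -- M₂ ⊔ M₃ : r = 1, d = 1
    have h21 : (2 : ZMod q) = 1 + 1 := by ring
    obtain ⟨σ, hσ⟩ : ∃ σ : Fin (q+1) ≃ Fin (q+1), ∀ p, σ p = E (tau q 1 1 p) :=
      ⟨Equiv.ofBijective (fun p => E (tau q 1 1 p))
        (Finite.injective_iff_bijective.mp (E.injective.comp (tau_inj hodd h1u 1))), fun _ => rfl⟩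
    refine ⟨σ, (union_eq_map (by omega) f₁ f₂ hf₁i hf₂i hf₁p hf₂p σ ?_ ?_ ?_ ?_)⟩
    · intro p hp; rw [hσ, hσ, hf₁, Equiv.symm_apply_apply]
      exact congrArg E (key1 hq3 hodd h1u (r := 1) p hp)
    · intro p hp; rw [hσ, hσ, hf₁, Equiv.symm_apply_apply]
      exact congrArg E (key2 hq3 hodd h1u (r := 1) p hp)
    · intro p hp; rw [hσ, hσ, hf₂, Equiv.symm_apply_apply]
      have hk := key3 hq3 hodd h1u (r := 1) p hp
      rw [← h21] at hk
      exact congrArg E hk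
    · intro p hp; rw [hσ, hσ, hf₂, Equiv.symm_apply_apply]
      have hk := key4 hq3 hodd h1u (r := 1) p hp
      rw [← h21] at hk
      exact congrArg E hk
end

section
/- For every even integer n ≥ 4, P(n,n) = 3n/2. -/
set_option maxHeartbeats 1000000

lemma card_le_three {α β : Type*} [DecidableEq α] [DecidableEq β] (S : Finset α) (f g : α → β)
    (hinj : ∀ x ∈ S, ∀ y ∈ S, f x = f y → x = y)
    (hcov : ∀ x ∈ S, ∀ y ∈ S, x ≠ y → f x = g y ∨ f y = g x) : S.card ≤ 3 := by
  classical
  set T := S.offDiag.filter (fun p => f p.1 = g p.2) with hT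
  have hsub : S.offDiag ⊆ T ∪ T.image Prod.swap := by
    intro p hp
    obtain ⟨hp1, hp2, hpne⟩ := Finset.mem_offDiag.mp hp
    rcases hcov _ hp1 _ hp2 hpne with h | h
    · exact Finset.mem_union_left _ (Finset.mem_filter.mpr ⟨hp, h⟩)
    · refine Finset.mem_union_right _ (Finset.mem_image.mpr ⟨⟨p.2, p.1⟩, ?_, rfl⟩)
      exact Finset.mem_filter.mpr ⟨Finset.mem_offDiag.mpr ⟨hp2, hp1, hpne.symm⟩, h⟩
  have hTcard : T.card ≤ S.card := by
    apply Finset.card_le_card_of_injOn (fun p => p.2)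
    · intro p hp
      exact (Finset.mem_offDiag.mp (Finset.mem_filter.mp hp).1).2.1
    · intro p hp q hq hpq
      have hp' := Finset.mem_filter.mp hp
      have hq' := Finset.mem_filter.mp hq
      obtain ⟨hp1, hp2, -⟩ := Finset.mem_offDiag.mp hp'.1
      obtain ⟨hq1, hq2, -⟩ := Finset.mem_offDiag.mp hq'.1
      simp only at hpq
      have : f p.1 = f q.1 := by
        rw [hp'.2, hq'.2, hpq]
      have h1 : p.1 = q.1 := hinj _ hp1 _ hq1 this
      exact Prod.ext h1 hpq
  have hcard : S.offDiag.card ≤ 2 * S.card := by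
    calc S.offDiag.card ≤ (T ∪ T.image Prod.swap).card := Finset.card_le_card hsub
    _ ≤ T.card + (T.image Prod.swap).card := Finset.card_union_le _ _
    _ ≤ T.card + T.card := by
        have := Finset.card_image_le (s := T) (f := Prod.swap)
        omega
    _ ≤ 2 * S.card := by omega
  rw [Finset.offDiag_card] at hcard
  by_contra h
  push_neg at h
  have : 4 * S.card ≤ S.card * S.card := Nat.mul_le_mul_right _ h
  omega

lemma filter_ends_card_le (n : ℕ) (hn : 4 ≤ n) (F : Finset (Equiv.Perm (Fin n)))
    (hF : (F : Set (Equiv.Perm (Fin n))).Pairwise (NeighborSep n n)) (v : Fin n)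
    (z e u1 u2 : Fin n) (hz : z.val = 0) (he : e.val = n-1) (hu1 : u1.val = 1)
    (hu2 : u2.val = n-2) :
    (F.filter (fun π => π z = v ∨ π e = v)).card ≤ 3 := by
  classical
  set Fv := F.filter (fun π => π z = v ∨ π e = v) with hFv
  set o : Equiv.Perm (Fin n) → Fin n := fun π => if π z = v then π e else π z with ho
  set w : Equiv.Perm (Fin n) → Fin n := fun π => if π z = v then π u1 else π u2 with hw
  have extract : ∀ (σ : Equiv.Perm (Fin n)) (x y : Fin n),
      ((σ.symm x : ℤ) - (σ.symm y : ℤ)).natAbs = n - 1 →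
      (x = σ z ∧ y = σ e) ∨ (x = σ e ∧ y = σ z) := by
    intro σ x y h
    have h1 := (σ.symm x).isLt
    have h2 := (σ.symm y).isLt
    have hcase : (σ.symm x = z ∧ σ.symm y = e) ∨ (σ.symm x = e ∧ σ.symm y = z) := by
      rcases (by omega : ((σ.symm x).val = 0 ∧ (σ.symm y).val = n-1) ∨
        ((σ.symm x).val = n-1 ∧ (σ.symm y).val = 0)) with ⟨ha, hb⟩ | ⟨ha, hb⟩
      · exact Or.inl ⟨Fin.ext (by omega), Fin.ext (by omega)⟩
      · exact Or.inr ⟨Fin.ext (by omega), Fin.ext (by omega)⟩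
    rcases hcase with ⟨ha, hb⟩ | ⟨ha, hb⟩
    · exact Or.inl ⟨by rw [← ha, Equiv.apply_symm_apply], by rw [← hb, Equiv.apply_symm_apply]⟩
    · exact Or.inr ⟨by rw [← ha, Equiv.apply_symm_apply], by rw [← hb, Equiv.apply_symm_apply]⟩
  have pairvo : ∀ σ ∈ Fv, ∀ x y : Fin n,
      ((σ.symm x : ℤ) - (σ.symm y : ℤ)).natAbs = n - 1 →
      (x = v ∧ y = o σ) ∨ (x = o σ ∧ y = v) := by
    intro σ hσ x y h
    have hσ' := (Finset.mem_filter.mp hσ).2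
    by_cases hv : σ z = v
    · simp only [ho, if_pos hv]
      rcases extract σ x y h with ⟨hx, hy⟩ | ⟨hx, hy⟩
      · exact Or.inl ⟨hx.trans hv, hy⟩
      · exact Or.inr ⟨hx, hy.trans hv⟩
    · have hev : σ e = v := by tauto
      simp only [ho, if_neg hv]
      rcases extract σ x y h with ⟨hx, hy⟩ | ⟨hx, hy⟩
      · exact Or.inr ⟨hx, hy.trans hev⟩
      · exact Or.inl ⟨hx.trans hev, hy⟩
  have posv : ∀ π ∈ Fv, (π.symm v = z ∧ o π = π e ∧ w π = π u1) ∨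
      (π.symm v = e ∧ o π = π z ∧ w π = π u2) := by
    intro π hπ
    have hπ' := (Finset.mem_filter.mp hπ).2
    by_cases hv : π z = v
    · exact Or.inl ⟨by rw [← hv, Equiv.symm_apply_apply], by simp [ho, if_pos hv],
        by simp [hw, if_pos hv]⟩
    · have hev : π e = v := by tauto
      exact Or.inr ⟨by rw [← hev, Equiv.symm_apply_apply], by simp [ho, if_neg hv],
        by simp [hw, if_neg hv]⟩
  have step : ∀ π ∈ Fv, ∀ σ ∈ Fv, ∀ x y : Fin n,
      ((π.symm x : ℤ) - (π.symm y : ℤ)).natAbs = 1 →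
      ((σ.symm x : ℤ) - (σ.symm y : ℤ)).natAbs = n - 1 →
      o σ = w π := by
    intro π hπ σ hσ x y h1 h2
    have hvo := pairvo σ hσ x y h2
    have hval : ((π.symm v : ℤ) - (π.symm (o σ) : ℤ)).natAbs = 1 := by
      rcases hvo with ⟨hx, hy⟩ | ⟨hx, hy⟩ <;> subst hx <;> subst hy <;> omega
    have hlt := (π.symm (o σ)).isLt
    rcases posv π hπ with ⟨hpv, -, hwπ⟩ | ⟨hpv, -, hwπ⟩
    · rw [hpv] at hval
      have hthis : π.symm (o σ) = u1 := Fin.ext (by omega)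
      rw [hwπ, ← hthis, Equiv.apply_symm_apply]
    · rw [hpv] at hval
      have hthis : π.symm (o σ) = u2 := Fin.ext (by omega)
      rw [hwπ, ← hthis, Equiv.apply_symm_apply]
  have hinj : ∀ π ∈ Fv, ∀ σ ∈ Fv, o π = o σ → π = σ := by
    intro π hπ σ hσ hoeq
    by_contra hne
    have hsep := hF (Finset.mem_coe.mpr (Finset.filter_subset _ _ hπ))
      (Finset.mem_coe.mpr (Finset.filter_subset _ _ hσ)) hne
    obtain ⟨x, y, ⟨h1, h2⟩ | ⟨h1, h2⟩⟩ := hsep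
    · have hvo := pairvo σ hσ x y h2
      rw [← hoeq] at hvo
      have hval : ((π.symm v : ℤ) - (π.symm (o π) : ℤ)).natAbs = 1 := by
        rcases hvo with ⟨hx, hy⟩ | ⟨hx, hy⟩ <;> subst hx <;> subst hy <;> omega
      rcases posv π hπ with ⟨hpv, hoπ, -⟩ | ⟨hpv, hoπ, -⟩ <;>
        rw [hpv, hoπ, Equiv.symm_apply_apply] at hval <;> omega
    · have hvo := pairvo π hπ x y h2
      rw [hoeq] at hvo
      have hval : ((σ.symm v : ℤ) - (σ.symm (o σ) : ℤ)).natAbs = 1 := by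
        rcases hvo with ⟨hx, hy⟩ | ⟨hx, hy⟩ <;> subst hx <;> subst hy <;> omega
      rcases posv σ hσ with ⟨hpv, hoσ, -⟩ | ⟨hpv, hoσ, -⟩ <;>
        rw [hpv, hoσ, Equiv.symm_apply_apply] at hval <;> omega
  have hcov : ∀ π ∈ Fv, ∀ σ ∈ Fv, π ≠ σ → o π = w σ ∨ o σ = w π := by
    intro π hπ σ hσ hne
    have hsep := hF (Finset.mem_coe.mpr (Finset.filter_subset _ _ hπ))
      (Finset.mem_coe.mpr (Finset.filter_subset _ _ hσ)) hne
    obtain ⟨x, y, ⟨h1, h2⟩ | ⟨h1, h2⟩⟩ := hsep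
    · exact Or.inr (step π hπ σ hσ x y h1 h2)
    · exact Or.inl (step σ hσ π hπ x y h1 h2)
  exact card_le_three Fv o w hinj hcov

lemma sum_ends (n : ℕ) (hn : 4 ≤ n) (F : Finset (Equiv.Perm (Fin n)))
    (z e : Fin n) (hz : z.val = 0) (he : e.val = n-1) :
    ∑ v : Fin n, (F.filter (fun π => π z = v ∨ π e = v)).card = 2 * F.card := by
  classical
  have hze : z ≠ e := fun h => by rw [h] at hz; omega
  simp only [Finset.card_filter]
  rw [Finset.sum_comm]
  have key : ∀ π : Equiv.Perm (Fin n),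
      (∑ v : Fin n, if π z = v ∨ π e = v then 1 else 0) = 2 := by
    intro π
    rw [← Finset.card_filter]
    have : Finset.filter (fun v => π z = v ∨ π e = v) Finset.univ = {π z, π e} := by
      ext w
      simp [eq_comm]
    rw [this, Finset.card_pair (fun h => hze (π.injective h))]
  rw [Finset.sum_congr rfl (fun π _ => key π), Finset.sum_const, smul_eq_mul, mul_comm]

lemma upper_bound (n : ℕ) (hn : 4 ≤ n) (hne : Even n) (F : Finset (Equiv.Perm (Fin n)))
    (hF : (F : Set (Equiv.Perm (Fin n))).Pairwise (NeighborSep n n)) :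
    F.card ≤ 3 * n / 2 := by
  classical
  set z : Fin n := ⟨0, by omega⟩
  set e : Fin n := ⟨n-1, by omega⟩
  set u1 : Fin n := ⟨1, by omega⟩
  set u2 : Fin n := ⟨n-2, by omega⟩
  have h1 : ∑ v : Fin n, (F.filter (fun π => π z = v ∨ π e = v)).card ≤
      ∑ _v : Fin n, 3 :=
    Finset.sum_le_sum (fun v _ => filter_ends_card_le n hn F hF v z e u1 u2 rfl rfl rfl rfl)
  rw [sum_ends n hn F z e rfl rfl] at h1
  simp only [Finset.sum_const, Finset.card_univ, Fintype.card_fin, smul_eq_mul] at h1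
  obtain ⟨m, hm⟩ := hne
  omega


/-- second cycle sequence: Me ∪ M₃ -/
def Scyc1 (n j : ℕ) : ℕ :=
  if j = n-1 then 1 else if j = n-2 then n-1 else if j = n-3 then n-2 else j + 2*(j%2)

/-- third cycle sequence: Mo ∪ M₃ -/
def Scyc2 (n j : ℕ) : ℕ :=
  if j = n-1 then n-1
  else if j < n/2 then (if j = n/2 - 1 then n-2 else 2*j + j%2)
  else 2*(n-1-j) - 2 + (n-1-j) % 2

lemma Scyc1_lt {n : ℕ} (hn : 4 ≤ n) (he : n % 2 = 0) {j : ℕ} (hj : j < n) : Scyc1 n j < n := by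
  simp only [Scyc1]; split_ifs <;> omega

lemma Scyc2_lt {n : ℕ} (hn : 4 ≤ n) (he : n % 2 = 0) {j : ℕ} (hj : j < n) : Scyc2 n j < n := by
  simp only [Scyc2]; split_ifs <;> omega

lemma Scyc1_inj {n : ℕ} (hn : 4 ≤ n) (he : n % 2 = 0) {j k : ℕ} (hj : j < n) (hk : k < n)
    (h : Scyc1 n j = Scyc1 n k) : j = k := by
  simp only [Scyc1] at h; split_ifs at h <;> omega

lemma Scyc2_inj {n : ℕ} (hn : 4 ≤ n) (he : n % 2 = 0) {j k : ℕ} (hj : j < n) (hk : k < n)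
    (h : Scyc2 n j = Scyc2 n k) : j = k := by
  simp only [Scyc2] at h; split_ifs at h <;> omega

/-- the Hamiltonian path obtained from the cyclic sequence `s` by cutting the edge
between cyclic positions `t` and `t+1`. -/
noncomputable def mkPerm (n : ℕ) (hn : 0 < n) (s : ℕ → ℕ) (hb : ∀ j, j < n → s j < n)
    (hinj : ∀ j k, j < n → k < n → s j = s k → j = k) (t : ℕ) : Equiv.Perm (Fin n) :=
  Equiv.ofBijective (fun j => ⟨s ((t + 1 + j.val) % n), hb _ (Nat.mod_lt _ hn)⟩)
    (Finite.injective_iff_bijective.mp (by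
      intro a b hab
      simp only [Fin.mk.injEq] at hab
      have h2 : (t + 1 + a.val) % n = (t + 1 + b.val) % n :=
        hinj _ _ (Nat.mod_lt _ hn) (Nat.mod_lt _ hn) hab
      have h3 : a.val % n = b.val % n := Nat.ModEq.add_left_cancel' (t+1) h2
      rw [Nat.mod_eq_of_lt a.isLt, Nat.mod_eq_of_lt b.isLt] at h3
      exact Fin.ext h3))

lemma mkPerm_apply (n : ℕ) (hn : 0 < n) (s : ℕ → ℕ) (hb : ∀ j, j < n → s j < n)
    (hinj : ∀ j k, j < n → k < n → s j = s k → j = k) (t : ℕ) (j : Fin n) :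
    mkPerm n hn s hb hinj t j = ⟨s ((t + 1 + j.val) % n), hb _ (Nat.mod_lt _ hn)⟩ := rfl

lemma mkPerm_sep (n : ℕ) (hn : 4 ≤ n) (s s' : ℕ → ℕ)
    (hb : ∀ j, j < n → s j < n) (hinj : ∀ j k, j < n → k < n → s j = s k → j = k)
    (hb' : ∀ j, j < n → s' j < n) (hinj' : ∀ j k, j < n → k < n → s' j = s' k → j = k)
    (t t' w : ℕ) (ht : t < n) (ht' : t' < n) (hw : w < n) (hwt : w ≠ t)
    (heq : (s ((w+1) % n) = s' ((t'+1) % n) ∧ s w = s' t') ∨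
           (s ((w+1) % n) = s' t' ∧ s w = s' ((t'+1) % n))) :
    NeighborSep n n (mkPerm n (by omega) s hb hinj t) (mkPerm n (by omega) s' hb' hinj' t') := by
  set π := mkPerm n (by omega : 0 < n) s hb hinj t with hπ
  set σ := mkPerm n (by omega : 0 < n) s' hb' hinj' t' with hσ
  set c : ℕ := if t < w then w - t else n + w - t with hc
  have hc1 : 1 ≤ c := by simp only [hc]; split_ifs <;> omega
  have hcn : c < n := by simp only [hc]; split_ifs <;> omega
  have E1 : (t + 1 + c) % n = (w + 1) % n := by
    rcases lt_or_ge t w with h | h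
    · have h2 : t + 1 + c = w + 1 := by simp only [hc]; split_ifs <;> omega
      rw [h2]
    · have h2 : t + 1 + c = w + 1 + n := by simp only [hc]; split_ifs <;> omega
      rw [h2, Nat.add_mod_right]
  have E2 : (t + 1 + (c - 1)) % n = w := by
    rcases lt_or_ge t w with h | h
    · have h2 : t + 1 + (c - 1) = w := by simp only [hc]; split_ifs <;> omega
      rw [h2, Nat.mod_eq_of_lt hw]
    · have h2 : t + 1 + (c - 1) = w + n := by simp only [hc]; split_ifs <;> omega
      rw [h2, Nat.add_mod_right, Nat.mod_eq_of_lt hw]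
  have E3 : (t' + 1 + (0:ℕ)) % n = (t' + 1) % n := by norm_num
  have E4 : (t' + 1 + (n - 1)) % n = t' := by
    have h2 : t' + 1 + (n - 1) = t' + n := by omega
    rw [h2, Nat.add_mod_right, Nat.mod_eq_of_lt ht']
  refine ⟨σ ⟨0, by omega⟩, σ ⟨n-1, by omega⟩, Or.inl ⟨?_, ?_⟩⟩
  · rcases heq with ⟨h1, h2⟩ | ⟨h1, h2⟩
    · have hx : σ ⟨0, by omega⟩ = π ⟨c, by omega⟩ := by
        simp only [hπ, hσ, mkPerm_apply]
        exact Fin.ext (by simp only [E1, E3]; exact h1.symm)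
      have hy : σ ⟨n-1, by omega⟩ = π ⟨c-1, by omega⟩ := by
        simp only [hπ, hσ, mkPerm_apply]
        exact Fin.ext (by simp only [E2, E4]; exact h2.symm)
      rw [hx, hy]
      simp only [Equiv.symm_apply_apply]
      omega
    · have hx : σ ⟨0, by omega⟩ = π ⟨c-1, by omega⟩ := by
        simp only [hπ, hσ, mkPerm_apply]
        exact Fin.ext (by simp only [E2, E3]; exact h2.symm)
      have hy : σ ⟨n-1, by omega⟩ = π ⟨c, by omega⟩ := by
        simp only [hπ, hσ, mkPerm_apply]
        exact Fin.ext (by simp only [E1, E4]; exact h1.symm)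
      rw [hx, hy]
      simp only [Equiv.symm_apply_apply]
      omega
  · simp only [Equiv.symm_apply_apply]
    omega

lemma sepSame (n : ℕ) (hn : 4 ≤ n) (s : ℕ → ℕ)
    (hb : ∀ j, j < n → s j < n) (hinj : ∀ j k, j < n → k < n → s j = s k → j = k)
    (t t' : ℕ) (ht : t < n) (ht' : t' < n) (hne : t ≠ t') :
    NeighborSep n n (mkPerm n (by omega) s hb hinj t) (mkPerm n (by omega) s hb hinj t') :=
  mkPerm_sep n hn s s hb hinj hb hinj t t' t' ht ht' ht' (fun h => hne h.symm)
    (Or.inl ⟨rfl, rfl⟩)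

lemma sepA (n : ℕ) (hn : 4 ≤ n) (he : n % 2 = 0)
    (hb : ∀ j, j < n → Scyc1 n j < n)
    (hinj : ∀ j k, j < n → k < n → Scyc1 n j = Scyc1 n k → j = k)
    (hb' : ∀ j, j < n → (fun j => j) j < n)
    (hinj' : ∀ j k, j < n → k < n → (fun j => j) j = (fun j => j) k → j = k)
    (t t' : ℕ) (ht : t % 2 = 0) (ht' : t' % 2 = 0) (htn : t < n) (ht'n : t' < n) :
    NeighborSep n n (mkPerm n (by omega) (Scyc1 n) hb hinj t)
      (mkPerm n (by omega) (fun j => j) hb' hinj' t') := by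
  have h1n : (t' + 1) % n = t' + 1 := Nat.mod_eq_of_lt (by omega)
  rcases eq_or_ne t' 0 with h0 | h0
  · subst h0
    refine mkPerm_sep n hn _ _ hb hinj hb' hinj' t 0 (n-1) htn ht'n (by omega) (by omega) ?_
    have hw1 : (n - 1 + 1) % n = 0 := by rw [show n-1+1 = n by omega, Nat.mod_self]
    rw [hw1, h1n]
    refine Or.inr ⟨?_, ?_⟩ <;> simp only [Scyc1] <;> split_ifs <;> omega
  · rcases eq_or_ne t' (n-2) with h2 | h2
    · subst h2
      refine mkPerm_sep n hn _ _ hb hinj hb' hinj' t (n-2) (n-3) htn ht'n (by omega)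
        (by omega) ?_
      have hw1 : (n - 3 + 1) % n = n - 2 := by rw [show n-3+1 = n-2 by omega]; exact Nat.mod_eq_of_lt (by omega)
      rw [hw1, h1n]
      refine Or.inl ⟨?_, ?_⟩ <;> simp only [Scyc1] <;> split_ifs <;> omega
    · -- 2 ≤ t' ≤ n - 4
      refine mkPerm_sep n hn _ _ hb hinj hb' hinj' t t' (t'-1) htn ht'n (by omega)
        (by omega) ?_
      have hw1 : (t' - 1 + 1) % n = t' := by rw [show t'-1+1 = t' by omega]; exact Nat.mod_eq_of_lt (by omega)
      rw [hw1, h1n]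
      refine Or.inr ⟨?_, ?_⟩ <;> simp only [Scyc1] <;> split_ifs <;> omega

lemma sepB (n : ℕ) (hn : 4 ≤ n) (he : n % 2 = 0)
    (hb : ∀ j, j < n → Scyc2 n j < n)
    (hinj : ∀ j k, j < n → k < n → Scyc2 n j = Scyc2 n k → j = k)
    (hb' : ∀ j, j < n → Scyc1 n j < n)
    (hinj' : ∀ j k, j < n → k < n → Scyc1 n j = Scyc1 n k → j = k)
    (t t' : ℕ) (ht : t % 2 = 1) (ht' : t' % 2 = 0) (htn : t < n) (ht'n : t' < n) :
    NeighborSep n n (mkPerm n (by omega) (Scyc2 n) hb hinj t)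
      (mkPerm n (by omega) (Scyc1 n) hb' hinj' t') := by
  have h1n : (t' + 1) % n = t' + 1 := Nat.mod_eq_of_lt (by omega)
  rcases eq_or_ne t' (n-2) with h2 | h2
  · subst h2
    have hw1 : (n-2+1) % n = n-1 := by
      rw [show n-2+1 = n-1 by omega]; exact Nat.mod_eq_of_lt (by omega)
    refine mkPerm_sep n hn _ _ hb hinj hb' hinj' t (n-2) (n-2) htn ht'n (by omega)
      (by omega) ?_
    rw [hw1]
    refine Or.inr ⟨?_, ?_⟩ <;> simp only [Scyc1, Scyc2] <;> split_ifs <;> omega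
  · rcases eq_or_ne t' (n-4) with h4 | h4
    · subst h4
      rcases (by omega : n % 4 = 0 ∨ n % 4 = 2) with hm | hm
      · have hw1 : (n/2-2+1) % n = n/2-1 := by
          rw [show n/2-2+1 = n/2-1 by omega]; exact Nat.mod_eq_of_lt (by omega)
        refine mkPerm_sep n hn _ _ hb hinj hb' hinj' t (n-4) (n/2-2) htn ht'n (by omega)
          (by omega) ?_
        rw [hw1, h1n]
        refine Or.inl ⟨?_, ?_⟩ <;> simp only [Scyc1, Scyc2] <;> split_ifs <;> omega
      · have hw1 : (n/2-1+1) % n = n/2 := by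
          rw [show n/2-1+1 = n/2 by omega]; exact Nat.mod_eq_of_lt (by omega)
        refine mkPerm_sep n hn _ _ hb hinj hb' hinj' t (n-4) (n/2-1) htn ht'n (by omega)
          (by omega) ?_
        rw [hw1, h1n]
        refine Or.inr ⟨?_, ?_⟩ <;> simp only [Scyc1, Scyc2] <;> split_ifs <;> omega
    · rcases (by omega : t' % 4 = 0 ∨ t' % 4 = 2) with hm | hm
      · have hw1 : (t'/2+1) % n = t'/2+1 := Nat.mod_eq_of_lt (by omega)
        refine mkPerm_sep n hn _ _ hb hinj hb' hinj' t t' (t'/2) htn ht'n (by omega)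
          (by omega) ?_
        rw [hw1, h1n]
        refine Or.inl ⟨?_, ?_⟩ <;> simp only [Scyc1, Scyc2] <;> split_ifs <;> omega
      · have hw1 : (n-3-t'/2+1) % n = n-2-t'/2 := by
          rw [show n-3-t'/2+1 = n-2-t'/2 by omega]; exact Nat.mod_eq_of_lt (by omega)
        refine mkPerm_sep n hn _ _ hb hinj hb' hinj' t t' (n-3-t'/2) htn ht'n (by omega)
          (by omega) ?_
        rw [hw1, h1n]
        refine Or.inr ⟨?_, ?_⟩ <;> simp only [Scyc1, Scyc2] <;> split_ifs <;> omega

lemma sepC (n : ℕ) (hn : 4 ≤ n) (he : n % 2 = 0)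
    (hb : ∀ j, j < n → (fun j => j) j < n)
    (hinj : ∀ j k, j < n → k < n → (fun j => j) j = (fun j => j) k → j = k)
    (hb' : ∀ j, j < n → Scyc2 n j < n)
    (hinj' : ∀ j k, j < n → k < n → Scyc2 n j = Scyc2 n k → j = k)
    (t t' : ℕ) (ht : t % 2 = 0) (ht' : t' % 2 = 1) (htn : t < n) (ht'n : t' < n) :
    NeighborSep n n (mkPerm n (by omega) (fun j => j) hb hinj t)
      (mkPerm n (by omega) (Scyc2 n) hb' hinj' t') := by
  rcases eq_or_ne t' (n-1) with h1 | h1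
  · subst h1
    have hw1 : (n-1+1) % n = 0 := by rw [show n-1+1 = n by omega]; exact Nat.mod_self n
    refine mkPerm_sep n hn _ _ hb hinj hb' hinj' t (n-1) (n-1) htn ht'n (by omega)
      (by omega) ?_
    rw [hw1]
    refine Or.inl ⟨?_, ?_⟩ <;> simp only [Scyc2] <;> split_ifs <;> omega
  · have h1n : (t' + 1) % n = t' + 1 := Nat.mod_eq_of_lt (by omega)
    rcases (by omega : t' ≤ n/2-2 ∨ t' = n/2-1 ∨ (n/2 ≤ t' ∧ t' ≤ n-2)) with hc | hc | hc
    · have hw1 : (2*t'+1+1) % n = 2*t'+2 := by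
        rw [show 2*t'+1+1 = 2*t'+2 by omega]; exact Nat.mod_eq_of_lt (by omega)
      refine mkPerm_sep n hn _ _ hb hinj hb' hinj' t t' (2*t'+1) htn ht'n (by omega)
        (by omega) ?_
      rw [hw1, h1n]
      refine Or.inl ⟨?_, ?_⟩ <;> simp only [Scyc2] <;> split_ifs <;> omega
    · subst hc
      have hw1 : (n-3+1) % n = n-2 := by
        rw [show n-3+1 = n-2 by omega]; exact Nat.mod_eq_of_lt (by omega)
      refine mkPerm_sep n hn _ _ hb hinj hb' hinj' t (n/2-1) (n-3) htn ht'n (by omega)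
        (by omega) ?_
      rw [hw1, h1n]
      refine Or.inr ⟨?_, ?_⟩ <;> simp only [Scyc2] <;> split_ifs <;> omega
    · have hw1 : (2*(n-1-t')-3+1) % n = 2*(n-1-t')-2 := by
        rw [show 2*(n-1-t')-3+1 = 2*(n-1-t')-2 by omega]; exact Nat.mod_eq_of_lt (by omega)
      refine mkPerm_sep n hn _ _ hb hinj hb' hinj' t t' (2*(n-1-t')-3) htn ht'n (by omega)
        (by omega) ?_
      rw [hw1, h1n]
      refine Or.inr ⟨?_, ?_⟩ <;> simp only [Scyc2] <;> split_ifs <;> omega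

lemma neighborSep'_symm {n k : ℕ} {π σ : Equiv.Perm (Fin n)} (h : NeighborSep n k π σ) :
    NeighborSep n k σ π := by
  obtain ⟨x, y, h | h⟩ := h
  exacts [⟨x, y, Or.inr h⟩, ⟨x, y, Or.inl h⟩]

lemma neighborSep'_irrefl {n : ℕ} (hn : 4 ≤ n) (π : Equiv.Perm (Fin n)) :
    ¬ NeighborSep n n π π := by
  rintro ⟨x, y, ⟨h1, h2⟩ | ⟨h1, h2⟩⟩ <;> omega

noncomputable def famF (n : ℕ) (hpos : 0 < n)
    (hb0 : ∀ j, j < n → (fun j => j) j < n)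
    (hinj0 : ∀ j k, j < n → k < n → (fun j => j) j = (fun j => j) k → j = k)
    (hb1 : ∀ j, j < n → Scyc1 n j < n)
    (hinj1 : ∀ j k, j < n → k < n → Scyc1 n j = Scyc1 n k → j = k)
    (hb2 : ∀ j, j < n → Scyc2 n j < n)
    (hinj2 : ∀ j k, j < n → k < n → Scyc2 n j = Scyc2 n k → j = k) :
    Fin 3 × Fin (n/2) → Equiv.Perm (Fin n)
  | (⟨0, _⟩, r) => mkPerm n hpos (fun j => j) hb0 hinj0 (2*r.val)
  | (⟨1, _⟩, r) => mkPerm n hpos (Scyc1 n) hb1 hinj1 (2*r.val)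
  | (⟨_+2, _⟩, r) => mkPerm n hpos (Scyc2 n) hb2 hinj2 (2*r.val+1)

lemma lower_bound (n : ℕ) (hn : 4 ≤ n) (hne : Even n) :
    ∃ F : Finset (Equiv.Perm (Fin n)),
      (F : Set (Equiv.Perm (Fin n))).Pairwise (NeighborSep n n) ∧ F.card = 3 * n / 2 := by
  classical
  have he : n % 2 = 0 := by obtain ⟨m, hm⟩ := hne; omega
  have hb0 : ∀ j, j < n → (fun j => j) j < n := fun j hj => hj
  have hinj0 : ∀ j k, j < n → k < n → (fun j => j) j = (fun j => j) k → j = k :=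
    fun j k _ _ h => h
  have hb1 : ∀ j, j < n → Scyc1 n j < n := fun j hj => Scyc1_lt hn he hj
  have hinj1 : ∀ j k, j < n → k < n → Scyc1 n j = Scyc1 n k → j = k :=
    fun j k hj hk h => Scyc1_inj hn he hj hk h
  have hb2 : ∀ j, j < n → Scyc2 n j < n := fun j hj => Scyc2_lt hn he hj
  have hinj2 : ∀ j k, j < n → k < n → Scyc2 n j = Scyc2 n k → j = k :=
    fun j k hj hk h => Scyc2_inj hn he hj hk h
  have hpos : (0:ℕ) < n := by omega
  set f := famF n hpos hb0 hinj0 hb1 hinj1 hb2 hinj2 with hf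
  have key : ∀ p q : Fin 3 × Fin (n/2), p ≠ q → NeighborSep n n (f p) (f q) := by
    rintro ⟨⟨iv, hi3⟩, r⟩ ⟨⟨jv, hj3⟩, s⟩ hpq
    have hr := r.isLt
    have hs := s.isLt
    have hrn : 2*r.val < n := by omega
    have hsn : 2*s.val < n := by omega
    have hrn1 : 2*r.val+1 < n := by omega
    have hsn1 : 2*s.val+1 < n := by omega
    have hdvd : n/2*2 = n := by omega
    interval_cases iv <;> interval_cases jv
    · have hne : r ≠ s := by
        intro h; exact hpq (by rw [h])
      exact sepSame n hn _ hb0 hinj0 _ _ hrn hsn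
        (fun h => hne (Fin.ext (by omega)))
    · exact neighborSep'_symm (sepA n hn he hb1 hinj1 hb0 hinj0 _ _ (by omega) (by omega)
        hsn hrn)
    · exact sepC n hn he hb0 hinj0 hb2 hinj2 _ _ (by omega) (by omega) hrn hsn1
    · exact sepA n hn he hb1 hinj1 hb0 hinj0 _ _ (by omega) (by omega) hrn hsn
    · have hne : r ≠ s := by
        intro h; exact hpq (by rw [h])
      exact sepSame n hn _ hb1 hinj1 _ _ hrn hsn (fun h => hne (Fin.ext (by omega)))
    · exact neighborSep'_symm (sepB n hn he hb2 hinj2 hb1 hinj1 _ _ (by omega) (by omega)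
        hsn1 hrn)
    · exact neighborSep'_symm (sepC n hn he hb0 hinj0 hb2 hinj2 _ _ (by omega) (by omega)
        hsn hrn1)
    · exact sepB n hn he hb2 hinj2 hb1 hinj1 _ _ (by omega) (by omega) hrn1 hsn
    · have hne : r ≠ s := by
        intro h; exact hpq (by rw [h])
      exact sepSame n hn _ hb2 hinj2 _ _ hrn1 hsn1 (fun h => hne (Fin.ext (by omega)))
  have hinjf : Function.Injective f := by
    intro p q h
    by_contra hne
    exact neighborSep'_irrefl hn (f q) (h ▸ key p q hne)
  refine ⟨Finset.univ.image f, ?_, ?_⟩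
  · intro a ha b hb hab
    obtain ⟨p, -, rfl⟩ := Finset.mem_image.mp (Finset.mem_coe.mp ha)
    obtain ⟨q, -, rfl⟩ := Finset.mem_image.mp (Finset.mem_coe.mp hb)
    exact key p q (fun h => hab (congrArg f h))
  · rw [Finset.card_image_of_injective _ hinjf]
    simp only [Finset.card_univ, Fintype.card_prod, Fintype.card_fin]
    omega

theorem permP_n_n_even (n : ℕ) (hn : 4 ≤ n) (hne : Even n) :
    permP n n = 3 * n / 2 := by
  obtain ⟨F, hF, hcard⟩ := lower_bound n hn hne
  have hub : ∀ m ∈ {m : ℕ | ∃ F : Finset (Equiv.Perm (Fin n)),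
      (F : Set (Equiv.Perm (Fin n))).Pairwise (NeighborSep n n) ∧ F.card = m},
      m ≤ 3 * n / 2 := by
    rintro m ⟨G, hG, rfl⟩
    exact upper_bound n hn hne G hG
  refine le_antisymm ?_ ?_
  · exact csSup_le ⟨0, ⟨∅, by simp, rfl⟩⟩ hub
  · exact le_csSup ⟨3 * n / 2, hub⟩ ⟨F, hF, hcard⟩
end

section
/- For every integer n ≥ 2, P(n,n) ≤ ⌊3n/2⌋. -/
namespace PermPAux
variable {n : ℕ}

def AdjIn (π : Equiv.Perm (Fin n)) (x y : Fin n) : Prop :=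
  ((π.symm x : ℤ) - (π.symm y : ℤ)).natAbs = 1

lemma adjIn_symm {π : Equiv.Perm (Fin n)} {x y : Fin n} (h : AdjIn π x y) : AdjIn π y x := by
  unfold AdjIn at *; omega

def nbr (hn : 3 ≤ n) (π : Equiv.Perm (Fin n)) (v : Fin n) : Fin n :=
  if π ⟨0, by omega⟩ = v then π ⟨1, by omega⟩ else π ⟨n-2, by omega⟩

/-- the end of `π` other than `v` -/
def oth (hn : 3 ≤ n) (π : Equiv.Perm (Fin n)) (v : Fin n) : Fin n :=
  if π ⟨0, by omega⟩ = v then π ⟨n-1, by omega⟩ else π ⟨0, by omega⟩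

lemma ends_ne (hn : 3 ≤ n) (τ : Equiv.Perm (Fin n)) :
    τ ⟨0, by omega⟩ ≠ τ ⟨n-1, by omega⟩ := by
  intro hc
  have := τ.injective hc
  simp only [Fin.ext_iff] at this
  omega

lemma oth_spec (hn : 3 ≤ n) (σ : Equiv.Perm (Fin n)) (v : Fin n)
    (hσ : σ ⟨0, by omega⟩ = v ∨ σ ⟨n-1, by omega⟩ = v) :
    (σ ⟨0, by omega⟩ = v ∧ σ ⟨n-1, by omega⟩ = oth hn σ v) ∨
    (σ ⟨0, by omega⟩ = oth hn σ v ∧ σ ⟨n-1, by omega⟩ = v) := by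
  unfold oth
  by_cases hc : σ ⟨0, by omega⟩ = v
  · rw [if_pos hc]; exact Or.inl ⟨hc, rfl⟩
  · rw [if_neg hc]; exact Or.inr ⟨rfl, hσ.resolve_left hc⟩

lemma adj_end (hn : 3 ≤ n) {π : Equiv.Perm (Fin n)} {v y : Fin n}
    (hv : π ⟨0, by omega⟩ = v ∨ π ⟨n-1, by omega⟩ = v)
    (h : AdjIn π v y) : y = nbr hn π v := by
  unfold AdjIn at h
  have hy := (π.symm y).isLt
  unfold nbr
  rcases hv with hv | hv
  · rw [if_pos hv]
    have h0 : π.symm v = ⟨0, by omega⟩ := by rw [← hv]; simp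
    rw [h0] at h
    have : π.symm y = ⟨1, by omega⟩ := by
      simp only [Fin.ext_iff]; simp at h ⊢; omega
    rw [← this]; simp
  · have h0 : π.symm v = ⟨n-1, by omega⟩ := by rw [← hv]; simp
    rw [h0] at h
    have hne : ¬ (π ⟨0, by omega⟩ = v) := by
      intro hc
      rw [← hc] at h0
      simp only [Equiv.symm_apply_apply, Fin.ext_iff] at h0
      omega
    rw [if_neg hne]
    have : π.symm y = ⟨n-2, by omega⟩ := by
      simp only [Fin.ext_iff]; simp at h ⊢; omega
    rw [← this]; simp

lemma not_adj_ends (hn : 3 ≤ n) (π : Equiv.Perm (Fin n)) :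
    ¬ AdjIn π (π ⟨0, by omega⟩) (π ⟨n-1, by omega⟩) := by
  unfold AdjIn
  simp only [Equiv.symm_apply_apply]
  simp; omega

lemma sep_char (hn : 3 ≤ n) {π σ : Equiv.Perm (Fin n)} (h : NeighborSep n n π σ) :
    AdjIn π (σ ⟨0, by omega⟩) (σ ⟨n-1, by omega⟩) ∨
    AdjIn σ (π ⟨0, by omega⟩) (π ⟨n-1, by omega⟩) := by
  obtain ⟨x, y, h | h⟩ := h
  · left
    have hx := (σ.symm x).isLt
    have hy := (σ.symm y).isLt
    have hc : (σ.symm x = ⟨n-1, by omega⟩ ∧ σ.symm y = ⟨0, by omega⟩) ∨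
        (σ.symm x = ⟨0, by omega⟩ ∧ σ.symm y = ⟨n-1, by omega⟩) := by
      simp only [Fin.ext_iff]; omega
    rcases hc with ⟨h1, h2⟩ | ⟨h1, h2⟩
    · have e1 : x = σ ⟨n-1, by omega⟩ := by rw [← h1]; simp
      have e2 : y = σ ⟨0, by omega⟩ := by rw [← h2]; simp
      simp only [e1, e2] at h
      exact adjIn_symm h.1
    · have e1 : x = σ ⟨0, by omega⟩ := by rw [← h1]; simp
      have e2 : y = σ ⟨n-1, by omega⟩ := by rw [← h2]; simp
      simp only [e1, e2] at h
      exact h.1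
  · right
    have hx := (π.symm x).isLt
    have hy := (π.symm y).isLt
    have hc : (π.symm x = ⟨n-1, by omega⟩ ∧ π.symm y = ⟨0, by omega⟩) ∨
        (π.symm x = ⟨0, by omega⟩ ∧ π.symm y = ⟨n-1, by omega⟩) := by
      simp only [Fin.ext_iff]; omega
    rcases hc with ⟨h1, h2⟩ | ⟨h1, h2⟩
    · have e1 : x = π ⟨n-1, by omega⟩ := by rw [← h1]; simp
      have e2 : y = π ⟨0, by omega⟩ := by rw [← h2]; simp
      simp only [e1, e2] at h
      exact adjIn_symm h.1
    · have e1 : x = π ⟨0, by omega⟩ := by rw [← h1]; simp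
      have e2 : y = π ⟨n-1, by omega⟩ := by rw [← h2]; simp
      simp only [e1, e2] at h
      exact h.1

lemma cover (hn : 3 ≤ n) {π σ : Equiv.Perm (Fin n)} {v : Fin n}
    (hπ : π ⟨0, by omega⟩ = v ∨ π ⟨n-1, by omega⟩ = v)
    (hσ : σ ⟨0, by omega⟩ = v ∨ σ ⟨n-1, by omega⟩ = v)
    (h : NeighborSep n n π σ) :
    oth hn σ v = nbr hn π v ∨ oth hn π v = nbr hn σ v := by
  rcases sep_char hn h with hA | hA
  · left
    rcases oth_spec hn σ v hσ with ⟨c1, c2⟩ | ⟨c1, c2⟩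
    · rw [c1, c2] at hA
      exact adj_end hn hπ hA
    · rw [c1, c2] at hA
      exact adj_end hn hπ (adjIn_symm hA)
  · right
    rcases oth_spec hn π v hπ with ⟨c1, c2⟩ | ⟨c1, c2⟩
    · rw [c1, c2] at hA
      exact adj_end hn hσ hA
    · rw [c1, c2] at hA
      exact adj_end hn hσ (adjIn_symm hA)

lemma oth_inj (hn : 3 ≤ n) {π σ : Equiv.Perm (Fin n)} {v : Fin n}
    (hπ : π ⟨0, by omega⟩ = v ∨ π ⟨n-1, by omega⟩ = v)
    (hσ : σ ⟨0, by omega⟩ = v ∨ σ ⟨n-1, by omega⟩ = v)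
    (h : NeighborSep n n π σ)
    (ho : oth hn σ v = oth hn π v) : False := by
  have hpair : (σ ⟨0, by omega⟩ = π ⟨0, by omega⟩ ∧ σ ⟨n-1, by omega⟩ = π ⟨n-1, by omega⟩) ∨
      (σ ⟨0, by omega⟩ = π ⟨n-1, by omega⟩ ∧ σ ⟨n-1, by omega⟩ = π ⟨0, by omega⟩) := by
    rcases oth_spec hn σ v hσ with ⟨c1, c2⟩ | ⟨c1, c2⟩ <;>
      rcases oth_spec hn π v hπ with ⟨d1, d2⟩ | ⟨d1, d2⟩
    · exact Or.inl ⟨c1.trans d1.symm, (c2.trans ho).trans d2.symm⟩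
    · exact Or.inr ⟨c1.trans d2.symm, (c2.trans ho).trans d1.symm⟩
    · exact Or.inr ⟨(c1.trans ho).trans d2.symm, c2.trans d1.symm⟩
    · exact Or.inl ⟨(c1.trans ho).trans d1.symm, c2.trans d2.symm⟩
  rcases sep_char hn h with hA | hA
  · rcases hpair with ⟨c1, c2⟩ | ⟨c1, c2⟩
    · rw [c1, c2] at hA; exact not_adj_ends hn π hA
    · rw [c1, c2] at hA; exact not_adj_ends hn π (adjIn_symm hA)
  · rcases hpair with ⟨c1, c2⟩ | ⟨c1, c2⟩
    · rw [← c1, ← c2] at hA; exact not_adj_ends hn σ hA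
    · rw [← c2, ← c1] at hA; exact not_adj_ends hn σ (adjIn_symm hA)


lemma vertex_bound (hn : 3 ≤ n) (F : Finset (Equiv.Perm (Fin n)))
    (hF : (F : Set (Equiv.Perm (Fin n))).Pairwise (NeighborSep n n)) (v : Fin n) :
    (F.filter (fun π => π ⟨0, by omega⟩ = v ∨ π ⟨n-1, by omega⟩ = v)).card ≤ 3 := by
  classical
  set S := F.filter (fun π => π ⟨0, by omega⟩ = v ∨ π ⟨n-1, by omega⟩ = v) with hSdef
  have hmem : ∀ π ∈ S, π ∈ F ∧ (π ⟨0, by omega⟩ = v ∨ π ⟨n-1, by omega⟩ = v) := by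
    intro π hπ
    rw [hSdef, Finset.mem_filter] at hπ
    exact hπ
  by_contra hcon
  push_neg at hcon
  have hc4 : 4 ≤ S.card := hcon
  -- the fiber bound counting
  have key : S.offDiag.card ≤ 2 * S.card := by
    apply Finset.card_le_mul_card_image_of_maps_to
      (f := fun p : Equiv.Perm (Fin n) × Equiv.Perm (Fin n) =>
        if oth hn p.2 v = nbr hn p.1 v then p.1 else p.2)
    · intro p hp
      rw [Finset.mem_offDiag] at hp
      split
      · exact hp.1
      · exact hp.2.1
    · intro π hπS
      -- the unique possible partner
      set T := S.filter (fun σ => σ ≠ π ∧ oth hn σ v = nbr hn π v) with hTdef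
      have hT1 : T.card ≤ 1 := by
        rw [Finset.card_le_one]
        intro σ hσ σ' hσ'
        rw [hTdef, Finset.mem_filter] at hσ hσ'
        by_contra hne
        have hsep : NeighborSep n n σ σ' :=
          hF ((hmem σ hσ.1).1) ((hmem σ' hσ'.1).1) hne
        exact oth_inj hn (hmem σ hσ.1).2 (hmem σ' hσ'.1).2 hsep
          (hσ'.2.2.trans hσ.2.2.symm)
      have hsub : S.offDiag.filter
          (fun p => (if oth hn p.2 v = nbr hn p.1 v then p.1 else p.2) = π) ⊆
          T.image (fun σ => (π, σ)) ∪ T.image (fun σ => (σ, π)) := by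
        intro p hp
        rw [Finset.mem_filter, Finset.mem_offDiag] at hp
        obtain ⟨⟨hp1, hp2, hpne⟩, hg⟩ := hp
        rw [Finset.mem_union]
        by_cases hcase : oth hn p.2 v = nbr hn p.1 v
        · rw [if_pos hcase] at hg
          left
          rw [Finset.mem_image]
          refine ⟨p.2, ?_, by rw [← hg]⟩
          rw [hTdef, Finset.mem_filter]
          exact ⟨hp2, by rw [hg] at hpne; exact fun hc => hpne (hc ▸ rfl),
            by rw [← hg]; exact hcase⟩
        · rw [if_neg hcase] at hg
          right
          rw [Finset.mem_image]
          have hsep : NeighborSep n n p.1 p.2 := hF ((hmem _ hp1).1) ((hmem _ hp2).1) hpne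
          have hcov := cover hn (hmem _ hp1).2 (hmem _ hp2).2 hsep
          have hcov2 : oth hn p.1 v = nbr hn p.2 v := hcov.resolve_left hcase
          refine ⟨p.1, ?_, by rw [← hg]⟩
          rw [hTdef, Finset.mem_filter]
          refine ⟨hp1, fun hc => hpne (by rw [hc, hg]), ?_⟩
          rw [← hg]
          exact hcov2
      calc (S.offDiag.filter
            (fun p => (if oth hn p.2 v = nbr hn p.1 v then p.1 else p.2) = π)).card
          ≤ (T.image (fun σ => (π, σ)) ∪ T.image (fun σ => (σ, π))).card :=
            Finset.card_le_card hsub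
        _ ≤ (T.image (fun σ => (π, σ))).card + (T.image (fun σ => (σ, π))).card :=
            Finset.card_union_le _ _
        _ ≤ T.card + T.card :=
            Nat.add_le_add (Finset.card_image_le) (Finset.card_image_le)
        _ ≤ 2 := by omega
  rw [Finset.offDiag_card] at key
  set c := S.card
  have h2 : 4 * c ≤ c * c := Nat.mul_le_mul_right c hc4
  omega


lemma double_count {α β : Type*} [DecidableEq β] [Fintype β] (F : Finset α)
    (g h : α → β) (hgh : ∀ a ∈ F, g a ≠ h a) :
    2 * F.card = ∑ v : β, (F.filter (fun a => g a = v ∨ h a = v)).card := by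
  classical
  calc 2 * F.card = ∑ _a ∈ F, 2 := by rw [Finset.sum_const, smul_eq_mul, mul_comm]
    _ = ∑ a ∈ F, (Finset.univ.filter (fun w => g a = w ∨ h a = w)).card := by
        refine Finset.sum_congr rfl fun a ha => ?_
        have hset : Finset.univ.filter (fun w => g a = w ∨ h a = w) = {g a, h a} := by
          ext w; simp [eq_comm]
        rw [hset, Finset.card_insert_of_notMem (by simp [hgh a ha]),
          Finset.card_singleton]
    _ = ∑ v : β, (F.filter (fun a => g a = v ∨ h a = v)).card := by
        simp only [Finset.card_filter]
        exact Finset.sum_comm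

set_option maxHeartbeats 1000000 in
lemma main_bound (hn : 3 ≤ n) (F : Finset (Equiv.Perm (Fin n)))
    (hF : (F : Set (Equiv.Perm (Fin n))).Pairwise (NeighborSep n n)) :
    2 * F.card ≤ 3 * n := by
  have hdc := double_count F (fun π => π ⟨0, by omega⟩) (fun π => π ⟨n-1, by omega⟩)
    (fun a _ => ends_ne hn a)
  calc 2 * F.card
      = ∑ v : Fin n, (F.filter
        (fun π => π ⟨0, by omega⟩ = v ∨ π ⟨n-1, by omega⟩ = v)).card := hdc
    _ ≤ ∑ _v : Fin n, 3 := Finset.sum_le_sum fun v _ => vertex_bound hn F hF v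
    _ = 3 * n := by simp [mul_comm]

end PermPAux

theorem permP_n_n_upper (n : ℕ) (hn : 2 ≤ n) :
    permP n n ≤ 3 * n / 2 := by
  apply csSup_le'
  rintro m ⟨F, hF, rfl⟩
  rcases eq_or_lt_of_le hn with h2 | h3
  · -- n = 2 : there are only two permutations at all
    have hcard : F.card ≤ Fintype.card (Equiv.Perm (Fin n)) := Finset.card_le_univ F
    have : Fintype.card (Equiv.Perm (Fin n)) = 2 := by
      rw [Fintype.card_perm, Fintype.card_fin, ← h2]; rfl
    omega
  · have h3' : 3 ≤ n := h3
    have := PermPAux.main_bound h3' F hF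
    omega
end

section
/- For every odd integer n ≥ 3, P(n,n) ≥ ⌊3n/2⌋ − 1. -/
set_option maxHeartbeats 1000000

namespace NSep

/-- position of element `x` in the base cyclic word `W` (inverse of `wf`). -/
def wi (n x : ℕ) : ℕ :=
  if x = 0 then (if n % 4 = 3 then n-3 else n-1)
  else if x = n-2 then (if n % 4 = 3 then n-1 else n-3)
  else if x = n-1 then n-2
  else if x % 2 = 0 then x-2 else x

def wf (n q : ℕ) : ℕ :=
  if q = n-3 then (if n % 4 = 3 then 0 else n-2)
  else if q = n-2 then n-1
  else if q = n-1 then (if n % 4 = 3 then n-2 else 0)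
  else if q % 2 = 0 then q+2 else q

/-- position of element `x` in the word `U` (with `n-1 ↦ n-1`). -/
def uf (n x : ℕ) : ℕ :=
  if x = n-1 then n-1
  else if n % 4 = 3 then
    (if (x/2) % 2 = 1 then x/2 - 1 + x % 2 else (n-3)/2 + x/2 + x % 2)
  else
    (if (x/2) % 2 = 0 then x/2 + x % 2 else n-1 - x/2 - x % 2)

def ui (n q : ℕ) : ℕ :=
  if q = n-1 then n-1
  else if n % 4 = 3 then
    (if q < (n-3)/2 then 2*q + 2 - q % 2 else 2*(q - (n-3)/2) - (q - (n-3)/2) % 2)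
  else
    (if q < (n-1)/2 then 2*q - q % 2 else 2*(n-1-q) - (n-q) % 2)

def aj (n j : ℕ) : ℕ :=
  if n % 4 = 3 then (if j % 2 = 1 then j-1 else (n-3)/2 + j)
  else (if j % 2 = 0 then j else n-2-j)

section basic
variable {n : ℕ} (hn : 3 ≤ n) (ho : n % 2 = 1)
include hn ho

lemma wi_lt {x : ℕ} (hx : x < n) : wi n x < n := by
  unfold wi; split_ifs <;> try contradiction
  all_goals omega

lemma wf_lt {q : ℕ} (hq : q < n) : wf n q < n := by
  unfold wf; split_ifs <;> try contradiction
  all_goals omega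

lemma wf_wi {x : ℕ} (hx : x < n) : wf n (wi n x) = x := by
  unfold wf wi; split_ifs <;> try contradiction
  all_goals omega

lemma wi_wf {q : ℕ} (hq : q < n) : wi n (wf n q) = q := by
  unfold wi wf; split_ifs <;> try contradiction
  all_goals omega

lemma uf_lt {x : ℕ} (hx : x < n) : uf n x < n := by
  unfold uf; split_ifs <;> try contradiction
  all_goals omega

lemma ui_lt {q : ℕ} (hq : q < n) : ui n q < n := by
  unfold ui; split_ifs <;> try contradiction
  all_goals omega

lemma ui_uf {x : ℕ} (hx : x < n) : ui n (uf n x) = x := by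
  unfold ui uf; split_ifs <;> try contradiction
  all_goals omega

lemma uf_ui {q : ℕ} (hq : q < n) : uf n (ui n q) = q := by
  unfold uf ui; split_ifs <;> try contradiction
  all_goals omega

lemma aj_lt {j : ℕ} (hj : j < (n-1)/2) : aj n j < n - 1 := by
  unfold aj; split_ifs <;> try contradiction
  all_goals omega

end basic

end NSep

namespace NSep

/-- positions for the rotations -/
def rotP (n t x : ℕ) : ℕ := if 2*t ≤ x then x - 2*t else x + n - 2*t
def rotI (n t q : ℕ) : ℕ := if q + 2*t < n then q + 2*t else q + 2*t - n
/-- positions for the arc permutations `T i` -/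
def tP (n i x : ℕ) : ℕ := if 2*i ≤ wi n x then wi n x - 2*i else wi n x + n - 2*i
def tI (n i q : ℕ) : ℕ := wf n (if q + 2*i < n then q + 2*i else q + 2*i - n)
/-- positions for the sigma permutations -/
def sP (n j x : ℕ) : ℕ := if uf n x ≤ aj n j then aj n j - uf n x else aj n j + n - uf n x
def sI (n j q : ℕ) : ℕ := ui n (if q ≤ aj n j then aj n j - q else aj n j + n - q)

section pos
variable {n : ℕ} (hn : 3 ≤ n) (ho : n % 2 = 1)
include hn ho

lemma aj_lt' {j : ℕ} (hj : j < n) : aj n j < 2*n := by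
  unfold aj; split_ifs <;> omega

lemma rotP_lt {t x : ℕ} (ht : 2*t < n) (hx : x < n) : rotP n t x < n := by
  unfold rotP; split_ifs <;> omega
lemma rotI_lt {t q : ℕ} (ht : 2*t < n) (hq : q < n) : rotI n t q < n := by
  unfold rotI; split_ifs <;> omega
lemma rotI_rotP {t x : ℕ} (ht : 2*t < n) (hx : x < n) : rotI n t (rotP n t x) = x := by
  unfold rotI rotP; split_ifs <;> omega
lemma rotP_rotI {t q : ℕ} (ht : 2*t < n) (hq : q < n) : rotP n t (rotI n t q) = q := by
  unfold rotP rotI; split_ifs <;> omega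

lemma tP_lt {i x : ℕ} (hi : 2*i < n) (hx : x < n) : tP n i x < n := by
  have h1 := wi_lt hn ho hx
  unfold tP; split_ifs <;> omega
lemma tI_lt {i q : ℕ} (hi : 2*i < n) (hq : q < n) : tI n i q < n := by
  apply wf_lt hn ho; split_ifs <;> omega
lemma tI_tP {i x : ℕ} (hi : 2*i < n) (hx : x < n) : tI n i (tP n i x) = x := by
  have h1 := wi_lt hn ho hx
  unfold tI
  have : (if tP n i x + 2*i < n then tP n i x + 2*i else tP n i x + 2*i - n) = wi n x := by
    unfold tP; split_ifs <;> omega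
  rw [this, wf_wi hn ho hx]
lemma tP_tI {i q : ℕ} (hi : 2*i < n) (hq : q < n) : tP n i (tI n i q) = q := by
  unfold tP tI
  rw [wi_wf hn ho (by split_ifs <;> omega)]
  split_ifs <;> omega

lemma sP_lt {j x : ℕ} (hj : j < (n-1)/2) (hx : x < n) : sP n j x < n := by
  have h1 := uf_lt hn ho hx
  have h4 : aj n j < n - 1 := aj_lt hn ho hj
  unfold sP; split_ifs <;> omega
lemma sI_lt {j q : ℕ} (hj : j < (n-1)/2) (hq : q < n) : sI n j q < n := by
  have h4 : aj n j < n - 1 := aj_lt hn ho hj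
  apply ui_lt hn ho; split_ifs <;> omega
lemma sI_sP {j x : ℕ} (hj : j < (n-1)/2) (hx : x < n) : sI n j (sP n j x) = x := by
  have h1 := uf_lt hn ho hx
  have h4 : aj n j < n - 1 := aj_lt hn ho hj
  unfold sI
  have : (if sP n j x ≤ aj n j then aj n j - sP n j x else aj n j + n - sP n j x) = uf n x := by
    unfold sP; split_ifs <;> omega
  rw [this, ui_uf hn ho hx]
lemma sP_sI {j q : ℕ} (hj : j < (n-1)/2) (hq : q < n) : sP n j (sI n j q) = q := by
  have h4 : aj n j < n - 1 := aj_lt hn ho hj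
  unfold sP sI
  rw [uf_ui hn ho (by split_ifs <;> omega)]
  split_ifs <;> omega

end pos

/-- the whole family, position map of member `t` -/
def posf (n t x : ℕ) : ℕ :=
  if t < (n+1)/2 then rotP n t x
  else if t < n-1 then tP n (t - (n+1)/2 + 1) x
  else sP n (t - (n-1)) x

def invf (n t q : ℕ) : ℕ :=
  if t < (n+1)/2 then rotI n t q
  else if t < n-1 then tI n (t - (n+1)/2 + 1) q
  else sI n (t - (n-1)) q

/-- the member `t` of the family, as a permutation of `Fin n`.  Its `symm`
(element-to-position map) is `posf`. -/
def famE (n : ℕ) (hn : 3 ≤ n) (ho : n % 2 = 1) (t : ℕ) (ht : t < (3*n-3)/2) :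
    Equiv.Perm (Fin n) :=
  Equiv.symm
  { toFun := fun x => ⟨posf n t x.1, by
      unfold posf
      split_ifs with h1 h2
      · exact rotP_lt hn ho (by omega) x.2
      · exact tP_lt hn ho (by omega) x.2
      · exact sP_lt hn ho (by omega) x.2⟩
    invFun := fun q => ⟨invf n t q.1, by
      unfold invf
      split_ifs with h1 h2
      · exact rotI_lt hn ho (by omega) q.2
      · exact tI_lt hn ho (by omega) q.2
      · exact sI_lt hn ho (by omega) q.2⟩
    left_inv := by
      intro x
      apply Fin.ext
      show invf n t (posf n t x.1) = x.1
      unfold posf invf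
      split_ifs with h1 h2
      · exact rotI_rotP hn ho (by omega) x.2
      · exact tI_tP hn ho (by omega) x.2
      · exact sI_sP hn ho (by omega) x.2
    right_inv := by
      intro q
      apply Fin.ext
      show posf n t (invf n t q.1) = q.1
      unfold posf invf
      split_ifs with h1 h2
      · exact rotP_rotI hn ho (by omega) q.2
      · exact tP_tI hn ho (by omega) q.2
      · exact sP_sI hn ho (by omega) q.2 }

lemma famE_symm_val (n : ℕ) (hn : 3 ≤ n) (ho : n % 2 = 1) (t : ℕ) (ht : t < (3*n-3)/2)
    (x : Fin n) : ((famE n hn ho t ht).symm x).val = posf n t x.1 := rfl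

end NSep


namespace NSep

lemma sep_of {n : ℕ} (hn : 3 ≤ n) {π σ : Equiv.Perm (Fin n)} {x y : Fin n}
    (h1 : (π.symm y).val + 1 = (π.symm x).val)
    (h2 : ((σ.symm x).val = 0 ∧ (σ.symm y).val + 1 = n) ∨
          ((σ.symm y).val = 0 ∧ (σ.symm x).val + 1 = n)) :
    NeighborSep n n π σ := by
  refine ⟨x, y, Or.inl ⟨?_, ?_⟩⟩
  · have e1 : ((π.symm x : ℤ)) = ((π.symm x).val : ℤ) := rfl
    have e2 : ((π.symm y : ℤ)) = ((π.symm y).val : ℤ) := rfl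
    rw [e1, e2]; omega
  · have e1 : ((σ.symm x : ℤ)) = ((σ.symm x).val : ℤ) := rfl
    have e2 : ((σ.symm y : ℤ)) = ((σ.symm y).val : ℤ) := rfl
    rw [e1, e2]; omega

lemma sep_swap {n k : ℕ} {π σ : Equiv.Perm (Fin n)}
    (h : NeighborSep n k π σ) : NeighborSep n k σ π := by
  obtain ⟨x, y, h⟩ := h
  exact ⟨x, y, h.symm⟩

lemma sep_not_self {n : ℕ} (hn : 3 ≤ n) (π : Equiv.Perm (Fin n)) :
    ¬ NeighborSep n n π π := by
  rintro ⟨x, y, ⟨a, b⟩ | ⟨a, b⟩⟩ <;> omega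

section vals
variable {n : ℕ}

-- targeted eval lemmas for uf and aj
lemma uf_v3o {x : ℕ} (h4 : n % 4 = 3) (hx : x ≠ n-1) (hk : (x/2) % 2 = 1) :
    uf n x = x/2 - 1 + x % 2 := by
  unfold uf; rw [if_neg hx, if_pos h4, if_pos hk]

lemma uf_v3e {x : ℕ} (h4 : n % 4 = 3) (hx : x ≠ n-1) (hk : (x/2) % 2 = 0) :
    uf n x = (n-3)/2 + x/2 + x % 2 := by
  unfold uf; rw [if_neg hx, if_pos h4, if_neg (by omega)]

lemma uf_v1e {x : ℕ} (h4 : n % 4 = 1) (hx : x ≠ n-1) (hk : (x/2) % 2 = 0) :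
    uf n x = x/2 + x % 2 := by
  unfold uf; rw [if_neg hx, if_neg (by omega), if_pos hk]

lemma uf_v1o {x : ℕ} (h4 : n % 4 = 1) (hx : x ≠ n-1) (hk : (x/2) % 2 = 1) :
    uf n x = n-1 - x/2 - x % 2 := by
  unfold uf; rw [if_neg hx, if_neg (by omega), if_neg (by omega)]

lemma aj_v3o {j : ℕ} (h4 : n % 4 = 3) (hj : j % 2 = 1) : aj n j = j-1 := by
  unfold aj; rw [if_pos h4, if_pos hj]

lemma aj_v3e {j : ℕ} (h4 : n % 4 = 3) (hj : j % 2 = 0) : aj n j = (n-3)/2 + j := by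
  unfold aj; rw [if_pos h4, if_neg (by omega)]

lemma aj_v1e {j : ℕ} (h4 : n % 4 = 1) (hj : j % 2 = 0) : aj n j = j := by
  unfold aj; rw [if_neg (by omega), if_pos hj]

lemma aj_v1o {j : ℕ} (h4 : n % 4 = 1) (hj : j % 2 = 1) : aj n j = n-2-j := by
  unfold aj; rw [if_neg (by omega), if_neg (by omega)]

variable (hn : 3 ≤ n) (ho : n % 2 = 1)
include hn ho

lemma wi_ev {a : ℕ} (h2 : 2 ≤ a) (h3 : a ≤ n-3) (he : a % 2 = 0) : wi n a = a - 2 := by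
  unfold wi; rw [if_neg (by omega), if_neg (by omega), if_neg (by omega), if_pos he]

lemma wi_od {a : ℕ} (h1 : a % 2 = 1) (h2 : a ≤ n-4) : wi n a = a := by
  unfold wi; rw [if_neg (by omega), if_neg (by omega), if_neg (by omega), if_neg (by omega)]

lemma wi_03 (h4 : n % 4 = 3) : wi n 0 = n-3 := by
  unfold wi; rw [if_pos rfl, if_pos h4]

lemma wi_01 (h4 : n % 4 = 1) : wi n 0 = n-1 := by
  unfold wi; rw [if_pos rfl, if_neg (by omega)]

lemma wi_last : wi n (n-1) = n-2 := by
  unfold wi; rw [if_neg (by omega), if_neg (by omega), if_pos rfl]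

lemma wi_n23 (h4 : n % 4 = 3) : wi n (n-2) = n-1 := by
  unfold wi; rw [if_neg (by omega), if_pos rfl, if_pos h4]

lemma wi_n21 (h4 : n % 4 = 1) : wi n (n-2) = n-3 := by
  unfold wi; rw [if_neg (by omega), if_pos rfl, if_neg (by omega)]

lemma uf_blk {j : ℕ} (hj : j < (n-1)/2) :
    (uf n (2*j) = aj n j ∧ uf n (2*j+1) = aj n j + 1) ∨
    (uf n (2*j+1) = aj n j ∧ uf n (2*j) = aj n j + 1) := by
  have d1 : (2*j)/2 = j := by omega
  have d2 : (2*j+1)/2 = j := by omega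
  have m1 : (2*j) % 2 = 0 := by omega
  have m2 : (2*j+1) % 2 = 1 := by omega
  have x1 : 2*j ≠ n-1 := by omega
  have x2 : 2*j+1 ≠ n-1 := by omega
  rcases (show n%4=3 ∨ n%4=1 by omega) with h4 | h4 <;>
    rcases (show j%2=0 ∨ j%2=1 by omega) with hj2 | hj2
  · rw [uf_v3e h4 x1 (by omega), uf_v3e h4 x2 (by omega), aj_v3e h4 hj2]; omega
  · rw [uf_v3o h4 x1 (by omega), uf_v3o h4 x2 (by omega), aj_v3o h4 hj2]; omega
  · rw [uf_v1e h4 x1 (by omega), uf_v1e h4 x2 (by omega), aj_v1e h4 hj2]; omega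
  · rw [uf_v1o h4 x1 (by omega), uf_v1o h4 x2 (by omega), aj_v1o h4 hj2]; omega

lemma uf_blk_ne {j k : ℕ} (hj : j < (n-1)/2) (hk : k < (n-1)/2) (hne : j ≠ k) :
    uf n (2*k) ≠ aj n j ∧ uf n (2*k+1) ≠ aj n j := by
  have d1 : (2*k)/2 = k := by omega
  have d2 : (2*k+1)/2 = k := by omega
  have x1 : 2*k ≠ n-1 := by omega
  have x2 : 2*k+1 ≠ n-1 := by omega
  rcases (show n%4=3 ∨ n%4=1 by omega) with h4 | h4 <;>
    rcases (show j%2=0 ∨ j%2=1 by omega) with hj2 | hj2 <;>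
      rcases (show k%2=0 ∨ k%2=1 by omega) with hk2 | hk2
  · rw [uf_v3e h4 x1 (by omega), uf_v3e h4 x2 (by omega), aj_v3e h4 hj2]; omega
  · rw [uf_v3o h4 x1 (by omega), uf_v3o h4 x2 (by omega), aj_v3e h4 hj2]; omega
  · rw [uf_v3e h4 x1 (by omega), uf_v3e h4 x2 (by omega), aj_v3o h4 hj2]; omega
  · rw [uf_v3o h4 x1 (by omega), uf_v3o h4 x2 (by omega), aj_v3o h4 hj2]; omega
  · rw [uf_v1e h4 x1 (by omega), uf_v1e h4 x2 (by omega), aj_v1e h4 hj2]; omega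
  · rw [uf_v1o h4 x1 (by omega), uf_v1o h4 x2 (by omega), aj_v1e h4 hj2]; omega
  · rw [uf_v1e h4 x1 (by omega), uf_v1e h4 x2 (by omega), aj_v1o h4 hj2]; omega
  · rw [uf_v1o h4 x1 (by omega), uf_v1o h4 x2 (by omega), aj_v1o h4 hj2]; omega

lemma uf_eT {i j : ℕ} (hi1 : 1 ≤ i) (hi2 : i + 2 ≤ (n-1)/2) (hj : j < (n-1)/2) :
    (uf n (2*i+2) = uf n (2*i-1) + 1 ∧ uf n (2*i-1) ≠ aj n j) ∨
    (uf n (2*i-1) = uf n (2*i+2) + 1 ∧ uf n (2*i+2) ≠ aj n j) := by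
  have d1 : (2*i+2)/2 = i+1 := by omega
  have d2 : (2*i-1)/2 = i-1 := by omega
  have m1 : (2*i+2) % 2 = 0 := by omega
  have m2 : (2*i-1) % 2 = 1 := by omega
  have x1 : 2*i+2 ≠ n-1 := by omega
  have x2 : 2*i-1 ≠ n-1 := by omega
  rcases (show n%4=3 ∨ n%4=1 by omega) with h4 | h4 <;>
    rcases (show i%2=0 ∨ i%2=1 by omega) with hi0 | hi0 <;>
      rcases (show j%2=0 ∨ j%2=1 by omega) with hj2 | hj2
  · rw [uf_v3o h4 x1 (by omega), uf_v3o h4 x2 (by omega), aj_v3e h4 hj2]; omega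
  · rw [uf_v3o h4 x1 (by omega), uf_v3o h4 x2 (by omega), aj_v3o h4 hj2]; omega
  · rw [uf_v3e h4 x1 (by omega), uf_v3e h4 x2 (by omega), aj_v3e h4 hj2]; omega
  · rw [uf_v3e h4 x1 (by omega), uf_v3e h4 x2 (by omega), aj_v3o h4 hj2]; omega
  · rw [uf_v1o h4 x1 (by omega), uf_v1o h4 x2 (by omega), aj_v1e h4 hj2]; omega
  · rw [uf_v1o h4 x1 (by omega), uf_v1o h4 x2 (by omega), aj_v1o h4 hj2]; omega
  · rw [uf_v1e h4 x1 (by omega), uf_v1e h4 x2 (by omega), aj_v1e h4 hj2]; omega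
  · rw [uf_v1e h4 x1 (by omega), uf_v1e h4 x2 (by omega), aj_v1o h4 hj2]; omega

lemma uf_eT3 {j : ℕ} (h4 : n % 4 = 3) (hb : 2 ≤ (n-1)/2) (hj : j < (n-1)/2) :
    uf n 0 = uf n (n-4) + 1 ∧ uf n (n-4) ≠ aj n j := by
  obtain ⟨m, rfl⟩ : ∃ m, n = 4*m+3 := ⟨n/4, by omega⟩
  have d1 : (0:ℕ)/2 = 0 := by omega
  have d2 : (4*m+3-4)/2 = 2*m-1 := by omega
  have x1 : (0:ℕ) ≠ 4*m+3-1 := by omega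
  have x2 : 4*m+3-4 ≠ 4*m+3-1 := by omega
  rw [uf_v3e h4 x1 (by omega), uf_v3o h4 x2 (by omega)]
  rcases (show j%2=0 ∨ j%2=1 by omega) with hj2 | hj2
  · rw [aj_v3e h4 hj2]; omega
  · rw [aj_v3o h4 hj2]; omega

lemma uf_eT1 {j : ℕ} (h4 : n % 4 = 1) (hb : 2 ≤ (n-1)/2) (hj : j < (n-1)/2) :
    uf n (n-2) = uf n (n-4) + 1 ∧ uf n (n-4) ≠ aj n j := by
  obtain ⟨m, rfl⟩ : ∃ m, n = 4*m+1 := ⟨n/4, by omega⟩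
  have d1 : (4*m+1-2)/2 = 2*m-1 := by omega
  have d2 : (4*m+1-4)/2 = 2*m-2 := by omega
  have x1 : 4*m+1-2 ≠ 4*m+1-1 := by omega
  have x2 : 4*m+1-4 ≠ 4*m+1-1 := by omega
  rw [uf_v1o h4 x1 (by omega), uf_v1e h4 x2 (by omega)]
  rcases (show j%2=0 ∨ j%2=1 by omega) with hj2 | hj2
  · rw [aj_v1e h4 hj2]; omega
  · rw [aj_v1o h4 hj2]; omega

end vals
end NSep


namespace NSep

lemma fv {n a : ℕ} {h : a < n} : ((⟨a, h⟩ : Fin n)).val = a := rfl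

section cases
variable {n : ℕ} (hn : 3 ≤ n) (ho : n % 2 = 1)
include hn ho

lemma posf_rot {t x : ℕ} (h : t < (n+1)/2) : posf n t x = rotP n t x := by
  unfold posf; rw [if_pos h]

lemma posf_T {t x : ℕ} (h1 : (n+1)/2 ≤ t) (h2 : t < n-1) :
    posf n t x = tP n (t-(n+1)/2+1) x := by
  unfold posf; rw [if_neg (by omega), if_pos h2]

lemma posf_S {t x : ℕ} (h1 : n-1 ≤ t) : posf n t x = sP n (t-(n-1)) x := by
  unfold posf; rw [if_neg (by omega), if_neg (by omega)]

/-- rotation vs rotation -/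
lemma caseA {t1 t2 : ℕ} (h1 : t1 < (n+1)/2) (h2 : t2 < (n+1)/2) (h2' : 1 ≤ t2)
    (hne : t1 ≠ t2) (ht1 : t1 < (3*n-3)/2) (ht2 : t2 < (3*n-3)/2) :
    NeighborSep n n (famE n hn ho t1 ht1) (famE n hn ho t2 ht2) := by
  have E1 : ∀ (x : Fin n), ((famE n hn ho t1 ht1).symm x).val = rotP n t1 x.1 := by
    intro x; rw [famE_symm_val, posf_rot hn ho h1]
  have E2 : ∀ (x : Fin n), ((famE n hn ho t2 ht2).symm x).val = rotP n t2 x.1 := by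
    intro x; rw [famE_symm_val, posf_rot hn ho h2]
  have hb1 : 2*t1 < n := by omega
  have hb2 : 2*t2 < n := by omega
  clear h1 h2
  refine sep_of hn (x := ⟨2*t2, by omega⟩) (y := ⟨2*t2-1, by omega⟩) ?_ ?_
  · simp only [E1, fv]; unfold rotP; split_ifs <;> omega
  · simp only [E2, fv]; unfold rotP; split_ifs <;> omega

/-- arc permutation vs rotation -/
lemma caseB {t1 t2 : ℕ} (h1 : (n+1)/2 ≤ t1) (h1' : t1 < n-1) (h2 : t2 < (n+1)/2)
    (ht1 : t1 < (3*n-3)/2) (ht2 : t2 < (3*n-3)/2) :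
    NeighborSep n n (famE n hn ho t1 ht1) (famE n hn ho t2 ht2) := by
  obtain ⟨i, hid⟩ : ∃ i, t1 - (n+1)/2 + 1 = i := ⟨_, rfl⟩
  have E1 : ∀ (x : Fin n), ((famE n hn ho t1 ht1).symm x).val = tP n i x.1 := by
    intro x; rw [famE_symm_val, posf_T hn ho h1 h1', hid]
  have E2 : ∀ (x : Fin n), ((famE n hn ho t2 ht2).symm x).val = rotP n t2 x.1 := by
    intro x; rw [famE_symm_val, posf_rot hn ho h2]
  have hi1 : 1 ≤ i := by omega
  have hi2 : 2*i ≤ n-3 := by omega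
  have hb2 : 2*t2 < n := by omega
  clear hid h1 h1' h2
  rcases (show t2 = 0 ∨ (1 ≤ t2 ∧ 2*t2 ≤ n-3) ∨ 2*t2 = n-1 by omega) with h0 | hmid | hlast
  · subst h0
    rcases (show n%4=3 ∨ n%4=1 by omega) with h4 | h4
    · refine sep_of hn (x := ⟨n-1, by omega⟩) (y := ⟨0, by omega⟩) ?_ ?_
      · simp only [E1, fv]; unfold tP; rw [wi_03 hn ho h4, wi_last hn ho]
        split_ifs <;> omega
      · simp only [E2, fv]; unfold rotP; split_ifs <;> omega
    · refine sep_of hn (x := ⟨0, by omega⟩) (y := ⟨n-1, by omega⟩) ?_ ?_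
      · simp only [E1, fv]; unfold tP; rw [wi_01 hn ho h4, wi_last hn ho]
        split_ifs <;> omega
      · simp only [E2, fv]; unfold rotP; split_ifs <;> omega
  · refine sep_of hn (x := ⟨2*t2-1, by omega⟩) (y := ⟨2*t2, by omega⟩) ?_ ?_
    · simp only [E1, fv]; unfold tP
      rw [wi_ev hn ho (by omega) (by omega) (by omega), wi_od hn ho (by omega) (by omega)]
      split_ifs <;> omega
    · simp only [E2, fv]; unfold rotP; split_ifs <;> omega
  · rcases (show n%4=3 ∨ n%4=1 by omega) with h4 | h4
    · refine sep_of hn (x := ⟨n-2, by omega⟩) (y := ⟨n-1, by omega⟩) ?_ ?_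
      · simp only [E1, fv]; unfold tP; rw [wi_n23 hn ho h4, wi_last hn ho]
        split_ifs <;> omega
      · simp only [E2, fv]; unfold rotP; split_ifs <;> omega
    · refine sep_of hn (x := ⟨n-1, by omega⟩) (y := ⟨n-2, by omega⟩) ?_ ?_
      · simp only [E1, fv]; unfold tP; rw [wi_n21 hn ho h4, wi_last hn ho]
        split_ifs <;> omega
      · simp only [E2, fv]; unfold rotP; split_ifs <;> omega

/-- rotation vs sigma permutation -/
lemma caseC {t1 t2 : ℕ} (h1 : t1 < (n+1)/2) (h2 : n-1 ≤ t2)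
    (ht1 : t1 < (3*n-3)/2) (ht2 : t2 < (3*n-3)/2) :
    NeighborSep n n (famE n hn ho t1 ht1) (famE n hn ho t2 ht2) := by
  obtain ⟨j, hjd⟩ : ∃ j, t2 - (n-1) = j := ⟨_, rfl⟩
  have E1 : ∀ (x : Fin n), ((famE n hn ho t1 ht1).symm x).val = rotP n t1 x.1 := by
    intro x; rw [famE_symm_val, posf_rot hn ho h1]
  have E2 : ∀ (x : Fin n), ((famE n hn ho t2 ht2).symm x).val = sP n j x.1 := by
    intro x; rw [famE_symm_val, posf_S hn ho h2, hjd]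
  have hj : j < (n-1)/2 := by omega
  have hb1 : 2*t1 < n := by omega
  have haj : aj n j < n-1 := aj_lt hn ho hj
  have hu1 : uf n (2*j) < n := uf_lt hn ho (by omega)
  have hu2 : uf n (2*j+1) < n := uf_lt hn ho (by omega)
  obtain hblk := uf_blk hn ho hj
  clear hjd h1 h2
  refine sep_of hn (x := ⟨2*j+1, by omega⟩) (y := ⟨2*j, by omega⟩) ?_ ?_
  · simp only [E1, fv]; unfold rotP; split_ifs <;> omega
  · simp only [E2, fv]
    rcases hblk with ⟨e1, e2⟩ | ⟨e1, e2⟩ <;>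
      · unfold sP; rw [e1, e2]; split_ifs <;> omega

/-- sigma vs sigma -/
lemma caseD {t1 t2 : ℕ} (h1 : n-1 ≤ t1) (h2 : n-1 ≤ t2) (hne : t1 ≠ t2)
    (ht1 : t1 < (3*n-3)/2) (ht2 : t2 < (3*n-3)/2) :
    NeighborSep n n (famE n hn ho t1 ht1) (famE n hn ho t2 ht2) := by
  obtain ⟨j1, hj1d⟩ : ∃ j, t1 - (n-1) = j := ⟨_, rfl⟩
  obtain ⟨j2, hj2d⟩ : ∃ j, t2 - (n-1) = j := ⟨_, rfl⟩
  have E1 : ∀ (x : Fin n), ((famE n hn ho t1 ht1).symm x).val = sP n j1 x.1 := by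
    intro x; rw [famE_symm_val, posf_S hn ho h1, hj1d]
  have E2 : ∀ (x : Fin n), ((famE n hn ho t2 ht2).symm x).val = sP n j2 x.1 := by
    intro x; rw [famE_symm_val, posf_S hn ho h2, hj2d]
  have hj1 : j1 < (n-1)/2 := by omega
  have hj2 : j2 < (n-1)/2 := by omega
  have hjne : j1 ≠ j2 := by omega
  have haj1 : aj n j1 < n-1 := aj_lt hn ho hj1
  have haj2 : aj n j2 < n-1 := aj_lt hn ho hj2
  have hu1 : uf n (2*j2) < n := uf_lt hn ho (by omega)
  have hu2 : uf n (2*j2+1) < n := uf_lt hn ho (by omega)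
  have hb2 : 2*j2+1 < n := by omega
  obtain ⟨ne1, ne2⟩ := uf_blk_ne hn ho hj1 hj2 hjne
  obtain hblk := uf_blk hn ho hj2
  clear hj1d hj2d h1 h2 hne hj1 hj2 hjne
  rcases hblk with ⟨e1, e2⟩ | ⟨e1, e2⟩
  · refine sep_of hn (x := ⟨2*j2, by omega⟩) (y := ⟨2*j2+1, by omega⟩) ?_ ?_
    · simp only [E1, fv]; unfold sP; split_ifs <;> omega
    · simp only [E2, fv]; unfold sP; rw [e1, e2]; split_ifs <;> omega
  · refine sep_of hn (x := ⟨2*j2+1, by omega⟩) (y := ⟨2*j2, by omega⟩) ?_ ?_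
    · simp only [E1, fv]; unfold sP; split_ifs <;> omega
    · simp only [E2, fv]; unfold sP; rw [e1, e2]; split_ifs <;> omega

/-- sigma vs arc permutation -/
lemma caseE {t1 t2 : ℕ} (h1 : n-1 ≤ t1) (h2 : (n+1)/2 ≤ t2) (h2' : t2 < n-1)
    (ht1 : t1 < (3*n-3)/2) (ht2 : t2 < (3*n-3)/2) :
    NeighborSep n n (famE n hn ho t1 ht1) (famE n hn ho t2 ht2) := by
  obtain ⟨j, hjd⟩ : ∃ j, t1 - (n-1) = j := ⟨_, rfl⟩
  obtain ⟨i, hid⟩ : ∃ i, t2 - (n+1)/2 + 1 = i := ⟨_, rfl⟩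
  have E1 : ∀ (x : Fin n), ((famE n hn ho t1 ht1).symm x).val = sP n j x.1 := by
    intro x; rw [famE_symm_val, posf_S hn ho h1, hjd]
  have E2 : ∀ (x : Fin n), ((famE n hn ho t2 ht2).symm x).val = tP n i x.1 := by
    intro x; rw [famE_symm_val, posf_T hn ho h2 h2', hid]
  have hj : j < (n-1)/2 := by omega
  have hi1 : 1 ≤ i := by omega
  have hi2 : i ≤ (n-1)/2 - 1 := by omega
  have haj : aj n j < n-1 := aj_lt hn ho hj
  clear hjd hid h1 h2 h2'
  rcases (show i + 2 ≤ (n-1)/2 ∨ i = (n-1)/2 - 1 by omega) with hc | hc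
  · have hu1 : uf n (2*i+2) < n := uf_lt hn ho (by omega)
    have hu2 : uf n (2*i-1) < n := uf_lt hn ho (by omega)
    have hw1 : wi n (2*i+2) = 2*i := by
      have := wi_ev hn ho (a := 2*i+2) (by omega) (by omega) (by omega); omega
    have hw2 : wi n (2*i-1) = 2*i-1 := wi_od hn ho (by omega) (by omega)
    have hin : 2*i + 2 < n := by omega
    obtain he := uf_eT hn ho hi1 hc hj
    clear hc hj hi2
    rcases he with ⟨e1, ne⟩ | ⟨e1, ne⟩
    · refine sep_of hn (x := ⟨2*i-1, by omega⟩) (y := ⟨2*i+2, by omega⟩) ?_ ?_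
      · simp only [E1, fv]; unfold sP; rw [e1]; split_ifs <;> omega
      · simp only [E2, fv]; unfold tP; rw [hw1, hw2]; split_ifs <;> omega
    · refine sep_of hn (x := ⟨2*i+2, by omega⟩) (y := ⟨2*i-1, by omega⟩) ?_ ?_
      · simp only [E1, fv]; unfold sP; rw [e1]; split_ifs <;> omega
      · simp only [E2, fv]; unfold tP; rw [hw1, hw2]; split_ifs <;> omega
  · have hb2 : 2 ≤ (n-1)/2 := by omega
    have hw2 : wi n (n-4) = n-4 := wi_od hn ho (by omega) (by omega)
    rcases (show n%4=3 ∨ n%4=1 by omega) with h4 | h4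
    · have hu1 : uf n 0 < n := uf_lt hn ho (by omega)
      have hu2 : uf n (n-4) < n := uf_lt hn ho (by omega)
      obtain ⟨e1, ne⟩ := uf_eT3 hn ho h4 hb2 hj
      have hc2 : 2*i = n-3 := by omega
      have hn5 : 5 ≤ n := by omega
      clear hc hj hi1 hi2 hb2
      refine sep_of hn (x := ⟨n-4, by omega⟩) (y := ⟨0, by omega⟩) ?_ ?_
      · simp only [E1, fv]; unfold sP; rw [e1]; split_ifs <;> omega
      · simp only [E2, fv]; unfold tP; rw [wi_03 hn ho h4, hw2]; split_ifs <;> omega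
    · have hu1 : uf n (n-2) < n := uf_lt hn ho (by omega)
      have hu2 : uf n (n-4) < n := uf_lt hn ho (by omega)
      obtain ⟨e1, ne⟩ := uf_eT1 hn ho h4 hb2 hj
      have hc2 : 2*i = n-3 := by omega
      have hn5 : 5 ≤ n := by omega
      clear hc hj hi1 hi2 hb2
      refine sep_of hn (x := ⟨n-4, by omega⟩) (y := ⟨n-2, by omega⟩) ?_ ?_
      · simp only [E1, fv]; unfold sP; rw [e1]; split_ifs <;> omega
      · simp only [E2, fv]; unfold tP; rw [wi_n21 hn ho h4, hw2]; split_ifs <;> omega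

/-- arc vs arc -/
lemma caseF {t1 t2 : ℕ} (h1 : (n+1)/2 ≤ t1) (h1' : t1 < n-1)
    (h2 : (n+1)/2 ≤ t2) (h2' : t2 < n-1) (hne : t1 ≠ t2)
    (ht1 : t1 < (3*n-3)/2) (ht2 : t2 < (3*n-3)/2) :
    NeighborSep n n (famE n hn ho t1 ht1) (famE n hn ho t2 ht2) := by
  obtain ⟨i, hid⟩ : ∃ i, t1 - (n+1)/2 + 1 = i := ⟨_, rfl⟩
  obtain ⟨k, hkd⟩ : ∃ k, t2 - (n+1)/2 + 1 = k := ⟨_, rfl⟩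
  have E1 : ∀ (x : Fin n), ((famE n hn ho t1 ht1).symm x).val = tP n i x.1 := by
    intro x; rw [famE_symm_val, posf_T hn ho h1 h1', hid]
  have E2 : ∀ (x : Fin n), ((famE n hn ho t2 ht2).symm x).val = tP n k x.1 := by
    intro x; rw [famE_symm_val, posf_T hn ho h2 h2', hkd]
  have hik : i ≠ k := by omega
  have hi1 : 1 ≤ i := by omega
  have hi2 : i ≤ (n-1)/2 - 1 := by omega
  have hk1 : 1 ≤ k := by omega
  have hk2 : k ≤ (n-1)/2 - 1 := by omega
  clear hid hkd h1 h1' h2 h2' hne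
  rcases (show k + 2 ≤ (n-1)/2 ∨ k = (n-1)/2 - 1 by omega) with hc | hc
  · have hw1 : wi n (2*k+2) = 2*k := by
      have := wi_ev hn ho (a := 2*k+2) (by omega) (by omega) (by omega); omega
    have hw2 : wi n (2*k-1) = 2*k-1 := wi_od hn ho (by omega) (by omega)
    have hkn : 2*k+2 < n := by omega
    have hin : 2*i ≤ n-3 := by omega
    refine sep_of hn (x := ⟨2*k+2, by omega⟩) (y := ⟨2*k-1, by omega⟩) ?_ ?_
    · simp only [E1, fv]; unfold tP; rw [hw1, hw2]; split_ifs <;> omega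
    · simp only [E2, fv]; unfold tP; rw [hw1, hw2]; split_ifs <;> omega
  · have hw2 : wi n (n-4) = n-4 := wi_od hn ho (by omega) (by omega)
    have hc2 : 2*k = n-3 := by omega
    have hin : 2*i ≤ n-5 := by omega
    have hn5 : 5 ≤ n := by omega
    clear hc hi2 hik
    rcases (show n%4=3 ∨ n%4=1 by omega) with h4 | h4
    · refine sep_of hn (x := ⟨0, by omega⟩) (y := ⟨n-4, by omega⟩) ?_ ?_
      · simp only [E1, fv]; unfold tP; rw [wi_03 hn ho h4, hw2]; split_ifs <;> omega
      · simp only [E2, fv]; unfold tP; rw [wi_03 hn ho h4, hw2]; split_ifs <;> omega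
    · refine sep_of hn (x := ⟨n-2, by omega⟩) (y := ⟨n-4, by omega⟩) ?_ ?_
      · simp only [E1, fv]; unfold tP; rw [wi_n21 hn ho h4, hw2]; split_ifs <;> omega
      · simp only [E2, fv]; unfold tP; rw [wi_n21 hn ho h4, hw2]; split_ifs <;> omega

/-- the master pairwise separation lemma -/
theorem fam_sep {t1 t2 : ℕ} (ht1 : t1 < (3*n-3)/2) (ht2 : t2 < (3*n-3)/2)
    (hne : t1 ≠ t2) :
    NeighborSep n n (famE n hn ho t1 ht1) (famE n hn ho t2 ht2) := by
  rcases (show (t1 < (n+1)/2) ∨ ((n+1)/2 ≤ t1 ∧ t1 < n-1) ∨ (n-1 ≤ t1) by omega) with a1 | ⟨b1, b1'⟩ | c1 <;>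
    rcases (show (t2 < (n+1)/2) ∨ ((n+1)/2 ≤ t2 ∧ t2 < n-1) ∨ (n-1 ≤ t2) by omega) with a2 | ⟨b2, b2'⟩ | c2
  · rcases (show 1 ≤ t2 ∨ (t2 = 0 ∧ 1 ≤ t1) by omega) with h | ⟨h, h'⟩
    · exact caseA hn ho a1 a2 h hne ht1 ht2
    · exact sep_swap (caseA hn ho a2 a1 h' (by omega) ht2 ht1)
  · exact sep_swap (caseB hn ho b2 b2' a1 ht2 ht1)
  · exact caseC hn ho a1 c2 ht1 ht2
  · exact caseB hn ho b1 b1' a2 ht1 ht2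
  · exact caseF hn ho b1 b1' b2 b2' hne ht1 ht2
  · exact sep_swap (caseE hn ho c2 b1 b1' ht2 ht1)
  · exact sep_swap (caseC hn ho a2 c1 ht2 ht1)
  · exact caseE hn ho c1 b2 b2' ht1 ht2
  · exact caseD hn ho c1 c2 hne ht1 ht2

end cases
end NSep

theorem permP_n_n_odd_lower (n : ℕ) (hn : 3 ≤ n) (hno : Odd n) :
    3 * n / 2 - 1 ≤ permP n n := by
  have ho : n % 2 = 1 := Nat.odd_iff.mp hno
  set m := (3*n-3)/2 with hm
  set f : ℕ → Equiv.Perm (Fin n) :=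
    fun t => if ht : t < m then NSep.famE n hn ho t ht else 1 with hf
  have key : ∀ a b : ℕ, a < m → b < m → a ≠ b → NeighborSep n n (f a) (f b) := by
    intro a b ha hb hne
    simp only [hf, dif_pos ha, dif_pos hb]
    exact NSep.fam_sep hn ho ha hb hne
  have hinj : Set.InjOn f (Finset.range m) := by
    intro a ha b hb hab
    simp only [Finset.coe_range, Set.mem_Iio] at ha hb
    by_contra hne
    have h := key a b ha hb hne
    rw [hab] at h
    exact NSep.sep_not_self hn _ h
  set F : Finset (Equiv.Perm (Fin n)) := (Finset.range m).image f with hF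
  have hcard : F.card = m := by
    rw [hF, Finset.card_image_of_injOn hinj, Finset.card_range]
  have hpair : (F : Set (Equiv.Perm (Fin n))).Pairwise (NeighborSep n n) := by
    intro p hp q hq hpq
    rw [hF, Finset.coe_image, Finset.coe_range] at hp hq
    obtain ⟨a, ha, rfl⟩ := hp
    obtain ⟨b, hb, rfl⟩ := hq
    have hne : a ≠ b := fun h => hpq (by rw [h])
    exact key a b ha hb hne
  have hmem : m ∈ {m : ℕ | ∃ F : Finset (Equiv.Perm (Fin n)),
      (F : Set (Equiv.Perm (Fin n))).Pairwise (NeighborSep n n) ∧ F.card = m} :=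
    ⟨F, hpair, hcard⟩
  have hbdd : BddAbove {m : ℕ | ∃ F : Finset (Equiv.Perm (Fin n)),
      (F : Set (Equiv.Perm (Fin n))).Pairwise (NeighborSep n n) ∧ F.card = m} := by
    refine ⟨Fintype.card (Equiv.Perm (Fin n)), ?_⟩
    rintro s ⟨G, -, hc⟩
    exact hc ▸ G.card_le_univ
  have : m ≤ permP n n := le_csSup hbdd hmem
  omega
end

section
/- For every odd integer k ≥ 3 and every integer n ≥ 2, P(n,k) ≤ binom(n, ⌊n/2⌋). -/
private lemma evencount (m : ℕ) :
    ((Finset.range m).filter (fun i => i % 2 = 0)).card = (m + 1) / 2 := by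
  induction m with
  | zero => simp
  | succ m ih =>
    rw [Finset.range_add_one, Finset.filter_insert]
    by_cases h : m % 2 = 0
    · rw [if_pos h, Finset.card_insert_of_notMem (by simp)]
      omega
    · rw [if_neg h]
      omega

private lemma fincount (n : ℕ) :
    ((Finset.univ : Finset (Fin n)).filter (fun i : Fin n => (i : ℕ) % 2 = 0)).card
      = (n + 1) / 2 := by
  rw [← evencount n]
  refine Finset.card_bij (fun i _ => (i : ℕ)) ?_ ?_ ?_
  · intro a ha
    simp only [Finset.mem_filter, Finset.mem_univ, true_and] at ha
    simp [a.isLt, ha]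
  · intro a _ b _ h
    exact Fin.val_injective h
  · intro b hb
    simp only [Finset.mem_filter, Finset.mem_range] at hb
    exact ⟨⟨b, hb.1⟩, by simp [hb.2], rfl⟩

private lemma family_bound (k : ℕ) (hk : 3 ≤ k) (hko : Odd k) (n : ℕ)
    (F : Finset (Equiv.Perm (Fin n)))
    (hF : (F : Set (Equiv.Perm (Fin n))).Pairwise (NeighborSep n k)) :
    F.card ≤ n.choose (n / 2) := by
  set E : Equiv.Perm (Fin n) → Finset (Fin n) :=
    fun π => Finset.univ.filter (fun x => ((π.symm x : Fin n) : ℕ) % 2 = 0) with hE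
  have cardE : ∀ π, (E π).card = (n + 1) / 2 := by
    intro π
    have himg : E π = Finset.image π
        (Finset.univ.filter (fun i : Fin n => (i : ℕ) % 2 = 0)) := by
      ext x
      simp only [hE, Finset.mem_filter, Finset.mem_univ, true_and, Finset.mem_image]
      constructor
      · intro h; exact ⟨π.symm x, h, by simp⟩
      · rintro ⟨i, hi, rfl⟩; simpa using hi
    rw [himg, Finset.card_image_of_injective _ π.injective, fincount]
  have hinj : Set.InjOn E F := by
    intro π hπ σ hσ hEq
    by_contra hne
    obtain ⟨x, y, hcase⟩ := hF hπ hσ hne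
    have hx : ((π.symm x : Fin n) : ℕ) % 2 = 0 ↔ ((σ.symm x : Fin n) : ℕ) % 2 = 0 := by
      have := Finset.ext_iff.mp hEq x
      simpa [hE] using this
    have hy : ((π.symm y : Fin n) : ℕ) % 2 = 0 ↔ ((σ.symm y : Fin n) : ℕ) % 2 = 0 := by
      have := Finset.ext_iff.mp hEq y
      simpa [hE] using this
    obtain ⟨t, ht⟩ := hko
    rcases hcase with ⟨h1, h2⟩ | ⟨h1, h2⟩ <;> omega
  calc F.card = (F.image E).card := (Finset.card_image_of_injOn hinj).symm
    _ ≤ (Finset.powersetCard ((n + 1) / 2) (Finset.univ : Finset (Fin n))).card := by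
        apply Finset.card_le_card
        intro S hS
        obtain ⟨π, _, rfl⟩ := Finset.mem_image.mp hS
        rw [Finset.mem_powersetCard]
        exact ⟨Finset.subset_univ _, cardE π⟩
    _ = n.choose ((n + 1) / 2) := by
        rw [Finset.card_powersetCard, Finset.card_univ, Fintype.card_fin]
    _ = n.choose (n / 2) := by
        have h1 : (n + 1) / 2 = n - n / 2 := by omega
        rw [h1, Nat.choose_symm (Nat.div_le_self n 2)]

theorem permP_odd_le_central_binom (k : ℕ) (hk : 3 ≤ k) (hko : Odd k)
    (n : ℕ) (hn : 2 ≤ n) :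
    permP n k ≤ n.choose (n / 2) := by
  unfold permP
  refine csSup_le ⟨0, ∅, by simp, rfl⟩ ?_
  rintro m ⟨F, hF, rfl⟩
  exact family_bound k hk hko n F hF
end
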